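/- arXiv:2303.09019 — 7 statements merged into one kernel-verified Lean document; each statement's English description precedes it below -/
import Mathlib

section
/- Stanley's fundamental theorem: Let (P,ω) be a finite labeled poset. Then the set of (P,ω)-partitions is the disjoint union, over all linear extensions L of P, of the sets of (L,ω)-partitions; that is, every (P,ω)-partition is an (L,ω)-partition for exactly one linear extension L of P, and conversely every (L,ω)-partition, for L a linear extension of P, is a (P,ω)-partition. -/
/-- The cover relation of a relation `r` (thought of as the non-strict order relation):
`v` covers `u` if `u < v` and nothing lies strictly between. -/
def RelCovBy {P : Type*} (r : P → P → Prop) (u v : P) : Prop :=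
  r u v ∧ u ≠ v ∧ ∀ w, r u w → r w v → w = u ∨ w = v

/-- `r` is (the non-strict relation of) a linear extension of the partial order on `P`. -/
def IsLinExt {P : Type*} [PartialOrder P] (r : P → P → Prop) : Prop :=
  IsLinearOrder P r ∧ ∀ u v : P, u ≤ v → r u v

/-- `f : P → ℤ_{>0}` is a `(P,ω)`-partition with respect to the order relation `r`:
for every cover `u ⋖ v` of `r` one has `f u ≥ f v`, with moreover `f u > f v`
whenever `ω u > ω v`. -/
def IsPart {P : Type*} [Fintype P] (r : P → P → Prop)
    (ω : P ≃ Fin (Fintype.card P)) (f : P → ℕ+) : Prop :=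
  ∀ u v : P, RelCovBy r u v → f v ≤ f u ∧ (ω v < ω u → f v < f u)

open Classical in
/-- Key lemma: the cover-wise conditions propagate along any comparable pair. -/
lemma key_aux {Q : Type*} [Fintype Q]
    (r : Q → Q → Prop)
    (hrefl : ∀ a : Q, r a a)
    (htrans : ∀ a b c : Q, r a b → r b c → r a c)
    (hanti : ∀ a b : Q, r a b → r b a → a = b)
    (g : Q → ℕ+) (h : Q → ℕ)
    (hg : ∀ u v : Q, RelCovBy r u v → g v ≤ g u ∧ (g u ≤ g v → h u < h v)) :
    ∀ u v : Q, r u v → u ≠ v → g v ≤ g u ∧ (g u ≤ g v → h u < h v) := by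
  have main : ∀ n : ℕ, ∀ u v : Q,
      (Finset.univ.filter (fun w => r u w ∧ r w v)).card ≤ n →
      r u v → u ≠ v → g v ≤ g u ∧ (g u ≤ g v → h u < h v) := by
    intro n
    induction n using Nat.strong_induction_on with
    | _ n ih =>
      intro u v hcard huv hne
      by_cases hcov : RelCovBy r u v
      · exact hg u v hcov
      · have hex : ∃ w, r u w ∧ r w v ∧ w ≠ u ∧ w ≠ v := by
          by_contra hcon
          push_neg at hcon
          refine hcov ⟨huv, hne, fun w h1 h2 => ?_⟩
          by_contra hw
          push_neg at hw
          exact hw.2 (hcon w h1 h2 hw.1)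
        obtain ⟨w, huw, hwv, hwu, hwv'⟩ := hex
        have hsub1 : (Finset.univ.filter (fun x => r u x ∧ r x w)) ⊂
            (Finset.univ.filter (fun x => r u x ∧ r x v)) := by
          constructor
          · intro x hx
            simp only [Finset.mem_filter, Finset.mem_univ, true_and] at *
            exact ⟨hx.1, htrans _ _ _ hx.2 hwv⟩
          · intro hs
            have hv : v ∈ Finset.univ.filter (fun x => r u x ∧ r x v) := by
              simp only [Finset.mem_filter, Finset.mem_univ, true_and]
              exact ⟨huv, hrefl v⟩
            have := hs hv
            simp only [Finset.mem_filter, Finset.mem_univ, true_and] at this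
            exact hwv' (hanti _ _ hwv this.2)
        have hsub2 : (Finset.univ.filter (fun x => r w x ∧ r x v)) ⊂
            (Finset.univ.filter (fun x => r u x ∧ r x v)) := by
          constructor
          · intro x hx
            simp only [Finset.mem_filter, Finset.mem_univ, true_and] at *
            exact ⟨htrans _ _ _ huw hx.1, hx.2⟩
          · intro hs
            have hu : u ∈ Finset.univ.filter (fun x => r u x ∧ r x v) := by
              simp only [Finset.mem_filter, Finset.mem_univ, true_and]
              exact ⟨hrefl u, huv⟩
            have := hs hu
            simp only [Finset.mem_filter, Finset.mem_univ, true_and] at this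
            exact hwu (hanti _ _ this.1 huw)
        have hc1 : (Finset.univ.filter (fun x => r u x ∧ r x w)).card < n :=
          lt_of_lt_of_le (Finset.card_lt_card hsub1) hcard
        have hc2 : (Finset.univ.filter (fun x => r w x ∧ r x v)).card < n :=
          lt_of_lt_of_le (Finset.card_lt_card hsub2) hcard
        have h1 := ih _ hc1 u w le_rfl huw (Ne.symm hwu)
        have h2 := ih _ hc2 w v le_rfl hwv hwv'
        refine ⟨h2.1.trans h1.1, fun hle => ?_⟩
        have ha : h u < h w := h1.2 (hle.trans h2.1)
        have hb : h w < h v := h2.2 (h1.1.trans hle)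
        exact ha.trans hb
  intro u v huv hne
  exact main _ u v le_rfl huv hne

/-- Reformulation of the `(P,ω)`-partition condition on covers. -/
lemma ispart_shift {P : Type*} [Fintype P] (r : P → P → Prop)
    (ω : P ≃ Fin (Fintype.card P)) (f : P → ℕ+) (hp : IsPart r ω f) :
    ∀ u v : P, RelCovBy r u v →
      f v ≤ f u ∧ (f u ≤ f v → ((ω u : ℕ) < (ω v : ℕ))) := by
  intro u v hc
  obtain ⟨h1, h2⟩ := hp u v hc
  refine ⟨h1, fun hle => ?_⟩
  have hne : ω u ≠ ω v := fun hh => hc.2.1 (ω.injective hh)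
  have hnlt : ¬ (ω v < ω u) := fun hlt => absurd (h2 hlt) (not_lt.mpr hle)
  have hle' : ω u ≤ ω v := not_lt.mp hnlt
  exact Fin.lt_def.mp (lt_of_le_of_ne hle' hne)

/-- The canonical linear extension attached to a `(P,ω)`-partition `f`:
sort by `f` decreasing, breaking ties by `ω` increasing. -/
def StanleyR {P : Type*} [Fintype P] (ω : P ≃ Fin (Fintype.card P)) (f : P → ℕ+)
    (u v : P) : Prop :=
  f v < f u ∨ (f u = f v ∧ (ω u : ℕ) ≤ (ω v : ℕ))

/-- **Stanley's fundamental theorem**: every `(L,ω)`-partition for a linear extension `L`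
of `P` is a `(P,ω)`-partition, and every `(P,ω)`-partition is an `(L,ω)`-partition for
exactly one linear extension `L` of `P`. -/
theorem stanley_fundamental {P : Type*} [Fintype P] [PartialOrder P]
    (ω : P ≃ Fin (Fintype.card P)) (f : P → ℕ+) :
    (∀ r : P → P → Prop, IsLinExt r → IsPart r ω f → IsPart (· ≤ ·) ω f) ∧
    (IsPart (· ≤ ·) ω f → ∃! r : P → P → Prop, IsLinExt r ∧ IsPart r ω f) := by
  classical
  constructor
  · rintro r ⟨hlin, hext⟩ hpart
    haveI := hlin
    have hrefl : ∀ a : P, r a a := fun a => Std.Refl.refl a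
    have htrans : ∀ a b c : P, r a b → r b c → r a c := fun a b c => IsTrans.trans a b c
    have hanti : ∀ a b : P, r a b → r b a → a = b := fun a b => Std.Antisymm.antisymm a b
    intro u v hcov
    have hs := key_aux r hrefl htrans hanti f (fun x => (ω x : ℕ))
      (ispart_shift r ω f hpart) u v (hext u v hcov.1) hcov.2.1
    refine ⟨hs.1, fun hlt => ?_⟩
    by_contra hnot
    have h1 : f u ≤ f v := not_lt.mp hnot
    have h2 : (ω u : ℕ) < (ω v : ℕ) := hs.2 h1
    have h3 := Fin.lt_def.mp hlt
    omega
  · intro hf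
    have hle : ∀ u v : P, u ≤ v → u ≠ v →
        f v ≤ f u ∧ (f u ≤ f v → (ω u : ℕ) < (ω v : ℕ)) :=
      key_aux (· ≤ ·) (fun a => le_refl a) (fun a b c => le_trans)
        (fun a b => le_antisymm) f _ (ispart_shift (· ≤ ·) ω f hf)
    set r0 : P → P → Prop := StanleyR ω f with hr0
    have hrefl0 : ∀ a, r0 a a := fun a => Or.inr ⟨rfl, le_rfl⟩
    have htrans0 : ∀ a b c, r0 a b → r0 b c → r0 a c := by
      intro a b c hab hbc
      rcases hab with h1 | ⟨h1, h1'⟩ <;> rcases hbc with h2 | ⟨h2, h2'⟩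
      · exact Or.inl (h2.trans h1)
      · exact Or.inl (h2 ▸ h1)
      · exact Or.inl (h1 ▸ h2)
      · exact Or.inr ⟨h1.trans h2, h1'.trans h2'⟩
    have hanti0 : ∀ a b, r0 a b → r0 b a → a = b := by
      intro a b hab hba
      rcases hab with h1 | ⟨h1, h1'⟩ <;> rcases hba with h2 | ⟨h2, h2'⟩
      · exact absurd h1 (lt_asymm h2)
      · exact absurd h1 (h2 ▸ lt_irrefl _)
      · exact absurd h2 (h1 ▸ lt_irrefl _)
      · exact ω.injective (Fin.ext (le_antisymm h1' h2'))
    have htotal0 : ∀ a b, r0 a b ∨ r0 b a := by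
      intro a b
      rcases lt_trichotomy (f a) (f b) with h | h | h
      · exact Or.inr (Or.inl h)
      · rcases le_total ((ω a : ℕ)) ((ω b : ℕ)) with h' | h'
        · exact Or.inl (Or.inr ⟨h, h'⟩)
        · exact Or.inr (Or.inr ⟨h.symm, h'⟩)
      · exact Or.inl (Or.inl h)
    have hext0 : ∀ u v : P, u ≤ v → r0 u v := by
      intro u v huv
      by_cases he : u = v
      · exact he ▸ hrefl0 u
      · obtain ⟨h1, h2⟩ := hle u v huv he
        rcases lt_or_eq_of_le h1 with h | h
        · exact Or.inl h
        · exact Or.inr ⟨h.symm, le_of_lt (h2 (le_of_eq h.symm))⟩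
    have hpart0 : IsPart r0 ω f := by
      intro u v hc
      rcases hc.1 with h | ⟨h, h'⟩
      · exact ⟨le_of_lt h, fun _ => h⟩
      · refine ⟨le_of_eq h.symm, fun hlt => ?_⟩
        have := Fin.lt_def.mp hlt
        omega
    have hlin0 : IsLinearOrder P r0 :=
      { refl := hrefl0, trans := htrans0, antisymm := hanti0, total := htotal0 }
    refine ⟨r0, ⟨⟨hlin0, hext0⟩, hpart0⟩, ?_⟩
    rintro r' ⟨⟨hlin', hext'⟩, hpart'⟩
    haveI := hlin'
    have hrefl' : ∀ a : P, r' a a := fun a => Std.Refl.refl a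
    have htrans' : ∀ a b c : P, r' a b → r' b c → r' a c := fun a b c => IsTrans.trans a b c
    have hanti' : ∀ a b : P, r' a b → r' b a → a = b := fun a b => Std.Antisymm.antisymm a b
    have htot' : ∀ a b : P, r' a b ∨ r' b a := fun a b => Std.Total.total a b
    have dir : ∀ u v : P, r' u v → r0 u v := by
      intro u v h
      by_cases he : u = v
      · exact he ▸ hrefl0 u
      · obtain ⟨h1, h2⟩ := key_aux r' hrefl' htrans' hanti' f (fun x => (ω x : ℕ))
          (ispart_shift r' ω f hpart') u v h he
        rcases lt_or_eq_of_le h1 with hh | hh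
        · exact Or.inl hh
        · exact Or.inr ⟨hh.symm, le_of_lt (h2 (le_of_eq hh.symm))⟩
    funext u v
    apply propext
    constructor
    · exact dir u v
    · intro h0
      rcases htot' u v with h | h
      · exact h
      · have := hanti0 u v h0 (dir v u h)
        exact this ▸ hrefl' u
end

section
/- Restricted Stanley theorem: Let (P,ω) be a finite labeled poset and ρ : P → ℤ_{>0} any restriction. Then the set of (P,ω,ρ)-partitions is the disjoint union, over all linear extensions L of P, of the sets of (L,ω,ρ)-partitions; that is, every (P,ω,ρ)-partition is an (L,ω,ρ)-partition for exactly one linear extension L of P, and conversely every (L,ω,ρ)-partition, for L a linear extension of P, is a (P,ω,ρ)-partition. -/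
/-- `f : P → ℤ_{>0}` is a `(P,ω,ρ)`-partition with respect to the order relation `r`:
for every cover `u ⋖ v` of `r` one has `f u ≥ f v`, with moreover `f u > f v`
whenever `ω u > ω v`, and `f u ≤ ρ u` for all `u`. -/
def IsRestPart {P : Type*} [Fintype P] (r : P → P → Prop)
    (ω : P ≃ Fin (Fintype.card P)) (ρ : P → ℕ+) (f : P → ℕ+) : Prop :=
  (∀ u v : P, RelCovBy r u v → f v ≤ f u ∧ (ω v < ω u → f v < f u)) ∧
  ∀ u : P, f u ≤ ρ u

lemma key_chain {P : Type*} [Fintype P] {r : P → P → Prop}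
    (htrans : ∀ a b c : P, r a b → r b c → r a c)
    (hanti : ∀ a b : P, r a b → r b a → a = b)
    {ω : P ≃ Fin (Fintype.card P)} {f : P → ℕ+}
    (H : ∀ u v : P, RelCovBy r u v → f v ≤ f u ∧ (ω v < ω u → f v < f u)) :
    ∀ u v : P, r u v → u ≠ v → f v ≤ f u ∧ (ω v < ω u → f v < f u) := by
  classical
  suffices h : ∀ n : ℕ, ∀ u v : P,
      (Finset.univ.filter (fun w => r u w ∧ r w v ∧ w ≠ u ∧ w ≠ v)).card ≤ n →
      r u v → u ≠ v → f v ≤ f u ∧ (ω v < ω u → f v < f u) by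
    intro u v huv hne
    exact h _ u v le_rfl huv hne
  intro n
  induction n with
  | zero =>
    intro u v hcard huv hne
    apply H
    refine ⟨huv, hne, ?_⟩
    intro w h1 h2
    by_contra hw
    push_neg at hw
    have hmem : w ∈ Finset.univ.filter (fun w => r u w ∧ r w v ∧ w ≠ u ∧ w ≠ v) := by
      simp [h1, h2, hw.1, hw.2]
    have := Finset.card_pos.mpr ⟨w, hmem⟩
    omega
  | succ n ih =>
    intro u v hcard huv hne
    by_cases hempty : (Finset.univ.filter (fun w => r u w ∧ r w v ∧ w ≠ u ∧ w ≠ v)) = ∅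
    · apply H
      refine ⟨huv, hne, ?_⟩
      intro w h1 h2
      by_contra hw
      push_neg at hw
      have hmem : w ∈ Finset.univ.filter (fun w => r u w ∧ r w v ∧ w ≠ u ∧ w ≠ v) := by
        simp [h1, h2, hw.1, hw.2]
      simp [hempty] at hmem
    · obtain ⟨w, hw⟩ := Finset.nonempty_iff_ne_empty.mpr hempty
      have hwmem := hw
      simp only [Finset.mem_filter, Finset.mem_univ, true_and] at hw
      obtain ⟨h1, h2, h3, h4⟩ := hw
      have hsub1 : (Finset.univ.filter (fun x => r u x ∧ r x w ∧ x ≠ u ∧ x ≠ w)) ⊆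
          (Finset.univ.filter (fun x => r u x ∧ r x v ∧ x ≠ u ∧ x ≠ v)).erase w := by
        intro x hx
        simp only [Finset.mem_filter, Finset.mem_univ, true_and] at hx
        obtain ⟨hx1, hx2, hx3, hx4⟩ := hx
        refine Finset.mem_erase.mpr ⟨hx4, ?_⟩
        simp only [Finset.mem_filter, Finset.mem_univ, true_and]
        refine ⟨hx1, htrans _ _ _ hx2 h2, hx3, ?_⟩
        intro hxv
        subst hxv
        exact h4 (hanti _ _ h2 hx2)
      have hsub2 : (Finset.univ.filter (fun x => r w x ∧ r x v ∧ x ≠ w ∧ x ≠ v)) ⊆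
          (Finset.univ.filter (fun x => r u x ∧ r x v ∧ x ≠ u ∧ x ≠ v)).erase w := by
        intro x hx
        simp only [Finset.mem_filter, Finset.mem_univ, true_and] at hx
        obtain ⟨hx1, hx2, hx3, hx4⟩ := hx
        refine Finset.mem_erase.mpr ⟨hx3, ?_⟩
        simp only [Finset.mem_filter, Finset.mem_univ, true_and]
        refine ⟨htrans _ _ _ h1 hx1, hx2, ?_, hx4⟩
        intro hxu
        subst hxu
        exact h3 (hanti _ _ hx1 h1)
      have hce : ((Finset.univ.filter (fun x => r u x ∧ r x v ∧ x ≠ u ∧ x ≠ v)).erase w).card ≤ n := by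
        have := Finset.card_erase_of_mem hwmem
        omega
      have hw1 := ih u w (le_trans (Finset.card_le_card hsub1) hce) h1 (Ne.symm h3)
      have hw2 := ih w v (le_trans (Finset.card_le_card hsub2) hce) h2 h4
      refine ⟨le_trans hw2.1 hw1.1, ?_⟩
      intro hvu
      rcases lt_or_ge (ω w) (ω u) with hwu | huw
      · exact lt_of_le_of_lt hw2.1 (hw1.2 hwu)
      · have huw' : ω u < ω w := lt_of_le_of_ne huw (fun h => h3 (ω.injective h.symm))
        exact lt_of_lt_of_le (hw2.2 (lt_trans hvu huw')) hw1.1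



/-- **Restricted Stanley theorem** (Assaf–Bergeron): for any restriction `ρ`, every
`(L,ω,ρ)`-partition for a linear extension `L` of `P` is a `(P,ω,ρ)`-partition, and
every `(P,ω,ρ)`-partition is an `(L,ω,ρ)`-partition for exactly one linear
extension `L` of `P`. -/
theorem restricted_stanley {P : Type*} [Fintype P] [PartialOrder P]
    (ω : P ≃ Fin (Fintype.card P)) (ρ : P → ℕ+) (f : P → ℕ+) :
    (∀ r : P → P → Prop, IsLinExt r → IsRestPart r ω ρ f → IsRestPart (· ≤ ·) ω ρ f) ∧
    (IsRestPart (· ≤ ·) ω ρ f → ∃! r : P → P → Prop, IsLinExt r ∧ IsRestPart r ω ρ f) := by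
  constructor
  · -- part 1
    rintro r ⟨hlin, hext⟩ hpart
    have htrans : ∀ a b c : P, r a b → r b c → r a c :=
      fun _ _ _ hab hbc => hlin.toIsPartialOrder.toIsPreorder.toIsTrans.trans _ _ _ hab hbc
    have hanti : ∀ a b : P, r a b → r b a → a = b :=
      fun _ _ hab hba => hlin.toIsPartialOrder.toAntisymm.antisymm _ _ hab hba
    refine ⟨?_, hpart.2⟩
    rintro u v ⟨hle, hne, -⟩
    exact key_chain htrans hanti hpart.1 u v (hext u v hle) hne
  · -- part 2
    intro hf
    set r0 : P → P → Prop := fun u v => f v < f u ∨ (f u = f v ∧ ω u ≤ ω v) with hr0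
    have hrefl : ∀ u, r0 u u := fun u => Or.inr ⟨rfl, le_rfl⟩
    have htrans0 : ∀ {a b c : P}, r0 a b → r0 b c → r0 a c := by
      rintro a b c (h1 | ⟨h1, h1'⟩) (h2 | ⟨h2, h2'⟩)
      · exact Or.inl (lt_trans h2 h1)
      · exact Or.inl (h2 ▸ h1)
      · exact Or.inl (h1 ▸ h2)
      · exact Or.inr ⟨h1.trans h2, h1'.trans h2'⟩
    have hanti0 : ∀ {a b : P}, r0 a b → r0 b a → a = b := by
      rintro a b (h1 | ⟨h1, h1'⟩) (h2 | ⟨h2, h2'⟩)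
      · exact absurd h1 (lt_asymm h2)
      · exact absurd h1 (h2 ▸ lt_irrefl _)
      · exact absurd h2 (h1 ▸ lt_irrefl _)
      · exact ω.injective (le_antisymm h1' h2')
    have htotal0 : ∀ a b : P, r0 a b ∨ r0 b a := by
      intro a b
      rcases lt_trichotomy (f a) (f b) with h | h | h
      · exact Or.inr (Or.inl h)
      · rcases le_total (ω a) (ω b) with h' | h'
        · exact Or.inl (Or.inr ⟨h, h'⟩)
        · exact Or.inr (Or.inr ⟨h.symm, h'⟩)
      · exact Or.inl (Or.inl h)
    -- each non-strict P-comparable pair satisfies r0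
    have hmk : ∀ u v : P, u ≠ v → f v ≤ f u → (ω v < ω u → f v < f u) → r0 u v := by
      intro u v hne hle hstrict
      rcases lt_or_eq_of_le hle with h | h
      · exact Or.inl h
      · refine Or.inr ⟨h.symm, le_of_not_gt (fun hlt => ?_)⟩
        exact absurd (hstrict hlt) (h ▸ lt_irrefl _)
    have hext0 : ∀ u v : P, u ≤ v → r0 u v := by
      intro u v huv
      by_cases hne : u = v
      · exact hne ▸ hrefl u
      · obtain ⟨hle, hstrict⟩ := key_chain (r := (· ≤ ·)) (fun _ _ _ hab hbc => le_trans hab hbc)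
          (fun _ _ hab hba => le_antisymm hab hba) hf.1 u v huv hne
        exact hmk u v hne hle hstrict
    have hlin0 : IsLinearOrder P r0 :=
      { refl := hrefl
        trans := fun a b c => htrans0
        antisymm := fun a b => hanti0
        total := htotal0 }
    have hpart0 : IsRestPart r0 ω ρ f := by
      refine ⟨?_, hf.2⟩
      rintro u v ⟨(h | ⟨h, h'⟩), hne, -⟩
      · exact ⟨le_of_lt h, fun _ => h⟩
      · exact ⟨h.ge, fun hlt => absurd (lt_of_le_of_lt h' hlt) (lt_irrefl _)⟩
    refine ⟨r0, ⟨⟨hlin0, hext0⟩, hpart0⟩, ?_⟩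
    rintro r' ⟨⟨hlin', hext'⟩, hpart'⟩
    have htrans' : ∀ a b c : P, r' a b → r' b c → r' a c :=
      fun _ _ _ hab hbc => hlin'.toIsPartialOrder.toIsPreorder.toIsTrans.trans _ _ _ hab hbc
    have hanti' : ∀ a b : P, r' a b → r' b a → a = b :=
      fun _ _ hab hba => hlin'.toIsPartialOrder.toAntisymm.antisymm _ _ hab hba
    have hfwd : ∀ u v : P, r' u v → r0 u v := by
      intro u v h
      by_cases hne : u = v
      · exact hne ▸ hrefl u
      · obtain ⟨hle, hstrict⟩ := key_chain htrans' hanti' hpart'.1 u v h hne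
        exact hmk u v hne hle hstrict
    funext u v
    apply propext
    constructor
    · exact hfwd u v
    · intro h
      rcases hlin'.toTotal.total u v with h' | h'
      · exact h'
      · have := hanti0 h (hfwd v u h')
        exact this ▸ hlin'.toIsPartialOrder.toIsPreorder.toRefl.refl u
end

section
/- Let P be a finite poset with a labeled flag Φ. Then the set of (P,Φ)-partitions is the disjoint union, over all linear extensions L of P, of the sets of (L,Φ)-partitions; that is, every (P,Φ)-partition is an (L,Φ)-partition for exactly one linear extension L of P, and conversely every (L,Φ)-partition, for L a linear extension of P, is a (P,Φ)-partition. -/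
/-- `f : P → ℤ_{>0}` is a `(P,Φ)`-partition for the labeled flag `Φ`, with respect to the
order relation `r`: for every cover `u ⋖ v` of `r` one has `f u ≥ f v`, with `f u > f v`
whenever `Φ u > Φ v` (lexicographically), and `f u ≤ val (Φ u)` for all `u`. -/
def IsPhiPartRel {P : Type*} (r : P → P → Prop) (Φ : P → ℕ+ ×ₗ ℕ+) (f : P → ℕ+) : Prop :=
  (∀ u v : P, RelCovBy r u v → f v ≤ f u ∧ (Φ v < Φ u → f v < f u)) ∧
  ∀ u : P, f u ≤ (ofLex (Φ u)).1

open Relation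

/-- In a finite "partial order" relation, `r u v` implies a chain of covers from `u` to `v`. -/
lemma relCovBy_chain {P : Type*} [Fintype P] (r : P → P → Prop)
    (hrefl : ∀ u, r u u) (htr : Transitive r) (ha : ∀ u v, r u v → r v u → u = v) :
    ∀ u v, r u v → ReflTransGen (RelCovBy r) u v := by
  classical
  have key : ∀ n u v, (Set.toFinset {w | r u w ∧ r w v}).card ≤ n → r u v →
      ReflTransGen (RelCovBy r) u v := by
    intro n
    induction n with
    | zero =>
        intro u v hcard huv
        exfalso
        have hu : u ∈ Set.toFinset {w | r u w ∧ r w v} := by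
          simp [hrefl u, huv]
        have := Finset.card_pos.mpr ⟨u, hu⟩
        omega
    | succ n ih =>
        intro u v hcard huv
        by_cases huveq : u = v
        · subst huveq; exact .refl
        by_cases hcov : RelCovBy r u v
        · exact ReflTransGen.single hcov
        · have : ∃ w, r u w ∧ r w v ∧ w ≠ u ∧ w ≠ v := by
            by_contra h
            push_neg at h
            refine hcov ⟨huv, huveq, fun w h1 h2 => ?_⟩
            by_cases hw1 : w = u
            · exact Or.inl hw1
            · exact Or.inr (h w h1 h2 hw1)
          obtain ⟨w, huw, hwv, hwu, hwv'⟩ := this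
          have hsub1 : Set.toFinset {x | r u x ∧ r x w} ⊆ Set.toFinset {x | r u x ∧ r x v} := by
            intro x hx
            simp only [Set.mem_toFinset, Set.mem_setOf_eq] at *
            exact ⟨hx.1, htr hx.2 hwv⟩
          have hv1 : v ∈ Set.toFinset {x | r u x ∧ r x v} := by simp [huv, hrefl v]
          have hv2 : v ∉ Set.toFinset {x | r u x ∧ r x w} := by
            simp only [Set.mem_toFinset, Set.mem_setOf_eq]
            rintro ⟨-, hvw⟩
            exact hwv' (ha w v hwv hvw)
          have hc1 : (Set.toFinset {x | r u x ∧ r x w}).card ≤ n := by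
            have := Finset.card_lt_card (Finset.ssubset_iff_of_subset hsub1 |>.mpr ⟨v, hv1, hv2⟩)
            omega
          have hsub2 : Set.toFinset {x | r w x ∧ r x v} ⊆ Set.toFinset {x | r u x ∧ r x v} := by
            intro x hx
            simp only [Set.mem_toFinset, Set.mem_setOf_eq] at *
            exact ⟨htr huw hx.1, hx.2⟩
          have hu1 : u ∈ Set.toFinset {x | r u x ∧ r x v} := by simp [huv, hrefl u]
          have hu2 : u ∉ Set.toFinset {x | r w x ∧ r x v} := by
            simp only [Set.mem_toFinset, Set.mem_setOf_eq]
            rintro ⟨hwu', -⟩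
            exact hwu (ha u w huw hwu').symm
          have hc2 : (Set.toFinset {x | r w x ∧ r x v}).card ≤ n := by
            have := Finset.card_lt_card (Finset.ssubset_iff_of_subset hsub2 |>.mpr ⟨u, hu1, hu2⟩)
            omega
          exact (ih u w hc1 huw).trans (ih w v hc2 hwv)
  intro u v huv
  exact key _ u v le_rfl huv

/-- Global comparison along a partial order relation from the cover conditions. -/
lemma relPart_global {P : Type*} [Fintype P] (r : P → P → Prop)
    (hrefl : ∀ u, r u u) (htr : Transitive r) (ha : ∀ u v, r u v → r v u → u = v)
    (Φ : P → ℕ+ ×ₗ ℕ+) (hΦ : Function.Injective Φ) (f : P → ℕ+)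
    (hc : ∀ u v : P, RelCovBy r u v → f v ≤ f u ∧ (Φ v < Φ u → f v < f u)) :
    ∀ u v, r u v → u = v ∨ f v < f u ∨ (f v = f u ∧ Φ u < Φ v) := by
  intro u v huv
  have hchain := relCovBy_chain r hrefl htr ha u v huv
  clear huv
  induction hchain with
  | refl => exact Or.inl rfl
  | @tail b c hub hbc ih =>
    have h1 := hc b c hbc
    have hstep : f c < f b ∨ (f c = f b ∧ Φ b < Φ c) := by
      rcases lt_or_eq_of_le h1.1 with h | h
      · exact Or.inl h
      · refine Or.inr ⟨h, ?_⟩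
        rcases lt_trichotomy (Φ b) (Φ c) with h' | h' | h'
        · exact h'
        · exact absurd (hΦ h') hbc.2.1
        · exact absurd (h1.2 h') (by simp [h])
    rcases ih with rfl | hfb | ⟨hfeq, hΦlt⟩
    · rcases hstep with h | h
      · exact Or.inr (Or.inl h)
      · exact Or.inr (Or.inr h)
    · rcases hstep with h | ⟨h, -⟩
      · exact Or.inr (Or.inl (h.trans hfb))
      · exact Or.inr (Or.inl (h ▸ hfb))
    · rcases hstep with h | ⟨h, h'⟩
      · exact Or.inr (Or.inl (hfeq ▸ h))
      · exact Or.inr (Or.inr ⟨h.trans hfeq, hΦlt.trans h'⟩)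

/-- **Stanley's theorem for `(P,Φ)`-partitions**: every `(L,Φ)`-partition for a linear
extension `L` of `P` is a `(P,Φ)`-partition, and every `(P,Φ)`-partition is an
`(L,Φ)`-partition for exactly one linear extension `L` of `P`. -/
theorem phi_stanley {P : Type*} [Fintype P] [PartialOrder P]
    (Φ : P → ℕ+ ×ₗ ℕ+) (hΦ : Function.Injective Φ) (f : P → ℕ+) :
    (∀ r : P → P → Prop, IsLinExt r → IsPhiPartRel r Φ f → IsPhiPartRel (· ≤ ·) Φ f) ∧
    (IsPhiPartRel (· ≤ ·) Φ f →
      ∃! r : P → P → Prop, IsLinExt r ∧ IsPhiPartRel r Φ f) := by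
  constructor
  · -- every (L,Φ)-partition is a (P,Φ)-partition
    rintro r ⟨hlin, hext⟩ ⟨hcov, hval⟩
    haveI := hlin
    have hrefl : ∀ u, r u u := fun u => refl_of r u
    have htr : Transitive r := fun a b c hab hbc => trans_of r hab hbc
    have ha : ∀ u v, r u v → r v u → u = v := fun u v hab hba => antisymm_of r hab hba
    have glob := relPart_global r hrefl htr ha Φ hΦ f hcov
    refine ⟨fun u v huv => ?_, hval⟩
    have hr : r u v := hext u v huv.1
    rcases glob u v hr with rfl | hlt | ⟨heq, hΦlt⟩
    · exact absurd rfl huv.2.1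
    · exact ⟨hlt.le, fun _ => hlt⟩
    · exact ⟨heq.le, fun h => absurd hΦlt (not_lt_of_gt h)⟩
  · rintro ⟨hcov, hval⟩
    have glob := relPart_global (· ≤ ·) le_refl (fun _ _ _ h h' => h.trans h')
      (fun u v h h' => le_antisymm h h') Φ hΦ f hcov
    -- the canonical linear extension: order by f decreasing, then Φ increasing
    set L : P → P → Prop := fun u v => f v < f u ∨ (f v = f u ∧ Φ u ≤ Φ v) with hL
    have hLrefl : ∀ u, L u u := fun u => Or.inr ⟨rfl, le_rfl⟩
    have hLtrans : Transitive L := by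
      rintro a b c (h | ⟨h, h'⟩) (g | ⟨g, g'⟩)
      · exact Or.inl (g.trans h)
      · exact Or.inl (g ▸ h)
      · exact Or.inl (h ▸ g)
      · exact Or.inr ⟨g.trans h, h'.trans g'⟩
    have hLantisymm : ∀ u v, L u v → L v u → u = v := by
      rintro u v (h | ⟨h, h'⟩) (g | ⟨g, g'⟩)
      · exact absurd (h.trans g) (lt_irrefl _)
      · exact absurd h (by simp [g])
      · exact absurd g (by simp [h])
      · exact hΦ (le_antisymm h' g')
    have hLtotal : ∀ u v, L u v ∨ L v u := by
      intro u v
      rcases lt_trichotomy (f u) (f v) with h | h | h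
      · exact Or.inr (Or.inl h)
      · rcases le_total (Φ u) (Φ v) with h' | h'
        · exact Or.inl (Or.inr ⟨h.symm, h'⟩)
        · exact Or.inr (Or.inr ⟨h, h'⟩)
      · exact Or.inl (Or.inl h)
    have hLlin : IsLinearOrder P L :=
      { refl := hLrefl
        trans := hLtrans
        antisymm := hLantisymm
        total := hLtotal }
    have hLext : ∀ u v : P, u ≤ v → L u v := by
      intro u v huv
      rcases glob u v huv with rfl | h | ⟨h, h'⟩
      · exact hLrefl u
      · exact Or.inl h
      · exact Or.inr ⟨h, h'.le⟩
    have hLpart : IsPhiPartRel L Φ f := by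
      refine ⟨fun u v huv => ?_, hval⟩
      rcases huv.1 with h | ⟨h, h'⟩
      · exact ⟨h.le, fun _ => h⟩
      · exact ⟨h.le, fun hlt => absurd h' (not_le_of_gt hlt)⟩
    refine ⟨L, ⟨⟨hLlin, hLext⟩, hLpart⟩, ?_⟩
    -- uniqueness
    rintro r ⟨⟨hrlin, hrext⟩, hrcov, -⟩
    haveI := hrlin
    have hrrefl : ∀ u, r u u := fun u => refl_of r u
    have hrtr : Transitive r := fun a b c hab hbc => trans_of r hab hbc
    have hra : ∀ u v, r u v → r v u → u = v := fun u v hab hba => antisymm_of r hab hba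
    have hglobr := relPart_global r hrrefl hrtr hra Φ hΦ f hrcov
    have hforward : ∀ u v, r u v → L u v := by
      intro u v huv
      rcases hglobr u v huv with rfl | h | ⟨h, h'⟩
      · exact hLrefl u
      · exact Or.inl h
      · exact Or.inr ⟨h, h'.le⟩
    funext u v
    apply propext
    constructor
    · exact hforward u v
    · intro hLuv
      rcases total_of r u v with h | h
      · exact h
      · have := hLantisymm u v hLuv (hforward v u h)
        exact this ▸ hrrefl u
end

section
/- For every injective word W over ℤ_{>0} × ℤ_{>0}, the polynomial 𝔉(W) is either zero or equal to the slide polynomial 𝔉_c for a unique finitely supported c : ℤ_{>0} → ℕ. -/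
/-- The coefficient of `𝔉(W)` on the monomial `∏ xᵢ^{m i}`, for an injective word `W`
over `ℤ_{>0} × ℤ_{>0}` (lexicographically ordered): the number of sequences
`i₁ ≥ i₂ ≥ ⋯ ≥ i_r ≥ 1` with `i_j > i_{j+1}` whenever `a_j > a_{j+1}` and
`i_j ≤ val (a_j)` for all `j`, with exponent vector `m`. -/
noncomputable def slideCoeff (W : List (ℕ+ ×ₗ ℕ+)) (m : ℕ+ →₀ ℕ) : ℕ :=
  Nat.card {g : Fin W.length → ℕ+ // Antitone g ∧
    (∀ j k : Fin W.length, (k : ℕ) = (j : ℕ) + 1 → W.get k < W.get j → g k < g j) ∧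
    (∀ j, g j ≤ (ofLex (W.get j)).1) ∧
    (∑ j, Finsupp.single (g j) 1) = m}

/-- The injective word `W_c` attached to a finitely supported `c : ℤ_{>0} → ℕ`: it lists
the letters `(i,j)` with `c i > 0` and `1 ≤ j ≤ c i`, with `i` decreasing and, for each
fixed `i`, `j` increasing.  The slide polynomial `𝔉_c` is `𝔉(W_c)`. -/
noncomputable def Wc (c : ℕ+ →₀ ℕ) : List (ℕ+ ×ₗ ℕ+) :=
  ((c.support.sort (· ≤ ·)).reverse.map
    (fun i => (List.range (c i)).map (fun j => toLex (i, j.succPNat)))).flatten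

namespace SlideAux

abbrev Ltr := ℕ+ ×ₗ ℕ+

def lval (x : Ltr) : ℕ+ := (ofLex x).1

lemma lval_le_of_lt {x y : Ltr} (h : x < y) : lval x ≤ lval y := by
  rcases Prod.Lex.lt_iff.1 h with h | h
  · exact h.le
  · exact h.1.le

lemma lt_of_lval_lt {x y : Ltr} (h : lval x < lval y) : x < y :=
  Prod.Lex.lt_iff.2 (Or.inl h)

/-- Antitonicity of a `Fin`-indexed sequence from adjacent comparisons. -/
lemma antitone_of_adj {α : Type*} [Preorder α] {n : ℕ} {f : Fin n → α}
    (h : ∀ (j : ℕ) (hj : j + 1 < n), f ⟨j + 1, hj⟩ ≤ f ⟨j, Nat.lt_of_succ_lt hj⟩) :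
    Antitone f := by
  have key : ∀ (k a : ℕ) (ha : a + k < n), f ⟨a + k, ha⟩ ≤ f ⟨a, by omega⟩ := by
    intro k
    induction k with
    | zero => intro a ha; exact le_refl _
    | succ k ih =>
      intro a ha
      have h1 := h (a + k) (by omega)
      have h2 := ih a (by omega)
      have e : (⟨a + k + 1, by omega⟩ : Fin n) = ⟨a + (k + 1), ha⟩ :=
        Fin.mk_eq_mk.2 (by omega)
      rw [e] at h1
      exact le_trans h1 h2
  rintro ⟨av, ha⟩ ⟨bv, hb⟩ hab
  have hab' : av ≤ bv := hab
  obtain ⟨k, rfl⟩ : ∃ k, bv = av + k := ⟨bv - av, by omega⟩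
  exact key k av hb

def dflt : Ltr := toLex (1, 1)

def nval (W : List Ltr) (j : ℕ) : ℕ := (lval (W.getD j dflt) : ℕ)

def G (W : List Ltr) : ℕ → ℕ
  | 0 => nval W 0
  | j + 1 => min (nval W (j + 1))
      (G W j - (if W.getD (j + 1) dflt < W.getD j dflt then 1 else 0))

lemma G_le_nval (W : List Ltr) : ∀ j, G W j ≤ nval W j
  | 0 => le_refl _
  | j + 1 => min_le_left _ _

lemma G_succ_le (W : List Ltr) (j : ℕ) : G W (j + 1) ≤ G W j :=
  le_trans (min_le_right _ _) (Nat.sub_le _ _)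

lemma nval_eq (W : List Ltr) (j : Fin W.length) : nval W (j : ℕ) = (lval (W.get j) : ℕ) := by
  unfold nval
  rw [List.getD_eq_getElem _ _ j.isLt]
  rfl

lemma getD_eq_get (W : List Ltr) (j : Fin W.length) : W.getD (j : ℕ) dflt = W.get j := by
  rw [List.getD_eq_getElem _ _ j.isLt]; rfl

end SlideAux
-- continuation, appended in test with part1
namespace SlideAux

/-- The conditions (other than the exponent) in `slideCoeff`. -/
def Cond (W : List Ltr) (g : Fin W.length → ℕ+) : Prop :=
  Antitone g ∧
  (∀ j k : Fin W.length, (k : ℕ) = (j : ℕ) + 1 → W.get k < W.get j → g k < g j) ∧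
  (∀ j, g j ≤ lval (W.get j))

lemma le_G_of_cond {W : List Ltr} {g : Fin W.length → ℕ+} (hg : Cond W g) :
    ∀ (j : ℕ) (hj : j < W.length), (g ⟨j, hj⟩ : ℕ) ≤ G W j := by
  intro j
  induction j with
  | zero =>
    intro hj
    have h := hg.2.2 ⟨0, hj⟩
    show (g ⟨0, hj⟩ : ℕ) ≤ nval W 0
    rw [nval_eq W ⟨0, hj⟩]
    exact_mod_cast h
  | succ j ih =>
    intro hj
    have hjlt : j < W.length := Nat.lt_of_succ_lt hj
    set jf : Fin W.length := ⟨j, hjlt⟩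
    set kf : Fin W.length := ⟨j + 1, hj⟩
    refine le_min ?_ ?_
    · have h := hg.2.2 kf
      rw [nval_eq W kf]
      exact_mod_cast h
    · rw [getD_eq_get W kf, getD_eq_get W jf]
      by_cases hd : W.get kf < W.get jf
      · rw [if_pos hd]
        have h1 : g kf < g jf := hg.2.1 jf kf rfl hd
        have h2 : (g jf : ℕ) ≤ G W j := ih hjlt
        have h1' : (g kf : ℕ) < (g jf : ℕ) := h1
        omega
      · rw [if_neg hd]
        have h1 : g kf ≤ g jf := hg.1 (show jf ≤ kf from by
          simp [jf, kf, Fin.mk_le_mk])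
        have h2 : (g jf : ℕ) ≤ G W j := ih hjlt
        have h1' : (g kf : ℕ) ≤ (g jf : ℕ) := h1
        omega

lemma G_succ_eq {W : List Ltr} (hW : W.Nodup) {j : ℕ} (hj : j + 1 < W.length)
    (h : ¬ W.get ⟨j + 1, hj⟩ < W.get ⟨j, Nat.lt_of_succ_lt hj⟩) : G W (j + 1) = G W j := by
  have hjlt : j < W.length := Nat.lt_of_succ_lt hj
  have hne : W.get ⟨j + 1, hj⟩ ≠ W.get ⟨j, hjlt⟩ := by
    intro he
    have := List.nodup_iff_injective_get.1 hW he
    simp [Fin.mk_eq_mk] at this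
  have hlt : W.get ⟨j, hjlt⟩ < W.get ⟨j + 1, hj⟩ := (hne.lt_or_gt.resolve_left h)
  have hval : nval W j ≤ nval W (j + 1) := by
    rw [nval_eq W ⟨j, hjlt⟩, nval_eq W ⟨j + 1, hj⟩]
    exact_mod_cast lval_le_of_lt hlt
  show min (nval W (j + 1)) (G W j - _) = G W j
  rw [getD_eq_get W ⟨j + 1, hj⟩, getD_eq_get W ⟨j, hjlt⟩, if_neg h, Nat.sub_zero]
  exact min_eq_right (le_trans (G_le_nval W j) hval)

lemma G_succ_lt {W : List Ltr} {j : ℕ} (hj : j + 1 < W.length) (hpos : 0 < G W j)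
    (h : W.get ⟨j + 1, hj⟩ < W.get ⟨j, Nat.lt_of_succ_lt hj⟩) : G W (j + 1) < G W j := by
  have : G W (j + 1) ≤ G W j - 1 := by
    refine le_trans (min_le_right _ _) ?_
    rw [getD_eq_get W ⟨j + 1, hj⟩, getD_eq_get W ⟨j, Nat.lt_of_succ_lt hj⟩, if_pos h]
  omega

end SlideAux
namespace SlideAux

def rs (c : ℕ+ →₀ ℕ) : List ℕ+ := (c.support.sort (· ≤ ·)).reverse

def blk (c : ℕ+ →₀ ℕ) (i : ℕ+) : List Ltr :=
  (List.range (c i)).map (fun j => toLex (i, j.succPNat))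

lemma Wc_eq (c : ℕ+ →₀ ℕ) : Wc c = ((rs c).map (blk c)).flatten := rfl

lemma mem_rs {c : ℕ+ →₀ ℕ} {i : ℕ+} : i ∈ rs c ↔ c i ≠ 0 := by
  rw [rs, List.mem_reverse, Finset.mem_sort, Finsupp.mem_support_iff]

lemma blk_ne_nil {c : ℕ+ →₀ ℕ} {i : ℕ+} (h : i ∈ rs c) : blk c i ≠ [] := by
  have : c i ≠ 0 := mem_rs.1 h
  simp [blk, List.range_eq_nil, this]

lemma lval_of_mem_blk {c : ℕ+ →₀ ℕ} {i : ℕ+} {x : Ltr} (h : x ∈ blk c i) : lval x = i := by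
  obtain ⟨j, -, rfl⟩ := List.mem_map.1 h
  rfl

lemma rs_chain (c : ℕ+ →₀ ℕ) : (rs c).IsChain (· > ·) := by
  have h1 : (c.support.sort (· ≤ ·)).Pairwise (· < ·) := (Finset.sortedLT_sort _).pairwise
  have h2 : (rs c).Pairwise (· > ·) := by
    rw [rs, List.pairwise_reverse]
    exact h1
  exact h2.isChain

def Rrel (x y : Ltr) : Prop := lval y ≤ lval x ∧ (y < x ↔ lval y < lval x)

lemma wc_chain (c : ℕ+ →₀ ℕ) : (Wc c).IsChain Rrel := by
  rw [Wc_eq]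
  have hnn : [] ∉ (rs c).map (blk c) := by
    intro h
    obtain ⟨i, hi, he⟩ := List.mem_map.1 h
    exact blk_ne_nil hi he
  rw [List.isChain_flatten hnn]
  constructor
  · intro l hl
    obtain ⟨i, -, rfl⟩ := List.mem_map.1 hl
    rw [blk, List.isChain_map]
    rcases n : c i with _ | n
    · simp
    · rw [List.isChain_range_succ]
      intro m hm
      constructor
      · exact le_refl _
      · constructor
        · intro hlt
          exfalso
          rcases Prod.Lex.lt_iff.1 hlt with h | h
          · exact lt_irrefl _ h
          · have : (m + 1).succPNat < m.succPNat := h.2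
            have := Nat.succPNat_lt_succPNat.1 this
            omega
        · intro hlt
          exact absurd hlt (lt_irrefl _)
  · rw [List.isChain_map]
    refine (rs_chain c).imp ?_
    intro i i' hgt x hx y hy
    have hxm : x ∈ blk c i := List.mem_of_mem_getLast? hx
    have hym : y ∈ blk c i' := List.mem_of_mem_head? hy
    have hxv : lval x = i := lval_of_mem_blk hxm
    have hyv : lval y = i' := lval_of_mem_blk hym
    constructor
    · rw [hxv, hyv]; exact hgt.le
    · constructor
      · intro _; rw [hxv, hyv]; exact hgt
      · intro _; exact lt_of_lval_lt (by rw [hxv, hyv]; exact hgt)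

/-- adjacent-position facts for `Wc c`. -/
lemma wc_adj (c : ℕ+ →₀ ℕ) (j : ℕ) (hj : j + 1 < (Wc c).length) :
    Rrel ((Wc c).get ⟨j, Nat.lt_of_succ_lt hj⟩) ((Wc c).get ⟨j + 1, hj⟩) := by
  have := List.isChain_iff_getElem.1 (wc_chain c) j (by omega)
  exact this

lemma wc_val_antitone (c : ℕ+ →₀ ℕ) : Antitone (fun j : Fin (Wc c).length => lval ((Wc c).get j)) := by
  apply antitone_of_adj
  intro j hj
  exact (wc_adj c j hj).1

lemma wc_lt_iff (c : ℕ+ →₀ ℕ) (j : ℕ) (hj : j + 1 < (Wc c).length) :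
    ((Wc c).get ⟨j + 1, hj⟩ < (Wc c).get ⟨j, Nat.lt_of_succ_lt hj⟩ ↔
      lval ((Wc c).get ⟨j + 1, hj⟩) < lval ((Wc c).get ⟨j, Nat.lt_of_succ_lt hj⟩)) :=
  (wc_adj c j hj).2

end SlideAux
namespace SlideAux

lemma sum_single_get_apply (l : List ℕ+) (i : ℕ+) :
    (∑ j : Fin l.length, Finsupp.single (l.get j) (1 : ℕ)) i = l.count i := by
  induction l with
  | nil => simp
  | cons a l ih =>
    have h1 := Fin.sum_univ_succ
      (f := fun j : Fin (a :: l).length => Finsupp.single ((a :: l).get j) (1 : ℕ))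
    have h2 : (∑ j : Fin l.length, Finsupp.single ((a :: l).get (Fin.succ j)) (1 : ℕ)) =
        ∑ j : Fin l.length, Finsupp.single (l.get j) (1 : ℕ) :=
      Finset.sum_congr rfl fun j _ => rfl
    rw [h2] at h1
    show (∑ j : Fin (l.length + 1), Finsupp.single ((a :: l).get j) (1 : ℕ)) i =
      List.count i (a :: l)
    rw [h1, Finsupp.add_apply, ih]
    have h3 : (a :: l).get (0 : Fin (l.length + 1)) = a := rfl
    rw [h3]
    simp only [List.count_cons, Finsupp.single_apply, beq_iff_eq]
    rcases eq_or_ne a i with rfl | h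
    · simp only [if_pos rfl]
      omega
    · simp only [if_neg h]
      omega

lemma sum_single_ofFn {n : ℕ} (f : Fin n → ℕ+) (i : ℕ+) :
    (∑ j : Fin n, Finsupp.single (f j) (1 : ℕ)) i = (List.ofFn f).count i := by
  have hl : (List.ofFn f).length = n := List.length_ofFn
  rw [← sum_single_get_apply (List.ofFn f) i]
  congr 1
  refine Fintype.sum_equiv (finCongr hl.symm) _ _ ?_
  intro j
  rw [List.get_ofFn]
  rfl

lemma antitone_eq {n n' : ℕ} (hnn : n = n') {f : Fin n → ℕ+} {f' : Fin n' → ℕ+}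
    (hf : Antitone f) (hf' : Antitone f')
    (h : (∑ j, Finsupp.single (f j) (1 : ℕ)) = ∑ j, Finsupp.single (f' j) (1 : ℕ)) :
    ∀ (j : ℕ) (hj : j < n) (hj' : j < n'), f ⟨j, hj⟩ = f' ⟨j, hj'⟩ := by
  have hperm : List.Perm (List.ofFn f) (List.ofFn f') := List.perm_iff_count.2 fun i => by
    rw [← sum_single_ofFn f i, ← sum_single_ofFn f' i, h]
  have hs : (List.ofFn f).Pairwise (· ≥ ·) := by
    rw [List.pairwise_ofFn]
    intro i j hij
    exact hf hij.le
  have hs' : (List.ofFn f').Pairwise (· ≥ ·) := by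
    rw [List.pairwise_ofFn]
    intro i j hij
    exact hf' hij.le
  haveI : IsAntisymm ℕ+ (· ≥ ·) := ⟨fun _ _ h1 h2 => le_antisymm h2 h1⟩
  have heq : List.ofFn f = List.ofFn f' := List.Perm.eq_of_pairwise (fun a b _ _ h1 h2 => le_antisymm h2 h1) hs hs' hperm
  intro j hj hj'
  have e3 := List.get_of_eq heq (⟨j, by simpa using hj⟩ : Fin (List.ofFn f).length)
  rw [List.get_ofFn, List.get_ofFn] at e3
  convert e3 using 2
  all_goals exact Fin.ext (by simp)

lemma map_lval_Wc (c : ℕ+ →₀ ℕ) :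
    (Wc c).map lval = ((rs c).map (fun i => List.replicate (c i) i)).flatten := by
  rw [Wc_eq, List.map_flatten, List.map_map]
  congr 1
  refine List.map_congr_left ?_
  intro i _
  show ((blk c i).map lval) = List.replicate (c i) i
  rw [blk, List.map_map]
  have : (lval ∘ fun j : ℕ => toLex (i, j.succPNat)) = fun _ => i := by
    funext j; rfl
  rw [this, List.map_const', List.length_range]

lemma sum_if_eq {l : List ℕ+} (hl : l.Nodup) (i : ℕ+) (c : ℕ+ →₀ ℕ) :
    (l.map (fun i' => if i' = i then c i' else 0)).sum = if i ∈ l then c i else 0 := by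
  induction l with
  | nil => simp
  | cons a l ih =>
    rw [List.nodup_cons] at hl
    rw [List.map_cons, List.sum_cons, ih hl.2]
    rcases eq_or_ne a i with rfl | h
    · simp [hl.1]
    · rcases Classical.em (i ∈ l) with hm | hm
      · simp [h, hm, List.mem_cons]
      · simp [h, hm, List.mem_cons, Ne.symm h]

lemma count_map_lval (c : ℕ+ →₀ ℕ) (i : ℕ+) : ((Wc c).map lval).count i = c i := by
  rw [map_lval_Wc, List.count_flatten, List.map_map]
  have he : ((List.count i ∘ fun i' => List.replicate (c i') i')) =
      fun i' => if i' = i then c i' else 0 := by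
    funext i'
    simp only [Function.comp_apply, List.count_replicate]
    split <;> split <;> simp_all
  have hrs : (rs c).Nodup := by
    rw [rs]; exact List.nodup_reverse.2 (Finset.sort_nodup _ _)
  rw [he, sum_if_eq hrs i c]
  rcases eq_or_ne (c i) 0 with h0 | h0
  · rw [h0, if_neg]
    intro hm
    exact (mem_rs.1 hm) h0
  · rw [if_pos (mem_rs.2 h0)]

lemma hcount (c : ℕ+ →₀ ℕ) :
    (∑ j : Fin (Wc c).length, Finsupp.single (lval ((Wc c).get j)) (1 : ℕ)) = c := by
  have hl : ((Wc c).map lval).length = (Wc c).length := List.length_map _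
  have hsum : (∑ j : Fin (Wc c).length, Finsupp.single (lval ((Wc c).get j)) (1 : ℕ)) =
      ∑ j : Fin ((Wc c).map lval).length,
        Finsupp.single (((Wc c).map lval).get j) (1 : ℕ) := by
    refine Fintype.sum_equiv (finCongr hl.symm) _ _ fun j => ?_
    congr 1
    simp only [List.get_eq_getElem, List.getElem_map]
    rfl
  ext i
  rw [hsum, sum_single_get_apply, count_map_lval]

noncomputable def Tmass : (ℕ+ →₀ ℕ) →+ ℕ := Finsupp.liftAddHom (fun _ => AddMonoidHom.id ℕ)

lemma Tmass_sum_single {n : ℕ} (f : Fin n → ℕ+) :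
    Tmass (∑ j, Finsupp.single (f j) (1 : ℕ)) = n := by
  have hms : Tmass (∑ j, Finsupp.single (f j) (1 : ℕ)) =
      ∑ j : Fin n, Tmass (Finsupp.single (f j) (1 : ℕ)) :=
    map_sum Tmass (fun j => Finsupp.single (f j) (1 : ℕ)) Finset.univ
  rw [hms]
  have : ∀ j : Fin n, Tmass (Finsupp.single (f j) (1 : ℕ)) = 1 := fun j => by
    rw [Tmass, Finsupp.liftAddHom_apply_single]
    rfl
  simp [this]

end SlideAux
namespace SlideAux

lemma slideCoeff_eq (W : List Ltr) (m : ℕ+ →₀ ℕ) :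
    slideCoeff W m = Nat.card {g : Fin W.length → ℕ+ //
      Cond W g ∧ (∑ j, Finsupp.single (g j) (1 : ℕ)) = m} := by
  unfold slideCoeff
  apply Nat.card_congr
  exact Equiv.subtypeEquivRight fun g => by unfold Cond lval; tauto

lemma sum_single_cast {n n' : ℕ} (h : n = n') (f : Fin n' → ℕ+) :
    (∑ j : Fin n, Finsupp.single (f (Fin.cast h j)) (1 : ℕ)) =
      ∑ j, Finsupp.single (f j) (1 : ℕ) :=
  Fintype.sum_equiv (finCongr h) _ _ fun _ => rfl

lemma main_caseA {W : List Ltr} (hbad : ∃ j, j < W.length ∧ G W j = 0) :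
    ∀ m, slideCoeff W m = 0 := by
  intro m
  obtain ⟨j, hj, h0⟩ := hbad
  rw [slideCoeff_eq]
  haveI : IsEmpty {g : Fin W.length → ℕ+ //
      Cond W g ∧ (∑ j, Finsupp.single (g j) (1 : ℕ)) = m} := by
    constructor
    rintro ⟨g, hg, -⟩
    have h1 := le_G_of_cond hg j hj
    rw [h0] at h1
    have h2 := (g ⟨j, hj⟩).pos
    omega
  exact Nat.card_of_isEmpty

lemma cond_Wc_self (c : ℕ+ →₀ ℕ) : Cond (Wc c) (fun j => lval ((Wc c).get j)) := by
  refine ⟨wc_val_antitone c, ?_, fun j => le_refl _⟩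
  intro j k hk hlt
  have hj1 : (j : ℕ) + 1 < (Wc c).length := hk ▸ k.isLt
  have ej : j = (⟨(j : ℕ), Nat.lt_of_succ_lt hj1⟩ : Fin (Wc c).length) := Fin.ext rfl
  have ek : k = (⟨(j : ℕ) + 1, hj1⟩ : Fin (Wc c).length) := Fin.ext hk
  rw [ej, ek] at hlt ⊢
  exact (wc_lt_iff c j hj1).1 hlt

lemma slideCoeff_Wc_self (c : ℕ+ →₀ ℕ) : slideCoeff (Wc c) c = 1 := by
  rw [slideCoeff_eq]
  rw [Nat.card_eq_one_iff_unique]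
  constructor
  · constructor
    rintro ⟨g, hg, hs⟩ ⟨g', hg', hs'⟩
    have h := antitone_eq rfl hg.1 hg'.1 (hs.trans hs'.symm)
    exact Subtype.ext (funext fun j => h j.val j.isLt j.isLt)
  · exact ⟨⟨fun j => lval ((Wc c).get j), cond_Wc_self c, hcount c⟩⟩

lemma nonempty_of_slideCoeff_eq_one {W : List Ltr} {m : ℕ+ →₀ ℕ}
    (h : slideCoeff W m = 1) :
    Nonempty {g : Fin W.length → ℕ+ //
      Cond W g ∧ (∑ j, Finsupp.single (g j) (1 : ℕ)) = m} := by
  by_contra hn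
  haveI := not_nonempty_iff.1 hn
  rw [slideCoeff_eq] at h
  rw [Nat.card_of_isEmpty] at h
  omega

lemma Wc_inj {c c' : ℕ+ →₀ ℕ}
    (h : ∀ m, slideCoeff (Wc c) m = slideCoeff (Wc c') m) : c = c' := by
  have h1 : slideCoeff (Wc c') c = 1 := (h c).symm.trans (slideCoeff_Wc_self c)
  have h2 : slideCoeff (Wc c) c' = 1 := (h c').trans (slideCoeff_Wc_self c')
  obtain ⟨g, hg, hs⟩ := nonempty_of_slideCoeff_eq_one h1
  obtain ⟨g', hg', hs'⟩ := nonempty_of_slideCoeff_eq_one h2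
  have hl1 : (Wc c').length = (Wc c).length := by
    have a1 : Tmass c = (Wc c').length := by rw [← hs]; exact Tmass_sum_single g
    have a2 : Tmass c = (Wc c).length := by
      conv_lhs => rw [← hcount c]
      exact Tmass_sum_single _
    omega
  have e1 := antitone_eq hl1 hg.1 (wc_val_antitone c) (hs.trans (hcount c).symm)
  have e2 := antitone_eq hl1.symm hg'.1 (wc_val_antitone c') (hs'.trans (hcount c').symm)
  have heq : ∀ (j : ℕ) (hj : j < (Wc c).length) (hj' : j < (Wc c').length),
      lval ((Wc c).get ⟨j, hj⟩) = lval ((Wc c').get ⟨j, hj'⟩) := by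
    intro j hj hj'
    have le1 : lval ((Wc c).get ⟨j, hj⟩) ≤ lval ((Wc c').get ⟨j, hj'⟩) := by
      rw [← e1 j hj' hj]
      exact hg.2.2 ⟨j, hj'⟩
    have le2 : lval ((Wc c').get ⟨j, hj'⟩) ≤ lval ((Wc c).get ⟨j, hj⟩) := by
      rw [← e2 j hj hj']
      exact hg'.2.2 ⟨j, hj⟩
    exact le_antisymm le1 le2
  calc c = ∑ j : Fin (Wc c).length, Finsupp.single (lval ((Wc c).get j)) (1 : ℕ) :=
        (hcount c).symm
    _ = ∑ j : Fin (Wc c').length, Finsupp.single (lval ((Wc c').get j)) (1 : ℕ) := by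
        refine Fintype.sum_equiv (finCongr hl1.symm) _ _ fun j => ?_
        congr 1
        exact heq j.val j.isLt (by omega)
    _ = c' := hcount c'

lemma main_caseB {W : List Ltr} (hW : W.Nodup)
    (hpos : ∀ j, j < W.length → 0 < G W j) :
    ∃ c : ℕ+ →₀ ℕ, ∀ m, slideCoeff W m = slideCoeff (Wc c) m := by
  set Gp : Fin W.length → ℕ+ := fun j => ⟨G W (j : ℕ), hpos j j.isLt⟩ with hGpdef
  have hGpanti : Antitone Gp := antitone_of_adj (fun j hj => by
    show (⟨G W (j + 1), _⟩ : ℕ+) ≤ ⟨G W j, _⟩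
    exact_mod_cast G_succ_le W j)
  set c : ℕ+ →₀ ℕ := ∑ j, Finsupp.single (Gp j) (1 : ℕ) with hcdef
  have hlen : (Wc c).length = W.length := by
    have a1 : Tmass c = W.length := Tmass_sum_single Gp
    have a2 : Tmass c = (Wc c).length := by
      conv_lhs => rw [← hcount c]
      exact Tmass_sum_single _
    omega
  have hval : ∀ (j : ℕ) (hj : j < (Wc c).length) (hj' : j < W.length),
      lval ((Wc c).get ⟨j, hj⟩) = Gp ⟨j, hj'⟩ :=
    antitone_eq hlen (wc_val_antitone c) hGpanti (hcount c)
  -- forward condition transfer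
  have hfwd : ∀ g : Fin W.length → ℕ+, Cond W g →
      Cond (Wc c) (fun j => g (Fin.cast hlen j)) := by
    intro g hg
    have hle : ∀ j : Fin W.length, (g j : ℕ) ≤ G W (j : ℕ) := fun j => by
      have := le_G_of_cond hg j.val j.isLt
      exact this
    refine ⟨?_, ?_, ?_⟩
    · intro a b hab
      exact hg.1 (show Fin.cast hlen a ≤ Fin.cast hlen b from hab)
    · intro j k hk hlt
      have hj1 : (j : ℕ) + 1 < (Wc c).length := hk ▸ k.isLt
      have hj1' : (j : ℕ) + 1 < W.length := by omega
      have hjW : (j : ℕ) < W.length := Nat.lt_of_succ_lt hj1'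
      have ej : j = (⟨(j : ℕ), Nat.lt_of_succ_lt hj1⟩ : Fin (Wc c).length) := Fin.ext rfl
      have ek : k = (⟨(j : ℕ) + 1, hj1⟩ : Fin (Wc c).length) := Fin.ext hk
      rw [ej, ek] at hlt ⊢
      -- lval strict drop
      have hv := (wc_lt_iff c j.val hj1).1 hlt
      rw [hval _ _ hj1', hval _ _ hjW] at hv
      -- hence G drops, hence letter descent in W
      have hGlt : G W ((j : ℕ) + 1) < G W (j : ℕ) := hv
      by_cases hd : W.get ⟨(j : ℕ) + 1, hj1'⟩ < W.get ⟨(j : ℕ), hjW⟩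
      · exact hg.2.1 ⟨(j : ℕ), hjW⟩ ⟨(j : ℕ) + 1, hj1'⟩ rfl hd
      · rw [G_succ_eq hW hj1' hd] at hGlt
        exact absurd hGlt (lt_irrefl _)
    · intro j
      show g (Fin.cast hlen j) ≤ lval ((Wc c).get j)
      have h1 : lval ((Wc c).get j) = Gp (Fin.cast hlen j) := by
        have := hval j.val j.isLt (by omega)
        exact this
      rw [h1]
      exact_mod_cast hle (Fin.cast hlen j)
  -- backward condition transfer
  have hbwd : ∀ g : Fin (Wc c).length → ℕ+, Cond (Wc c) g →
      Cond W (fun j => g (Fin.cast hlen.symm j)) := by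
    intro g hg
    have hleG : ∀ j : Fin W.length, (g (Fin.cast hlen.symm j) : ℕ) ≤ G W (j : ℕ) := by
      intro j
      have h1 := hg.2.2 (Fin.cast hlen.symm j)
      have h2 : lval ((Wc c).get (Fin.cast hlen.symm j)) = Gp j := by
        have := hval j.val (by omega) j.isLt
        exact this
      rw [h2] at h1
      exact_mod_cast h1
    refine ⟨?_, ?_, ?_⟩
    · intro a b hab
      exact hg.1 (show Fin.cast hlen.symm a ≤ Fin.cast hlen.symm b from hab)
    · intro j k hk hlt
      have hj1 : (j : ℕ) + 1 < W.length := hk ▸ k.isLt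
      have hj1' : (j : ℕ) + 1 < (Wc c).length := by omega
      have hjW : (j : ℕ) < W.length := Nat.lt_of_succ_lt hj1
      have ej : j = (⟨(j : ℕ), hjW⟩ : Fin W.length) := Fin.ext rfl
      have ek : k = (⟨(j : ℕ) + 1, hj1⟩ : Fin W.length) := Fin.ext hk
      rw [ej, ek] at hlt ⊢
      have hGlt : G W ((j : ℕ) + 1) < G W (j : ℕ) :=
        G_succ_lt hj1 (hpos j.val hjW) hlt
      -- letters of Wc drop
      have hv : lval ((Wc c).get ⟨(j : ℕ) + 1, hj1'⟩) <
          lval ((Wc c).get ⟨(j : ℕ), Nat.lt_of_succ_lt hj1'⟩) := by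
        rw [hval _ _ hj1, hval _ _ hjW]
        exact_mod_cast hGlt
      have hlt' := (wc_lt_iff c j.val hj1').2 hv
      exact hg.2.1 ⟨(j : ℕ), Nat.lt_of_succ_lt hj1'⟩ ⟨(j : ℕ) + 1, hj1'⟩ rfl hlt'
    · intro j
      show g (Fin.cast hlen.symm j) ≤ lval (W.get j)
      have h1 : (Gp j : ℕ) ≤ (lval (W.get j) : ℕ) := by
        have := G_le_nval W j.val
        rw [nval_eq W j] at this
        exact this
      have h2 := hleG j
      have h3 : (g (Fin.cast hlen.symm j) : ℕ) ≤ (lval (W.get j) : ℕ) := le_trans h2 h1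
      exact_mod_cast h3
  refine ⟨c, fun m => ?_⟩
  rw [slideCoeff_eq, slideCoeff_eq]
  apply Nat.card_congr
  refine ⟨fun x => ⟨fun j => x.1 (Fin.cast hlen j), hfwd x.1 x.2.1, ?_⟩,
          fun y => ⟨fun j => y.1 (Fin.cast hlen.symm j), hbwd y.1 y.2.1, ?_⟩,
          fun x => Subtype.ext (funext fun j => rfl),
          fun y => Subtype.ext (funext fun j => rfl)⟩
  · rw [sum_single_cast hlen x.1]
    exact x.2.2
  · rw [sum_single_cast hlen.symm y.1]
    exact y.2.2

end SlideAux
/-- For every injective word `W` over `ℤ_{>0} × ℤ_{>0}`, the polynomial `𝔉(W)` is either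
zero or equal to the slide polynomial `𝔉_c` for a unique finitely supported
`c : ℤ_{>0} → ℕ`. -/
theorem slide_of_word {W : List (ℕ+ ×ₗ ℕ+)} (hW : W.Nodup) :
    (∀ m : ℕ+ →₀ ℕ, slideCoeff W m = 0) ∨
    (∃! c : ℕ+ →₀ ℕ, ∀ m : ℕ+ →₀ ℕ, slideCoeff W m = slideCoeff (Wc c) m) := by
  classical
  by_cases hbad : ∃ j, j < W.length ∧ SlideAux.G W j = 0
  · exact Or.inl (SlideAux.main_caseA hbad)
  · right
    push_neg at hbad
    obtain ⟨c, hc⟩ := SlideAux.main_caseB hW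
      (fun j hj => Nat.pos_of_ne_zero (hbad j hj))
    refine ⟨c, hc, fun c' hc' => ?_⟩
    exact SlideAux.Wc_inj fun m => (hc' m).symm.trans (hc m)
end

section
/- The forest polynomials 𝔓_F, as F ranges over all indexed forests, form a basis of the polynomial ring ℤ[x_1, x_2, …] as a ℤ-module. -/
open scoped Classical

/-- A rooted plane binary tree: either a single leaf, or an ordered pair of subtrees. -/
inductive PBT : Type
  | leaf : PBT
  | node : PBT → PBT → PBT
  deriving DecidableEq

namespace PBT

/-- The number of leaves of a plane binary tree (one more than its internal nodes). -/
def leaves : PBT → ℕ+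
  | .leaf => 1
  | .node l r => leaves l + leaves r

/-- A labeling of the internal nodes of a plane binary tree by positive integers. -/
inductive Labeling : PBT → Type
  | leaf : Labeling .leaf
  | node {l r : PBT} (k : ℕ+) : Labeling l → Labeling r → Labeling (.node l r)

/-- The label of the root, if the tree has an internal node. -/
def Labeling.rootVal? : {T : PBT} → Labeling T → Option ℕ+
  | _, .leaf => none
  | _, .node k _ _ => some k

/-- Validity of a labeling of the internal nodes of a tree whose leaves are labeled
`a, a+1, …` from left to right: every internal node `v` satisfies
`f v ≤` (the label of the leftmost leaf descendant of `v`), a left child `u` of `v`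
satisfies `f u ≤ f v`, and a right child `u` of `v` satisfies `f u > f v`. -/
def Labeling.Valid : {T : PBT} → Labeling T → ℕ+ → Prop
  | _, .leaf, _ => True
  | _, @Labeling.node l _r k labl labr, a =>
      k ≤ a ∧ (∀ x ∈ labl.rootVal?, x ≤ k) ∧ (∀ x ∈ labr.rootVal?, k < x) ∧
      labl.Valid a ∧ labr.Valid (a + l.leaves)

/-- The exponent vector `∏_{v ∈ IN(T)} x_{f v}` of a labeling. -/
noncomputable def Labeling.mon : {T : PBT} → Labeling T → (ℕ+ →₀ ℕ)
  | _, .leaf => 0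
  | _, .node k labl labr => Finsupp.single k 1 + labl.mon + labr.mon

/-- The (finite) set of labelings of `T` all of whose labels lie in `{1, …, B}`. -/
noncomputable def labsUpTo : (T : PBT) → (B : ℕ+) → Finset (Labeling T)
  | .leaf, _ => {Labeling.leaf}
  | .node l r, B =>
      ((((Finset.range B).image Nat.succPNat) ×ˢ (labsUpTo l B ×ˢ labsUpTo r B)).image
        (fun x => Labeling.node x.1 x.2.1 x.2.2))

/-- The forest polynomial of a single indexed tree `(T, [a, a + leaves T − 1])`:
the sum of the monomials of all valid labelings of its internal nodes.  (Every valid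
labeling has labels `< a + leaves T`, so the enumeration below is exhaustive.) -/
noncomputable def treePoly (T : PBT) (a : ℕ+) : MvPolynomial ℕ+ ℤ :=
  ∑ lab ∈ (labsUpTo T (a + T.leaves)).filter (fun lab => lab.Valid a),
    MvPolynomial.monomial lab.mon 1

end PBT

/-- An indexed forest: a finite collection of plane binary trees `T` with at least one
internal node, each carried by an interval `[a, a + leaves T − 1] ⊆ ℤ_{>0}` labeling its
leaves from left to right, the intervals being pairwise disjoint. -/
structure IndexedForest : Type where
  trees : Finset (PBT × ℕ+)
  nontrivial : ∀ p ∈ trees, p.1 ≠ PBT.leaf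
  disjoint : ∀ p ∈ trees, ∀ q ∈ trees, p ≠ q →
    Disjoint (Set.Icc (p.2 : ℕ) ((p.2 : ℕ) + (p.1.leaves : ℕ) - 1))
             (Set.Icc (q.2 : ℕ) ((q.2 : ℕ) + (q.1.leaves : ℕ) - 1))

/-- The forest polynomial `𝔓_F`: the sum of the monomials `∏_{v ∈ IN(F)} x_{f v}` over
all valid labelings `f` of the internal nodes of `F`; equivalently, the product of the
polynomials of its indexed trees. -/
noncomputable def forestPoly (F : IndexedForest) : MvPolynomial ℕ+ ℤ :=
  ∏ p ∈ F.trees, PBT.treePoly p.1 p.2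

noncomputable section
namespace FB

def G (μ : ℕ+ →₀ ℕ) (i : ℕ) : ℕ := if h : 0 < i then μ ⟨i, h⟩ else 0

lemma G_coe (μ : ℕ+ →₀ ℕ) (i : ℕ+) : G μ (i : ℕ) = μ i := by
  rw [G, dif_pos i.pos]
  exact congrArg μ (Subtype.ext rfl)

lemma G_of_pos (μ : ℕ+ →₀ ℕ) {i : ℕ} (h : 0 < i) : G μ i = μ ⟨i, h⟩ := by
  rw [G, dif_pos h]

lemma G_nat_zero (μ : ℕ+ →₀ ℕ) : G μ 0 = 0 := by rw [G, dif_neg (by omega)]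

lemma G_add (μ ν : ℕ+ →₀ ℕ) (i : ℕ) : G (μ + ν) i = G μ i + G ν i := by
  unfold G; split <;> simp <;> rfl

lemma G_zero (i : ℕ) : G 0 i = 0 := by unfold G; split <;> simp <;> rfl

lemma ext_G {μ ν : ℕ+ →₀ ℕ} (h : ∀ i, G μ i = G ν i) : μ = ν :=
  Finsupp.ext fun i => by have := h i; rwa [G_coe, G_coe] at this

lemma G_single (a : ℕ+) (v : ℕ) (i : ℕ) :
    G (Finsupp.single a v) i = if i = (a : ℕ) then v else 0 := by
  unfold G
  split
  · rename_i h
    erw [Finsupp.single_apply]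
    have : (a = ⟨i, h⟩) ↔ (i = (a : ℕ)) :=
      ⟨fun e => (congrArg Subtype.val e).symm, fun e => Subtype.ext e.symm⟩
    simp [this]
  · rename_i h
    have : i ≠ (a : ℕ) := by have := a.pos; omega
    simp [this]

lemma G_sum {α : Type*} (s : Finset α) (f : α → (ℕ+ →₀ ℕ)) (i : ℕ) :
    G (∑ x ∈ s, f x) i = ∑ x ∈ s, G (f x) i := by
  classical
  induction s using Finset.cons_induction with
  | empty => simp [G_zero]
  | cons a s ha ih => rw [Finset.sum_cons, Finset.sum_cons, G_add, ih]

def S (μ : ℕ+ →₀ ℕ) (j : ℕ) : ℕ := ∑ i ∈ Finset.range j, G μ i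

lemma S_zero (j : ℕ) : S 0 j = 0 := by simp [S, G_zero]

lemma S_succ (μ : ℕ+ →₀ ℕ) (j : ℕ) : S μ (j + 1) = S μ j + G μ j :=
  Finset.sum_range_succ _ _

lemma S_add (μ ν : ℕ+ →₀ ℕ) (j : ℕ) : S (μ + ν) j = S μ j + S ν j := by
  simp [S, G_add, Finset.sum_add_distrib]

lemma S_mono (μ : ℕ+ →₀ ℕ) {j j' : ℕ} (h : j ≤ j') : S μ j ≤ S μ j' :=
  Finset.sum_le_sum_of_subset (Finset.range_subset_range.2 h)

lemma S_single (a : ℕ+) (v : ℕ) (j : ℕ) :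
    S (Finsupp.single a v) j = if (a : ℕ) < j then v else 0 := by
  simp only [S, G_single]
  rw [Finset.sum_ite_eq' (Finset.range j) ((a : ℕ)) (fun _ => v)]
  simp [Finset.mem_range]

lemma S_congr_zero (μ : ℕ+ →₀ ℕ) {j j' : ℕ} (hle : j ≤ j')
    (h : ∀ i, j ≤ i → i < j' → G μ i = 0) : S μ j' = S μ j := by
  rw [S, S, ← Finset.sum_subset (Finset.range_subset_range.2 hle)]
  intro x hx hnx
  simp only [Finset.mem_range] at hx hnx
  exact h x (by omega) hx

lemma S_eq_zero (μ : ℕ+ →₀ ℕ) {j : ℕ} (h : ∀ i, i < j → G μ i = 0) : S μ j = 0 := by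
  have h0 : S μ 0 = 0 := by simp [S]
  rw [S_congr_zero μ (Nat.zero_le j) (fun i _ hi => h i hi), h0]

def Φ (μ : ℕ+ →₀ ℕ) : ℕ := μ.sum fun i k => (i : ℕ) * k

lemma Φ_zero : Φ 0 = 0 := by simp [Φ]

lemma Φ_add (μ ν : ℕ+ →₀ ℕ) : Φ (μ + ν) = Φ μ + Φ ν :=
  Finsupp.sum_add_index (by simp) (by intros; ring)

lemma Φ_single (a : ℕ+) (v : ℕ) : Φ (Finsupp.single a v) = (a : ℕ) * v := by
  simp [Φ, Finsupp.sum_single_index]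

lemma Φ_eq_sum_range (μ : ℕ+ →₀ ℕ) {j : ℕ} (h : ∀ i, j ≤ i → G μ i = 0) :
    Φ μ = ∑ i ∈ Finset.range j, i * G μ i := by
  classical
  have h1 : ∑ i ∈ μ.support.image (fun x : ℕ+ => (x : ℕ)), i * G μ i
      = ∑ x ∈ μ.support, ((x : ℕ) * G μ (x : ℕ)) :=
    Finset.sum_image (fun x _ y _ hxy => PNat.coe_injective hxy)
  have h2 : Φ μ = ∑ i ∈ μ.support.image (fun x : ℕ+ => (x : ℕ)), i * G μ i := by
    rw [h1, Φ, Finsupp.sum]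
    exact Finset.sum_congr rfl (fun x _ => by rw [G_coe])
  rw [h2]
  apply Finset.sum_subset
  · intro i hi
    simp only [Finset.mem_image] at hi
    obtain ⟨x, hx, rfl⟩ := hi
    simp only [Finset.mem_range]
    by_contra hc
    refine (Finsupp.mem_support_iff.1 hx) ?_
    have := h (x : ℕ) (by omega)
    rwa [G_coe] at this
  · intro i _ hni
    rcases Nat.eq_zero_or_pos i with rfl | hp
    · simp
    · have hx : (⟨i, hp⟩ : ℕ+) ∉ μ.support := fun hc => hni (Finset.mem_image.2 ⟨⟨i, hp⟩, hc, rfl⟩)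
      have h0 : μ ⟨i, hp⟩ = 0 := Finsupp.notMem_support_iff.1 hx
      rw [G_of_pos μ hp, h0, mul_zero]

lemma S_le_Φ (μ : ℕ+ →₀ ℕ) (j : ℕ) : S μ j ≤ Φ μ := by
  classical
  set j0 := (μ.support.sup fun x => (x : ℕ)) + 1 with hj0
  have hbig : ∀ i, j0 ≤ i → G μ i = 0 := by
    intro i hi
    rcases Nat.eq_zero_or_pos i with rfl | hp
    · exact G_nat_zero μ
    · by_contra hc
      have hmem : (⟨i, hp⟩ : ℕ+) ∈ μ.support := by
        apply Finsupp.mem_support_iff.2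
        intro h0; apply hc; rw [G_of_pos μ hp]; exact h0
      have h2 : i ≤ μ.support.sup fun x => (x : ℕ) :=
        Finset.le_sup (f := fun x : ℕ+ => (x : ℕ)) hmem
      omega
  have key : S μ (max j j0) ≤ Φ μ := by
    rw [Φ_eq_sum_range μ (j := max j j0) (fun i hi => hbig i (le_trans (le_max_right _ _) hi))]
    apply Finset.sum_le_sum
    intro i _
    rcases Nat.eq_zero_or_pos i with rfl | hp
    · simp [G_nat_zero]
    · nlinarith [Nat.zero_le (G μ i)]
  exact le_trans (S_mono μ (le_max_left _ _)) key

lemma Φ_pos {μ : ℕ+ →₀ ℕ} {i : ℕ} (h : G μ i ≠ 0) : 0 < Φ μ := by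
  have hp : 0 < i := by
    by_contra hc
    exact h (by rw [show i = 0 by omega]; exact G_nat_zero μ)
  have hmem : (⟨i, hp⟩ : ℕ+) ∈ μ.support := by
    apply Finsupp.mem_support_iff.2; intro h0; apply h; rw [G_of_pos μ hp]; exact h0
  rw [Φ, Finsupp.sum]
  have hpos : 0 < ((⟨i, hp⟩ : ℕ+) : ℕ) * μ ⟨i, hp⟩ := by
    have := Finsupp.mem_support_iff.1 hmem
    have : 0 < μ ⟨i, hp⟩ := Nat.pos_of_ne_zero this
    positivity
  calc 0 < ((⟨i, hp⟩ : ℕ+) : ℕ) * μ ⟨i, hp⟩ := hpos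
    _ ≤ _ := Finset.single_le_sum (f := fun x : ℕ+ => (x : ℕ) * μ x) (fun x _ => Nat.zero_le _) hmem


def topT : PBT → ℕ+ → (ℕ+ →₀ ℕ)
  | .leaf, _ => 0
  | .node l r, a => Finsupp.single a 1 + topT l a + topT r (a + l.leaves)

lemma leaves_pos (T : PBT) : 1 ≤ (T.leaves : ℕ) := T.leaves.pos

lemma coe_leaves_leaf : (PBT.leaf.leaves : ℕ) = 1 := rfl

lemma coe_leaves_node (l r : PBT) :
    ((PBT.node l r).leaves : ℕ) = (l.leaves : ℕ) + (r.leaves : ℕ) := by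
  show ((l.leaves + r.leaves : ℕ+) : ℕ) = _
  push_cast; ring

lemma coe_add_leaves (a : ℕ+) (l : PBT) :
    ((a + l.leaves : ℕ+) : ℕ) = (a : ℕ) + (l.leaves : ℕ) := by push_cast; ring

lemma leaves_eq_one {T : PBT} (h : (T.leaves : ℕ) = 1) : T = .leaf := by
  cases T with
  | leaf => rfl
  | node l r =>
    rw [coe_leaves_node] at h
    have := leaves_pos l; have := leaves_pos r; omega

lemma G_topT_node (l r : PBT) (a : ℕ+) (i : ℕ) :
    G (topT (.node l r) a) i
      = (if i = (a : ℕ) then 1 else 0) + G (topT l a) i + G (topT r (a + l.leaves)) i := by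
  rw [topT, G_add, G_add, G_single]

lemma S_topT_node (l r : PBT) (a : ℕ+) (j : ℕ) :
    S (topT (.node l r) a) j
      = (if (a : ℕ) < j then 1 else 0) + S (topT l a) j + S (topT r (a + l.leaves)) j := by
  rw [topT, S_add, S_add, S_single]

lemma topT_lower : ∀ (T : PBT) (a : ℕ+) (i : ℕ), i < (a : ℕ) → G (topT T a) i = 0
  | .leaf, a, i, h => by rw [topT]; exact G_zero i
  | .node l r, a, i, h => by
    have hl := topT_lower l a i h
    have hr := topT_lower r (a + l.leaves) i (by rw [coe_add_leaves]; have := leaves_pos l; omega)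
    rw [G_topT_node, hl, hr, if_neg (by omega)]

lemma topT_upper : ∀ (T : PBT) (a : ℕ+) (i : ℕ),
    (a : ℕ) + (T.leaves : ℕ) ≤ i + 1 → G (topT T a) i = 0
  | .leaf, a, i, h => by rw [topT]; exact G_zero i
  | .node l r, a, i, h => by
    rw [coe_leaves_node] at h
    have hp := leaves_pos l; have hq := leaves_pos r
    have hl := topT_upper l a i (by omega)
    have hr := topT_upper r (a + l.leaves) i (by rw [coe_add_leaves]; omega)
    rw [G_topT_node, hl, hr, if_neg (by omega)]

lemma S_topT_base (T : PBT) (a : ℕ+) {j : ℕ} (h : j ≤ (a : ℕ)) : S (topT T a) j = 0 :=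
  S_eq_zero _ (fun i hi => topT_lower T a i (by omega))

lemma S_topT_total : ∀ (T : PBT) (a : ℕ+) (j : ℕ),
    (a : ℕ) + (T.leaves : ℕ) ≤ j + 1 → S (topT T a) j + 1 = (T.leaves : ℕ)
  | .leaf, a, j, h => by rw [topT, S_zero]; rfl
  | .node l r, a, j, h => by
    rw [coe_leaves_node] at h ⊢
    have hp := leaves_pos l; have hq := leaves_pos r
    have hl := S_topT_total l a j (by omega)
    have hr := S_topT_total r (a + l.leaves) j (by rw [coe_add_leaves]; omega)
    rw [S_topT_node, if_pos (by omega)]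
    omega

lemma S_topT_ballot : ∀ (T : PBT) (a : ℕ+) (j : ℕ),
    j + 1 ≤ (a : ℕ) + (T.leaves : ℕ) → j ≤ (a : ℕ) + S (topT T a) j
  | .leaf, a, j, h => by
    rw [coe_leaves_leaf] at h
    have := Nat.zero_le (S (topT .leaf a) j); omega
  | .node l r, a, j, h => by
    rw [coe_leaves_node] at h
    have hp := leaves_pos l; have hq := leaves_pos r
    rcases le_or_gt j (a : ℕ) with hj | hj
    · have := Nat.zero_le (S (topT (.node l r) a) j); omega
    rw [S_topT_node, if_pos hj]
    rcases le_or_gt (j + 1) ((a : ℕ) + (l.leaves : ℕ)) with hc | hc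
    · have hl := S_topT_ballot l a j hc
      omega
    · have hl := S_topT_total l a j (by omega)
      have hr := S_topT_ballot r (a + l.leaves) j (by rw [coe_add_leaves]; omega)
      rw [coe_add_leaves] at hr
      omega

lemma topT_root (T : PBT) (a : ℕ+) (h : T ≠ .leaf) : G (topT T a) (a : ℕ) ≠ 0 := by
  cases T with
  | leaf => exact absurd rfl h
  | node l r => rw [G_topT_node, if_pos rfl]; omega

lemma topT_strict : ∀ (T : PBT) (a : ℕ+) (j : ℕ),
    (a : ℕ) < j → j + 2 ≤ (a : ℕ) + (T.leaves : ℕ) →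
    (a : ℕ) + S (topT T a) j = j → G (topT T a) j ≠ 0
  | .leaf, a, j, h1, h2, h3 => by rw [coe_leaves_leaf] at h2; omega
  | .node l r, a, j, h1, h2, h3 => by
    rw [coe_leaves_node] at h2
    have hp := leaves_pos l; have hq := leaves_pos r
    rw [S_topT_node, if_pos h1] at h3
    rw [G_topT_node, if_neg (by omega)]
    rcases lt_trichotomy j ((a : ℕ) + (l.leaves : ℕ)) with hc | hc | hc
    · -- strictly inside left part : contradiction with ballot for l
      have hl := S_topT_ballot l a j (by omega)
      have hr : S (topT r (a + l.leaves)) j = 0 :=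
        S_eq_zero _ (fun i hi => topT_lower r _ i (by rw [coe_add_leaves]; omega))
      omega
    · -- j = a + leaves l : root of right tree
      have hrne : r ≠ .leaf := by
        intro hr; subst hr
        rw [coe_leaves_leaf] at h2
        omega
      have := topT_root r (a + l.leaves) hrne
      rw [coe_add_leaves] at this
      rw [← hc] at this
      omega
    · -- j in right part
      have hl := S_topT_total l a j (by omega)
      have hr := topT_strict r (a + l.leaves) j (by rw [coe_add_leaves]; omega)
        (by rw [coe_add_leaves]; omega)
        (by rw [coe_add_leaves]; omega)
      omega
lemma G_sub (μ ν : ℕ+ →₀ ℕ) (i : ℕ) : G (μ - ν) i = G μ i - G ν i := by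
  unfold G; split
  · exact Finsupp.tsub_apply μ ν _
  · simp

lemma G_filter_lt (μ : ℕ+ →₀ ℕ) (m : ℕ) (i : ℕ) :
    G (μ.filter fun x : ℕ+ => (x : ℕ) < m) i = if i < m then G μ i else 0 := by
  unfold G; split
  · erw [Finsupp.filter_apply]; rfl
  · simp

lemma G_filter_not_lt (μ : ℕ+ →₀ ℕ) (m : ℕ) (i : ℕ) :
    G (μ.filter fun x : ℕ+ => ¬ (x : ℕ) < m) i = if i < m then 0 else G μ i := by
  unfold G; split
  · erw [Finsupp.filter_apply]
    split <;> split <;> simp_all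
  · simp

lemma S_of_pointwise_add {μ ν ξ : ℕ+ →₀ ℕ} (h : ∀ i, G μ i + G ν i = G ξ i) (j : ℕ) :
    S μ j + S ν j = S ξ j := by
  rw [S, S, S, ← Finset.sum_add_distrib]
  exact Finset.sum_congr rfl (fun i _ => h i)

lemma S_filter_lt (μ : ℕ+ →₀ ℕ) {m j : ℕ} (h : j ≤ m) :
    S (μ.filter fun x : ℕ+ => (x : ℕ) < m) j = S μ j :=
  Finset.sum_congr rfl (fun i hi => by
    rw [G_filter_lt, if_pos (by simp only [Finset.mem_range] at hi; omega)])

lemma S_filter_not_lt (μ : ℕ+ →₀ ℕ) {m j : ℕ} (h : m ≤ j) :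
    S (μ.filter fun x : ℕ+ => ¬ (x : ℕ) < m) j + S μ m = S μ j := by
  have h1 : ∀ i, G (μ.filter fun x : ℕ+ => ¬ (x : ℕ) < m) i + G (μ.filter fun x : ℕ+ => (x : ℕ) < m) i
      = G μ i := by
    intro i
    rw [G_filter_not_lt, G_filter_lt]
    split <;> omega
  have h2 := S_of_pointwise_add h1 j
  have h3 : S (μ.filter fun x : ℕ+ => (x : ℕ) < m) j
      = S (μ.filter fun x : ℕ+ => (x : ℕ) < m) m := by
    apply S_congr_zero _ h
    intro i hi _
    rw [G_filter_lt, if_neg (by omega)]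
  rw [h3, S_filter_lt μ (le_refl m)] at h2
  exact h2

/-- the right subtree's top is recovered by filtering. -/
lemma filter_topT_node (l r : PBT) (a : ℕ+) :
    ((topT (.node l r) a).filter fun x : ℕ+ => ¬ (x : ℕ) < ((a : ℕ) + (l.leaves : ℕ)))
      = topT r (a + l.leaves) := by
  apply ext_G
  intro i
  rw [G_filter_not_lt]
  split
  · rename_i hi
    exact (topT_lower r (a + l.leaves) i (by rw [coe_add_leaves]; omega)).symm
  · rename_i hi
    rw [G_topT_node, if_neg (by have := leaves_pos l; omega),
      topT_upper l a i (by omega)]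
    omega

lemma left_leaves_le (l r l' r' : PBT) (a : ℕ+)
    (h : topT (.node l r) a = topT (.node l' r') a)
    (hlv : ((PBT.node l r).leaves : ℕ) = ((PBT.node l' r').leaves : ℕ)) :
    (l.leaves : ℕ) ≤ (l'.leaves : ℕ) := by
  by_contra hc
  push_neg at hc
  set j := (a : ℕ) + (l'.leaves : ℕ) with hj
  have hql := leaves_pos l; have hqr := leaves_pos r
  have hql' := leaves_pos l'; have hqr' := leaves_pos r'
  rw [coe_leaves_node, coe_leaves_node] at hlv
  -- LHS is strictly above the diagonal at j
  have h1 : j ≤ (a : ℕ) + S (topT l a) j := S_topT_ballot l a j (by omega)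
  have h2 := S_topT_node l r a j
  rw [if_pos (by omega)] at h2
  -- RHS is on the diagonal at j
  have h3 : S (topT l' a) j + 1 = (l'.leaves : ℕ) := S_topT_total l' a j (by omega)
  have h4 : S (topT r' (a + l'.leaves)) j = 0 :=
    S_topT_base r' _ (by rw [coe_add_leaves])
  have h5 := S_topT_node l' r' a j
  rw [if_pos (by omega), h4] at h5
  have hS : S (topT (.node l r) a) j = S (topT (.node l' r') a) j := by rw [h]
  rw [h2, h5] at hS
  have := Nat.zero_le (S (topT r (a + l.leaves)) j)
  omega

lemma topT_inj : ∀ (T T' : PBT) (a : ℕ+), T.leaves = T'.leaves → topT T a = topT T' a → T = T'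
  | .leaf, .leaf, _, _, _ => rfl
  | .leaf, .node l' r', a, hlv, _ => by
    exfalso
    have : ((PBT.node l' r').leaves : ℕ) = 1 := by rw [← hlv]; rfl
    rw [coe_leaves_node] at this
    have := leaves_pos l'; have := leaves_pos r'; omega
  | .node l r, .leaf, a, hlv, _ => by
    exfalso
    have : ((PBT.node l r).leaves : ℕ) = 1 := by rw [hlv]; rfl
    rw [coe_leaves_node] at this
    have := leaves_pos l; have := leaves_pos r; omega
  | .node l r, .node l' r', a, hlv, htop => by
    have hlvn : ((PBT.node l r).leaves : ℕ) = ((PBT.node l' r').leaves : ℕ) := by rw [hlv]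
    have hp1 : (l.leaves : ℕ) ≤ (l'.leaves : ℕ) := left_leaves_le l r l' r' a htop hlvn
    have hp2 : (l'.leaves : ℕ) ≤ (l.leaves : ℕ) := left_leaves_le l' r' l r a htop.symm hlvn.symm
    have hp : (l.leaves : ℕ) = (l'.leaves : ℕ) := le_antisymm hp1 hp2
    have hpp : l.leaves = l'.leaves := PNat.coe_injective hp
    have hR : topT r (a + l.leaves) = topT r' (a + l'.leaves) := by
      rw [← filter_topT_node l r a, ← filter_topT_node l' r' a, htop, hp]
    have hL : topT l a = topT l' a := by
      have hR2 : topT r (a + l.leaves) = topT r' (a + l.leaves) := by rw [hR, hpp]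
      apply ext_G
      intro i
      have h' : G (topT (.node l r) a) i = G (topT (.node l' r') a) i := by rw [htop]
      rw [G_topT_node, G_topT_node, ← hpp, ← hR2] at h'
      omega
    have hrlv : r.leaves = r'.leaves := by
      apply PNat.coe_injective
      rw [coe_leaves_node, coe_leaves_node] at hlvn
      omega
    rw [topT_inj l l' a hpp hL, topT_inj r r' (a + l.leaves) hrlv (hpp ▸ hR)]

lemma treeOf : ∀ (k : ℕ) (a : ℕ+) (c : ℕ+ →₀ ℕ),
    (∀ i, G c i ≠ 0 → (a : ℕ) ≤ i ∧ i < (a : ℕ) + k) →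
    (∀ j, j ≤ (a : ℕ) + k → j ≤ (a : ℕ) + S c j) →
    S c ((a : ℕ) + k) = k →
    ∃ T : PBT, (T.leaves : ℕ) = k + 1 ∧ topT T a = c := by
  intro k
  induction k using Nat.strong_induction_on with
  | _ k ih =>
  intro a c hsupp hballot htot
  rcases Nat.eq_zero_or_pos k with rfl | hk
  · refine ⟨.leaf, coe_leaves_leaf, ?_⟩
    rw [topT]
    symm
    apply ext_G
    intro i
    rw [G_zero]
    by_contra hc
    have := hsupp i (by omega)
    omega
  set A := (a : ℕ) with hA
  have hApos : 1 ≤ A := a.pos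
  have hSA : S c A = 0 := S_eq_zero _ (fun i hi => by
    by_contra hc; have := hsupp i hc; omega)
  have hGa : 1 ≤ G c A := by
    have hb := hballot (A + 1) (by omega)
    rw [S_succ, hSA] at hb
    omega
  have hP : ∃ j, A < j ∧ A + S c j = j := ⟨A + k, by omega, by rw [htot]⟩
  have hm' : ∃ m, (A < m ∧ A + S c m = m) ∧ ∀ j, j < m → ¬(A < j ∧ A + S c j = j) :=
    ⟨Nat.find hP, Nat.find_spec hP, fun j hj => Nat.find_min hP hj⟩
  obtain ⟨m, ⟨hmA, hmeq⟩, hmin⟩ := hm'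
  have hmk : m ≤ A + k := by
    by_contra hc
    exact hmin (A + k) (by omega) ⟨by omega, by rw [htot]⟩
  set p := m - A with hp
  have hp1 : 1 ≤ p := by omega
  have hpk : p ≤ k := by omega
  have hScm : S c m = p := by omega
  have strict : ∀ j, A < j → j < m → j + 1 ≤ A + S c j := by
    intro j h1 h2
    have := hballot j (by omega)
    have := hmin j h2
    omega
  -- the left part
  set cL := (c.filter fun x : ℕ+ => (x : ℕ) < m) - Finsupp.single a 1 with hcL
  have hGcL : ∀ i, G cL i = (if i < m then G c i else 0) - (if i = A then 1 else 0) := by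
    intro i
    rw [hcL, G_sub, G_filter_lt, G_single]
  have hptL : ∀ i, G cL i + G (Finsupp.single a 1) i = G (c.filter fun x : ℕ+ => (x : ℕ) < m) i := by
    intro i
    rw [hGcL, G_single, G_filter_lt, ← hA]
    split_ifs with h1 h2 h3
    · subst h2; omega
    · omega
    · subst h3; omega
    · omega
  have hScL : ∀ j, j ≤ m → S cL j = S c j - (if A < j then 1 else 0) := by
    intro j hj
    have h9 := S_of_pointwise_add hptL j
    rw [S_single, S_filter_lt c hj, ← hA] at h9
    split_ifs at h9 ⊢ <;> omega
  have hGm1 : G c (m - 1) = 0 ∨ p = 1 := by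
    rcases Nat.lt_or_ge 1 p with h2 | h2
    · left
      have hs := strict (m - 1) (by omega) (by omega)
      have := S_succ c (m - 1)
      rw [show m - 1 + 1 = m by omega] at this
      omega
    · right; omega
  have hcLm1 : G cL (m - 1) = 0 := by
    rw [hGcL]
    rcases hGm1 with h | h
    · rw [h]; split <;> simp
    · have hm1 : m - 1 = A := by omega
      have : S c m = G c A := by
        have := S_succ c A
        rw [show A + 1 = m by omega] at this
        omega
      rw [hm1, if_pos rfl, if_pos (by omega)]
      omega
  obtain ⟨L, hLlv, hLtop⟩ := ih (p - 1) (by omega) a cL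
    (by
      intro i hi
      have him : i < m := by
        by_contra hc
        exact hi (by rw [hGcL, if_neg hc]; simp)
      have hci : G c i ≠ 0 := by
        intro h0
        exact hi (by rw [hGcL, if_pos him, h0]; simp)
      have hiA : A ≤ i := (hsupp i hci).1
      have hne : i ≠ m - 1 := fun h => hi (h ▸ hcLm1)
      omega)
    (by
      intro j hj
      rcases le_or_gt j A with h1 | h1
      · have := Nat.zero_le (S cL j); omega
      · have hs := strict j h1 (by omega)
        rw [hScL j (by omega), if_pos h1]
        omega)
    (by
      have hm1 : A + (p - 1) = m - 1 := by omega
      rw [hm1, hScL (m - 1) (by omega)]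
      rcases Nat.lt_or_ge 1 p with h2 | h2
      · have hs := strict (m - 1) (by omega) (by omega)
        have hsc := S_succ c (m - 1)
        rw [show m - 1 + 1 = m by omega] at hsc
        rw [if_pos (by omega)]
        omega
      · have hm1A : m - 1 = A := by omega
        rw [hm1A, if_neg (by omega), hSA]
        omega)
  -- the right part
  have hmpos : 0 < m := by omega
  set m' : ℕ+ := ⟨m, hmpos⟩ with hm'
  have hm'c : (m' : ℕ) = m := rfl
  set cR := c.filter fun x : ℕ+ => ¬ (x : ℕ) < m with hcR
  obtain ⟨R, hRlv, hRtop⟩ := ih (k - p) (by omega) m' cR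
    (by
      intro i hi
      rw [hcR, G_filter_not_lt] at hi
      have him : ¬ i < m := by intro hc; rw [if_pos hc] at hi; simp at hi
      rw [if_neg him] at hi
      have := (hsupp i hi).2
      rw [hm'c]
      omega)
    (by
      intro j hj
      rw [hm'c] at hj ⊢
      rcases le_or_gt j m with h1 | h1
      · have := Nat.zero_le (S cR j); omega
      · have h2 := S_filter_not_lt c (le_of_lt h1)
        have h3 := hballot j (by omega)
        rw [← hcR] at h2
        omega)
    (by
      rw [hm'c, show m + (k - p) = A + k by omega]
      have h2 := S_filter_not_lt c (m := m) (j := A + k) (by omega)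
      rw [← hcR] at h2
      omega)
  refine ⟨.node L R, ?_, ?_⟩
  · rw [coe_leaves_node, hLlv, hRlv]; omega
  · have hbase : a + L.leaves = m' := by
      apply PNat.coe_injective
      rw [coe_add_leaves, hLlv, hm'c]
      omega
    rw [topT, hbase, hLtop, hRtop, hcL]
    have hle : Finsupp.single a 1 ≤ c.filter fun x : ℕ+ => (x : ℕ) < m := by
      rw [Finsupp.le_def]
      intro x
      have := hptL (x : ℕ)
      rw [G_coe, G_coe, G_coe] at this
      omega
    rw [add_tsub_cancel_of_le hle, hcR]
    exact Finsupp.filter_pos_add_filter_neg c _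
open PBT

lemma valid_node {l r : PBT} (k : ℕ+) (labl : Labeling l) (labr : Labeling r) (a : ℕ+) :
    (Labeling.node k labl labr).Valid a ↔
      (k ≤ a ∧ (∀ x ∈ labl.rootVal?, x ≤ k) ∧ (∀ x ∈ labr.rootVal?, k < x) ∧
       labl.Valid a ∧ labr.Valid (a + l.leaves)) := Iff.rfl

def canon : (T : PBT) → ℕ+ → Labeling T
  | .leaf, _ => .leaf
  | .node l r, a => .node a (canon l a) (canon r (a + l.leaves))

lemma mon_node {l r : PBT} (k : ℕ+) (labl : Labeling l) (labr : Labeling r) :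
    (Labeling.node k labl labr).mon = Finsupp.single k 1 + labl.mon + labr.mon := rfl

lemma canon_mon : ∀ (T : PBT) (a : ℕ+), (canon T a).mon = topT T a
  | .leaf, a => rfl
  | .node l r, a => by
    show Finsupp.single a 1 + (canon l a).mon + (canon r (a + l.leaves)).mon = _
    rw [canon_mon l a, canon_mon r _, topT]

lemma canon_rootVal : ∀ (T : PBT) (a : ℕ+), ∀ x ∈ (canon T a).rootVal?, x = a
  | .leaf, a => by intro x hx; simp [canon, Labeling.rootVal?] at hx
  | .node l r, a => by
    intro x hx
    simp only [canon, Labeling.rootVal?, Option.mem_def, Option.some_inj] at hx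
    exact hx.symm

lemma lt_add_pnat (a b : ℕ+) : a < a + b := by
  rw [← PNat.coe_lt_coe, PNat.add_coe]
  have := b.pos
  omega

lemma canon_valid : ∀ (T : PBT) (a : ℕ+), (canon T a).Valid a
  | .leaf, a => trivial
  | .node l r, a => by
    refine ⟨le_refl a, ?_, ?_, canon_valid l a, canon_valid r _⟩
    · intro x hx; rw [canon_rootVal l a x hx]
    · intro x hx; rw [canon_rootVal r _ x hx]; exact lt_add_pnat a l.leaves

lemma mon_phi : ∀ {T : PBT} (lab : Labeling T) (a : ℕ+), lab.Valid a →
    Φ lab.mon ≤ Φ (topT T a) ∧ (Φ lab.mon = Φ (topT T a) → lab = canon T a) := by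
  intro T lab
  induction lab with
  | leaf =>
    intro a _
    constructor
    · exact le_refl _
    · intro _; rfl
  | node k labl labr ihl ihr =>
    rename_i l r
    intro a hv
    obtain ⟨hk, -, -, hvl, hvr⟩ := hv
    have hkc : (k : ℕ) ≤ (a : ℕ) := hk
    obtain ⟨h1, h1e⟩ := ihl a hvl
    obtain ⟨h2, h2e⟩ := ihr (a + l.leaves) hvr
    rw [mon_node, Φ_add, Φ_add, Φ_single, topT, Φ_add, Φ_add, Φ_single, mul_one, mul_one]
    constructor
    · omega
    · intro heq
      have hek : (k : ℕ) = (a : ℕ) := by omega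
      have e1 : labl = canon l a := h1e (by omega)
      have e2 : labr = canon r (a + l.leaves) := h2e (by omega)
      show _ = Labeling.node a (canon l a) (canon r (a + l.leaves))
      rw [PNat.coe_injective hek, e1, e2]

def allLE : {T : PBT} → Labeling T → ℕ+ → Prop
  | _, .leaf, _ => True
  | _, .node k labl labr, B => k ≤ B ∧ allLE labl B ∧ allLE labr B

lemma mem_labsUpTo : ∀ {T : PBT} (lab : Labeling T) (B : ℕ+),
    lab ∈ labsUpTo T B ↔ allLE lab B := by
  intro T lab
  induction lab with
  | leaf =>
    intro B
    constructor
    · intro _; trivial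
    · intro _; rw [labsUpTo]; exact Finset.mem_singleton_self _
  | node k labl labr ihl ihr =>
    rename_i l r
    intro B
    rw [labsUpTo]
    constructor
    · intro h
      obtain ⟨x, hx, heq⟩ := Finset.mem_image.1 h
      obtain ⟨hx1, hx2⟩ := Finset.mem_product.1 hx
      obtain ⟨hx21, hx22⟩ := Finset.mem_product.1 hx2
      obtain ⟨ek, el, er⟩ : x.1 = k ∧ x.2.1 = labl ∧ x.2.2 = labr := by
        injection heq with e1 e2 e3 e4 e5
        exact ⟨e3, e4, e5⟩
      refine ⟨?_, (ihl B).1 (by rw [← el]; exact hx21), (ihr B).1 (by rw [← er]; exact hx22)⟩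
      obtain ⟨n, hn, hnk⟩ := Finset.mem_image.1 hx1
      rw [Finset.mem_range] at hn
      rw [← ek, ← hnk]
      rw [← PNat.coe_le_coe, Nat.succPNat_coe]
      omega
    · rintro ⟨hk, hl, hr⟩
      have hkmem : k ∈ (Finset.range (B : ℕ)).image Nat.succPNat := by
        apply Finset.mem_image.2
        refine ⟨(k : ℕ) - 1, ?_, ?_⟩
        · rw [Finset.mem_range]
          have := k.pos
          have hkB : (k : ℕ) ≤ (B : ℕ) := hk
          omega
        · apply PNat.coe_injective
          rw [Nat.succPNat_coe]
          have := k.pos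
          omega
      apply Finset.mem_image.2
      refine ⟨(k, labl, labr), ?_, rfl⟩
      apply Finset.mem_product.2
      exact ⟨hkmem, Finset.mem_product.2 ⟨(ihl B).2 hl, (ihr B).2 hr⟩⟩

lemma canon_allLE : ∀ (T : PBT) (a B : ℕ+),
    (a : ℕ) + (T.leaves : ℕ) ≤ (B : ℕ) + 1 → allLE (canon T a) B
  | .leaf, _, _, _ => trivial
  | .node l r, a, B, h => by
    rw [coe_leaves_node] at h
    have hp := leaves_pos l; have hq := leaves_pos r
    refine ⟨?_, canon_allLE l a B (by omega),
      canon_allLE r (a + l.leaves) B (by rw [coe_add_leaves]; omega)⟩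
    rw [← PNat.coe_le_coe]
    omega

lemma coeff_treePoly (T : PBT) (a : ℕ+) (μ : ℕ+ →₀ ℕ) :
    (treePoly T a).coeff μ
      = ((((labsUpTo T (a + T.leaves)).filter (fun lab => lab.Valid a)).filter
          (fun lab => lab.mon = μ)).card : ℤ) := by
  rw [treePoly, MvPolynomial.coeff_sum]
  rw [← Finset.sum_boole]
  apply Finset.sum_congr rfl
  intro lab _
  rw [MvPolynomial.coeff_monomial]

def Good (P : MvPolynomial ℕ+ ℤ) (τ : ℕ+ →₀ ℕ) : Prop :=
  P.coeff τ = 1 ∧ ∀ μ, P.coeff μ ≠ 0 → Φ μ ≤ Φ τ ∧ (Φ μ = Φ τ → μ = τ)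

lemma good_treePoly (T : PBT) (a : ℕ+) : Good (treePoly T a) (topT T a) := by
  constructor
  · rw [coeff_treePoly]
    rw [show (((labsUpTo T (a + T.leaves)).filter (fun lab => lab.Valid a)).filter
          (fun lab => lab.mon = topT T a)) = {canon T a} from ?_]
    · simp
    · apply Finset.eq_singleton_iff_unique_mem.2
      constructor
      · rw [Finset.mem_filter, Finset.mem_filter]
        refine ⟨⟨?_, canon_valid T a⟩, canon_mon T a⟩
        rw [mem_labsUpTo]
        apply canon_allLE
        rw [coe_add_leaves]
        omega
      · intro lab hlab
        rw [Finset.mem_filter, Finset.mem_filter] at hlab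
        obtain ⟨⟨-, hval⟩, hmon⟩ := hlab
        exact (mon_phi lab a hval).2 (by rw [hmon])
  · intro μ hμ
    rw [coeff_treePoly] at hμ
    have hne : (((labsUpTo T (a + T.leaves)).filter (fun lab => lab.Valid a)).filter
          (fun lab => lab.mon = μ)).Nonempty := by
      rw [Finset.nonempty_iff_ne_empty]
      intro he
      rw [he] at hμ
      simp at hμ
    obtain ⟨lab, hlab⟩ := hne
    rw [Finset.mem_filter, Finset.mem_filter] at hlab
    obtain ⟨⟨-, hval⟩, hmon⟩ := hlab
    obtain ⟨hle, heq⟩ := mon_phi lab a hval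
    rw [hmon] at hle heq
    refine ⟨hle, fun h => ?_⟩
    rw [← hmon, heq h, canon_mon]

lemma good_one : Good 1 0 := by
  constructor
  · simp
  · intro μ hμ
    rw [MvPolynomial.coeff_one] at hμ
    have : μ = 0 := by
      by_contra hc
      rw [if_neg (fun h => hc h.symm)] at hμ
      exact hμ rfl
    rw [this]
    exact ⟨le_refl _, fun _ => rfl⟩

lemma good_mul {P Q : MvPolynomial ℕ+ ℤ} {τ σ : ℕ+ →₀ ℕ}
    (hP : Good P τ) (hQ : Good Q σ) : Good (P * Q) (τ + σ) := by
  constructor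
  · rw [MvPolynomial.coeff_mul]
    have hmem : (τ, σ) ∈ Finset.HasAntidiagonal.antidiagonal (τ + σ) := Finset.HasAntidiagonal.mem_antidiagonal.mpr rfl
    rw [Finset.sum_eq_single_of_mem (τ, σ) hmem]
    · rw [hP.1, hQ.1, one_mul]
    · intro b hb hbne
      by_contra hc
      obtain ⟨hb1, hb2⟩ := mul_ne_zero_iff.1 hc
      obtain ⟨hle1, heq1⟩ := hP.2 b.1 hb1
      obtain ⟨hle2, heq2⟩ := hQ.2 b.2 hb2
      have hsum : b.1 + b.2 = τ + σ := Finset.HasAntidiagonal.mem_antidiagonal.1 hb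
      have hΦ : Φ b.1 + Φ b.2 = Φ τ + Φ σ := by
        rw [← Φ_add, ← Φ_add, hsum]
      apply hbne
      have e1 : b.1 = τ := heq1 (by omega)
      have e2 : b.2 = σ := heq2 (by omega)
      rw [Prod.ext_iff]
      exact ⟨e1, e2⟩
  · intro μ hμ
    rw [MvPolynomial.coeff_mul] at hμ
    obtain ⟨b, hb, hbne⟩ := Finset.exists_ne_zero_of_sum_ne_zero hμ
    obtain ⟨hb1, hb2⟩ := mul_ne_zero_iff.1 hbne
    obtain ⟨hle1, heq1⟩ := hP.2 b.1 hb1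
    obtain ⟨hle2, heq2⟩ := hQ.2 b.2 hb2
    have hsum : b.1 + b.2 = μ := Finset.HasAntidiagonal.mem_antidiagonal.1 hb
    have hΦμ : Φ b.1 + Φ b.2 = Φ μ := by rw [← Φ_add, hsum]
    rw [Φ_add]
    refine ⟨by omega, fun h => ?_⟩
    have e1 : b.1 = τ := heq1 (by omega)
    have e2 : b.2 = σ := heq2 (by omega)
    rw [← hsum, e1, e2]

lemma good_prod {α : Type*} (s : Finset α) (f : α → MvPolynomial ℕ+ ℤ) (t : α → (ℕ+ →₀ ℕ))
    (h : ∀ x ∈ s, Good (f x) (t x)) : Good (∏ x ∈ s, f x) (∑ x ∈ s, t x) := by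
  classical
  induction s using Finset.cons_induction with
  | empty => simpa using good_one
  | cons a s ha ih =>
    rw [Finset.prod_cons, Finset.sum_cons]
    exact good_mul (h a (Finset.mem_cons_self a s)) (ih (fun x hx => h x (Finset.mem_cons.2 (Or.inr hx))))
def topF (F : IndexedForest) : ℕ+ →₀ ℕ := ∑ p ∈ F.trees, topT p.1 p.2

lemma good_forestPoly (F : IndexedForest) : Good (forestPoly F) (topF F) :=
  good_prod _ _ _ (fun p _ => good_treePoly p.1 p.2)

lemma forest_ext {F F' : IndexedForest} (h : F.trees = F'.trees) : F = F' := by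
  cases F; cases F'; cases h; rfl

def emptyForest : IndexedForest := ⟨∅, by simp, by simp⟩

lemma topF_eq_zero {F : IndexedForest} (h : topF F = 0) : F.trees = ∅ := by
  by_contra hne
  obtain ⟨p, hp⟩ := Finset.nonempty_of_ne_empty hne
  have h1 : G (topF F) ((p.2 : ℕ+) : ℕ) ≠ 0 := by
    rw [topF, G_sum]
    intro h0
    exact topT_root p.1 p.2 (F.nontrivial p hp) ((Finset.sum_eq_zero_iff.1 h0) p hp)
  rw [h, G_zero] at h1
  exact h1 rfl

lemma leaves_two {T : PBT} (h : T ≠ .leaf) : 2 ≤ (T.leaves : ℕ) := by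
  cases T with
  | leaf => exact absurd rfl h
  | node l r =>
    rw [coe_leaves_node]
    have := leaves_pos l; have := leaves_pos r; omega

lemma interval_lt {F : IndexedForest} {p q : PBT × ℕ+} (hp : p ∈ F.trees) (hq : q ∈ F.trees)
    (hne : p ≠ q) (hle : (p.2 : ℕ) ≤ (q.2 : ℕ)) :
    (p.2 : ℕ) + (p.1.leaves : ℕ) - 1 < (q.2 : ℕ) := by
  have hd := F.disjoint p hp q hq hne
  by_contra hc
  push_neg at hc
  have h1 : (q.2 : ℕ) ∈ Set.Icc (p.2 : ℕ) ((p.2 : ℕ) + (p.1.leaves : ℕ) - 1) := ⟨hle, hc⟩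
  have h2 : (q.2 : ℕ) ∈ Set.Icc (q.2 : ℕ) ((q.2 : ℕ) + (q.1.leaves : ℕ) - 1) :=
    ⟨le_refl _, by have := leaves_pos q.1; omega⟩
  exact Set.disjoint_left.1 hd h1 h2

lemma exists_stop (μ : ℕ+ →₀ ℕ) (A : ℕ) :
    ∀ (d j : ℕ), A < j → j ≤ A + S μ j → A + Φ μ + 1 - j ≤ d →
    ∃ b, A < b ∧ A + S μ b = b ∧ G μ b = 0 := by
  intro d
  induction d with
  | zero =>
    intro j h1 h2 h3
    have := S_le_Φ μ j
    omega
  | succ d ihd =>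
    intro j h1 h2 h3
    rcases eq_or_ne (A + S μ j) j with he | hne
    · rcases eq_or_ne (G μ j) 0 with hg | hg
      · exact ⟨j, h1, he, hg⟩
      · apply ihd (j + 1) (by omega)
        · rw [S_succ]; omega
        · have := S_le_Φ μ j
          omega
    · apply ihd (j + 1) (by omega)
      · have := S_mono μ (by omega : j ≤ j + 1)
        omega
      · have := S_le_Φ μ j
        omega

lemma forest_surj : ∀ (s : ℕ) (μ : ℕ+ →₀ ℕ) (N : ℕ), Φ μ ≤ s → (∀ i, i < N → G μ i = 0) →
    ∃ F : IndexedForest, topF F = μ ∧ ∀ p ∈ F.trees, N ≤ ((p.2 : ℕ+) : ℕ) := by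
  intro s
  induction s using Nat.strong_induction_on with
  | _ s ihs =>
  intro μ N hΦ hN
  rcases eq_or_ne μ 0 with rfl | hμ0
  · exact ⟨emptyForest, by rw [topF]; rfl, by intro p hp; exact absurd hp (Finset.notMem_empty p)⟩
  have hsne : μ.support.Nonempty := Finsupp.support_nonempty_iff.2 hμ0
  set a := μ.support.min' hsne with ha
  obtain ⟨A, hA⟩ : ∃ A, (a : ℕ) = A := ⟨_, rfl⟩
  have hGA : G μ A ≠ 0 := by
    rw [← hA, G_coe]
    exact Finsupp.mem_support_iff.1 (μ.support.min'_mem hsne)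
  have hmin_supp : ∀ i, i < A → G μ i = 0 := by
    intro i hi
    rcases Nat.eq_zero_or_pos i with rfl | hp
    · exact G_nat_zero μ
    · by_contra hc
      have hmem : (⟨i, hp⟩ : ℕ+) ∈ μ.support := by
        apply Finsupp.mem_support_iff.2
        intro h0; exact hc (by rw [G_of_pos μ hp]; exact h0)
      have := μ.support.min'_le _ hmem
      replace this := (PNat.coe_le_coe _ _).2 this
      rw [← ha] at this
      have : A ≤ i := by rw [← hA]; exact this
      omega
  have hNA : N ≤ A := by
    by_contra hc
    exact hGA (hN A (by omega))
  have hSA : S μ A = 0 := S_eq_zero μ (fun i hi => hmin_supp i hi)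
  have hΦpos : 1 ≤ Φ μ := Φ_pos hGA
  -- find the end of the first block
  have hbex : ∃ b, A < b ∧ A + S μ b = b ∧ G μ b = 0 := by
    apply exists_stop μ A (A + Φ μ + 1) (A + 1) (by omega) _ (by omega)
    rw [S_succ]
    omega
  obtain ⟨b, ⟨hbA, hbeq, hbG⟩, hbmin⟩ :
      ∃ b, (A < b ∧ A + S μ b = b ∧ G μ b = 0) ∧
        ∀ j, j < b → ¬(A < j ∧ A + S μ j = j ∧ G μ j = 0) :=
    ⟨Nat.find hbex, Nat.find_spec hbex, fun j hj => Nat.find_min hbex hj⟩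
  have hball : ∀ j, j ≤ b → j ≤ A + S μ j := by
    intro j
    induction j with
    | zero => omega
    | succ j ihj =>
      intro hj
      rcases Nat.lt_or_ge j A with h1 | h1
      · have := Nat.zero_le (S μ (j + 1)); omega
      rcases eq_or_ne j A with rfl | h2
      · rw [S_succ, hSA]
        omega
      have hjj := ihj (by omega)
      rcases eq_or_ne (A + S μ j) j with he | hne
      · have hnP := hbmin j (by omega)
        have hg : G μ j ≠ 0 := by
          by_contra hg
          exact hnP ⟨by omega, he, hg⟩
        rw [S_succ]
        omega
      · have := S_mono μ (by omega : j ≤ j + 1)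
        omega
  obtain ⟨k, hk⟩ : ∃ k, b = A + k := ⟨b - A, by omega⟩
  have hk1 : 1 ≤ k := by omega
  set c := μ.filter (fun x : ℕ+ => (x : ℕ) < b) with hc
  set rest := μ.filter (fun x : ℕ+ => ¬ (x : ℕ) < b) with hrest
  obtain ⟨T, hTlv, hTtop⟩ := treeOf k a c
    (by
      intro i hi
      rw [hc, G_filter_lt] at hi
      have hib : i < b := by by_contra hcc; rw [if_neg hcc] at hi; exact hi rfl
      rw [if_pos hib] at hi
      have : A ≤ i := by by_contra hcc; exact hi (hmin_supp i (by omega))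
      rw [hA]
      omega)
    (by
      intro j hj
      rw [hA] at hj ⊢
      rw [hc, S_filter_lt μ (by omega)]
      exact hball j (by omega))
    (by
      rw [hA, hc, S_filter_lt μ (by omega), ← hk]
      omega)
  have hTne : T ≠ .leaf := by
    intro h
    rw [h, coe_leaves_leaf] at hTlv
    omega
  have hΦc : 1 ≤ Φ c := by
    apply Φ_pos (i := A)
    rw [hc, G_filter_lt, if_pos (by omega)]
    exact hGA
  have hsplit : c + rest = μ := Finsupp.filter_pos_add_filter_neg μ _
  have hΦsplit : Φ c + Φ rest = Φ μ := by rw [← Φ_add, hsplit]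
  have hrest_bound : ∀ i, i < b + 1 → G rest i = 0 := by
    intro i hi
    rcases Nat.lt_or_ge i b with h1 | h1
    · rw [hrest, G_filter_not_lt, if_pos h1]
    · have : i = b := by omega
      rw [hrest, G_filter_not_lt, if_neg (by omega), this]
      exact hbG
  obtain ⟨F', hF't, hF'b⟩ := ihs (Φ rest) (by omega) rest (b + 1) (le_refl _) hrest_bound
  have hnotmem : (T, a) ∉ F'.trees := by
    intro h
    have := hF'b (T, a) h
    rw [hA] at this
    omega
  refine ⟨⟨insert (T, a) F'.trees, ?_, ?_⟩, ?_, ?_⟩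
  · intro p hp
    rcases Finset.mem_insert.1 hp with rfl | hp'
    · exact hTne
    · exact F'.nontrivial p hp'
  · have hdisj_new : ∀ q ∈ F'.trees,
        Disjoint (Set.Icc ((a : ℕ+) : ℕ) (((a : ℕ+) : ℕ) + ((T.leaves : ℕ+) : ℕ) - 1))
                 (Set.Icc ((q.2 : ℕ+) : ℕ) (((q.2 : ℕ+) : ℕ) + ((q.1.leaves : ℕ+) : ℕ) - 1)) := by
      intro q hq
      have hq2 := hF'b q hq
      rw [Set.disjoint_left]
      intro x hx1 hx2
      rw [Set.mem_Icc] at hx1 hx2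
      rw [hA] at hx1
      rw [hTlv] at hx1
      omega
    intro p hp q hq hne
    rcases Finset.mem_insert.1 hp with rfl | hp' <;> rcases Finset.mem_insert.1 hq with heq | hq'
    · exact absurd heq.symm hne
    · exact hdisj_new q hq'
    · rw [heq]; exact (hdisj_new p hp').symm
    · exact F'.disjoint p hp' q hq' hne
  · show topF _ = μ
    rw [topF]
    show (∑ p ∈ insert (T, a) F'.trees, topT p.1 p.2) = μ
    rw [Finset.sum_insert hnotmem]
    show topT T a + topF F' = μ
    rw [hF't, hTtop, hc, hrest]
    exact hsplit
  · intro p hp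
    rcases Finset.mem_insert.1 hp with rfl | hp'
    · rw [hA]; omega
    · have := hF'b p hp'
      omega
lemma forest_char (F : IndexedForest) (p0 : PBT × ℕ+) (hp0 : p0 ∈ F.trees)
    (hmin : ∀ p ∈ F.trees, ((p0.2 : ℕ+) : ℕ) ≤ ((p.2 : ℕ+) : ℕ))
    (A b : ℕ) (hA : A = ((p0.2 : ℕ+) : ℕ)) (hb : b + 1 = A + ((p0.1.leaves : ℕ+) : ℕ)) :
    (∀ i, i < A → G (topF F) i = 0) ∧ G (topF F) A ≠ 0 ∧
    (A < b ∧ A + S (topF F) b = b ∧ G (topF F) b = 0) ∧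
    (∀ j, A < j → j < b → ¬(A + S (topF F) j = j ∧ G (topF F) j = 0)) ∧
    (topF F).filter (fun x : ℕ+ => (x : ℕ) < b + 1) = topT p0.1 p0.2 ∧
    (topF F).filter (fun x : ℕ+ => ¬ (x : ℕ) < b + 1) = ∑ p ∈ F.trees.erase p0, topT p.1 p.2 := by
  have hn0 : 2 ≤ ((p0.1.leaves : ℕ+) : ℕ) := leaves_two (F.nontrivial p0 hp0)
  have hsum : topT p0.1 p0.2 + ∑ p ∈ F.trees.erase p0, topT p.1 p.2 = topF F :=
    Finset.add_sum_erase _ _ hp0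
  set rest := ∑ p ∈ F.trees.erase p0, topT p.1 p.2 with hrestdef
  have hrest : ∀ i, i ≤ b → G rest i = 0 := by
    intro i hi
    rw [hrestdef, G_sum]
    apply Finset.sum_eq_zero
    intro p hp
    have hpne : p0 ≠ p := (Finset.ne_of_mem_erase hp).symm
    have hpmem := Finset.mem_of_mem_erase hp
    have hlt := interval_lt hp0 hpmem hpne (hmin p hpmem)
    apply topT_lower
    omega
  have hGμ : ∀ i, G (topF F) i = G (topT p0.1 p0.2) i + G rest i := by
    intro i; rw [← hsum, G_add]
  have hSμ : ∀ j, S (topF F) j = S (topT p0.1 p0.2) j + S rest j := by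
    intro j; rw [← hsum, S_add]
  have hSrest : ∀ j, j ≤ b + 1 → S rest j = 0 :=
    fun j hj => S_eq_zero rest (fun i hi => hrest i (by omega))
  have hAb : A < b := by omega
  refine ⟨?_, ?_, ⟨hAb, ?_, ?_⟩, ?_, ?_, ?_⟩
  · intro i hi
    rw [hGμ, topT_lower p0.1 p0.2 i (by omega), hrest i (by omega)]
  · rw [hGμ]
    have h1 := topT_root p0.1 p0.2 (F.nontrivial p0 hp0)
    rw [← hA] at h1
    omega
  · rw [hSμ, hSrest b (by omega)]
    have h1 := S_topT_total p0.1 p0.2 b (by rw [← hA]; omega)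
    omega
  · rw [hGμ, topT_upper p0.1 p0.2 b (by omega), hrest b (by omega)]
  · intro j hj1 hj2 ⟨hjeq, hjG⟩
    rw [hSμ, hSrest j (by omega)] at hjeq
    have hstr := topT_strict p0.1 p0.2 j (by rw [← hA]; omega) (by rw [← hA]; omega)
      (by rw [← hA]; omega)
    rw [hGμ, hrest j (by omega)] at hjG
    omega
  · apply ext_G
    intro i
    rw [G_filter_lt, hGμ]
    rcases Nat.lt_or_ge i (b + 1) with h1 | h1
    · rw [if_pos h1, hrest i (by omega)]
      omega
    · rw [if_neg (by omega), topT_upper p0.1 p0.2 i (by rw [← hA]; omega)]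
  · apply ext_G
    intro i
    rw [G_filter_not_lt, hGμ]
    rcases Nat.lt_or_ge i (b + 1) with h1 | h1
    · rw [if_pos h1, hrest i (by omega)]
    · rw [if_neg (by omega), topT_upper p0.1 p0.2 i (by rw [← hA]; omega)]
      omega

def eraseForest (F : IndexedForest) (p0 : PBT × ℕ+) : IndexedForest :=
  ⟨F.trees.erase p0,
   fun p hp => F.nontrivial p (Finset.mem_of_mem_erase hp),
   fun p hp q hq => F.disjoint p (Finset.mem_of_mem_erase hp) q (Finset.mem_of_mem_erase hq)⟩

lemma topF_inj_aux : ∀ (n : ℕ) (F F' : IndexedForest), F.trees.card ≤ n →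
    topF F = topF F' → F = F' := by
  intro n
  induction n with
  | zero =>
    intro F F' hcard heq
    have hF : F.trees = ∅ := Finset.card_eq_zero.1 (by omega)
    have hμ : topF F = 0 := by rw [topF, hF, Finset.sum_empty]
    have hF' : F'.trees = ∅ := topF_eq_zero (by rw [← heq, hμ])
    exact forest_ext (hF.trans hF'.symm)
  | succ n ihn =>
    intro F F' hcard heq
    rcases eq_or_ne F.trees ∅ with hF | hF
    · have hμ : topF F = 0 := by rw [topF, hF, Finset.sum_empty]
      have hF' : F'.trees = ∅ := topF_eq_zero (by rw [← heq, hμ])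
      exact forest_ext (hF.trans hF'.symm)
    obtain ⟨p0, hp0, hmin⟩ :=
      F.trees.exists_min_image (fun p => ((p.2 : ℕ+) : ℕ)) (Finset.nonempty_of_ne_empty hF)
    have hF'ne : F'.trees ≠ ∅ := by
      intro h
      have h0 : topF F' = 0 := by rw [topF, h, Finset.sum_empty]
      exact hF (topF_eq_zero (heq.trans h0))
    obtain ⟨p0', hp0', hmin'⟩ :=
      F'.trees.exists_min_image (fun p => ((p.2 : ℕ+) : ℕ)) (Finset.nonempty_of_ne_empty hF'ne)
    have hn0 : 2 ≤ ((p0.1.leaves : ℕ+) : ℕ) := leaves_two (F.nontrivial p0 hp0)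
    have hn0' : 2 ≤ ((p0'.1.leaves : ℕ+) : ℕ) := leaves_two (F'.nontrivial p0' hp0')
    obtain ⟨b, hb⟩ : ∃ b, b + 1 = ((p0.2 : ℕ+) : ℕ) + ((p0.1.leaves : ℕ+) : ℕ) :=
      ⟨((p0.2 : ℕ+) : ℕ) + ((p0.1.leaves : ℕ+) : ℕ) - 1, by omega⟩
    obtain ⟨b', hb'⟩ : ∃ b', b' + 1 = ((p0'.2 : ℕ+) : ℕ) + ((p0'.1.leaves : ℕ+) : ℕ) :=
      ⟨((p0'.2 : ℕ+) : ℕ) + ((p0'.1.leaves : ℕ+) : ℕ) - 1, by omega⟩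
    obtain ⟨c1, c2, c3, c4, c5, c6⟩ := forest_char F p0 hp0 hmin _ b rfl hb
    obtain ⟨c1', c2', c3', c4', c5', c6'⟩ := forest_char F' p0' hp0' hmin' _ b' rfl hb'
    rw [← heq] at c1' c2' c3' c4' c5' c6'
    -- the minimal indices agree
    have hAA : ((p0.2 : ℕ+) : ℕ) = ((p0'.2 : ℕ+) : ℕ) := by
      rcases lt_trichotomy ((p0.2 : ℕ+) : ℕ) ((p0'.2 : ℕ+) : ℕ) with h | h | h
      · exact absurd (c1' _ h) c2
      · exact h
      · exact absurd (c1 _ h) c2'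
    rw [← hAA] at c1' c2' c3' c4'
    -- the block ends agree
    have hbb : b = b' := by
      rcases lt_trichotomy b b' with h | h | h
      · exact absurd ⟨c3.2.1, c3.2.2⟩ (c4' b c3.1 h)
      · exact h
      · exact absurd ⟨c3'.2.1, c3'.2.2⟩ (c4 b' c3'.1 h)
    rw [← hbb] at c5' c6' hb'
    have htopeq : topT p0.1 p0.2 = topT p0'.1 p0'.2 := by rw [← c5, c5']
    have hp02 : p0.2 = p0'.2 := PNat.coe_injective hAA
    have hlv : p0.1.leaves = p0'.1.leaves := PNat.coe_injective (by omega)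
    have hT : p0.1 = p0'.1 := by
      apply topT_inj p0.1 p0'.1 p0.2 hlv
      rw [htopeq, hp02]
    have hp0eq : p0 = p0' := Prod.ext hT hp02
    -- recurse on the rest
    have hrest_eq : topF (eraseForest F p0) = topF (eraseForest F' p0') := by
      show (∑ p ∈ F.trees.erase p0, topT p.1 p.2) = ∑ p ∈ F'.trees.erase p0', topT p.1 p.2
      rw [← c6, ← c6']
    have hcard1 : (eraseForest F p0).trees.card ≤ n := by
      show (F.trees.erase p0).card ≤ n
      rw [Finset.card_erase_of_mem hp0]
      have : 1 ≤ F.trees.card := Finset.card_pos.2 ⟨p0, hp0⟩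
      omega
    have her := ihn (eraseForest F p0) (eraseForest F' p0') hcard1 hrest_eq
    have her' : F.trees.erase p0 = F'.trees.erase p0' := congrArg IndexedForest.trees her
    apply forest_ext
    rw [← Finset.insert_erase hp0, ← Finset.insert_erase hp0', her', hp0eq]

lemma topF_inj {F F' : IndexedForest} (h : topF F = topF F') : F = F' :=
  topF_inj_aux F.trees.card F F' (le_refl _) h
end FB
end

open FB in
/-- **Forest polynomials form a basis**: the family `(𝔓_F)`, as `F` ranges over all
indexed forests, is a basis of the polynomial ring `ℤ[x₁, x₂, …]` as a `ℤ`-module. -/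
theorem forestPoly_basis :
    LinearIndependent ℤ forestPoly ∧
    Submodule.span ℤ (Set.range forestPoly) = ⊤ := by
  constructor
  · rw [linearIndependent_iff']
    intro s g hsum i hi
    by_contra hgi
    have hne : (s.filter fun j => g j ≠ 0).Nonempty := ⟨i, Finset.mem_filter.2 ⟨hi, hgi⟩⟩
    obtain ⟨F0, hF0t, hF0max⟩ := Finset.exists_max_image _ (fun j => Φ (topF j)) hne
    have hF0s : F0 ∈ s := (Finset.mem_filter.1 hF0t).1
    have hgF0 : g F0 ≠ 0 := (Finset.mem_filter.1 hF0t).2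
    have hco := congrArg (MvPolynomial.coeff (topF F0)) hsum
    rw [MvPolynomial.coeff_sum, MvPolynomial.coeff_zero] at hco
    rw [Finset.sum_eq_single_of_mem F0 hF0s] at hco
    · rw [MvPolynomial.coeff_smul, (good_forestPoly F0).1, smul_eq_mul, mul_one] at hco
      exact hgF0 hco
    · intro j hj hjne
      rw [MvPolynomial.coeff_smul]
      rcases eq_or_ne (g j) 0 with h | h
      · rw [h, zero_smul]
      rcases eq_or_ne ((forestPoly j).coeff (topF F0)) 0 with h0 | h0
      · rw [h0, smul_zero]
      exfalso
      have hmax := hF0max j (Finset.mem_filter.2 ⟨hj, h⟩)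
      obtain ⟨hle, heq⟩ := (good_forestPoly j).2 (topF F0) h0
      exact hjne (topF_inj (heq (le_antisymm hle hmax)).symm)
  · rw [eq_top_iff]
    rintro P -
    have hmono : ∀ (d : ℕ) (μ : ℕ+ →₀ ℕ), Φ μ ≤ d →
        (MvPolynomial.monomial μ) (1 : ℤ) ∈ Submodule.span ℤ (Set.range forestPoly) := by
      intro d
      induction d using Nat.strong_induction_on with
      | _ d ihd =>
      intro μ hμ
      obtain ⟨F, hF, -⟩ := forest_surj (Φ μ) μ 0 (le_refl _)
        (fun i hi => absurd hi (Nat.not_lt_zero i))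
      have hgood := good_forestPoly F
      rw [hF] at hgood
      have hμsupp : μ ∈ (forestPoly F).support :=
        MvPolynomial.mem_support_iff.2 (by rw [hgood.1]; exact one_ne_zero)
      have hsplit : (MvPolynomial.monomial μ) (1 : ℤ)
          = forestPoly F -
            ∑ ν ∈ (forestPoly F).support.erase μ,
              (MvPolynomial.monomial ν) ((forestPoly F).coeff ν) := by
        have h1 : ∑ ν ∈ (forestPoly F).support,
            (MvPolynomial.monomial ν) ((forestPoly F).coeff ν) = forestPoly F :=
          MvPolynomial.support_sum_monomial_coeff _
        have h2 := Finset.add_sum_erase _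
          (fun ν => (MvPolynomial.monomial ν) ((forestPoly F).coeff ν)) hμsupp
        beta_reduce at h2
        rw [hgood.1] at h2
        exact eq_sub_of_add_eq (h2.trans h1)
      rw [hsplit]
      apply Submodule.sub_mem
      · exact Submodule.subset_span ⟨F, rfl⟩
      · apply Submodule.sum_mem
        intro ν hν
        have hνne : ν ≠ μ := Finset.ne_of_mem_erase hν
        have hν0 : (forestPoly F).coeff ν ≠ 0 :=
          MvPolynomial.mem_support_iff.1 (Finset.mem_of_mem_erase hν)
        obtain ⟨hle, heq⟩ := hgood.2 ν hν0
        have hlt : Φ ν < Φ μ := lt_of_le_of_ne hle (fun h => hνne (heq h))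
        have hmem := ihd (Φ ν) (by omega) ν (le_refl _)
        have he : (MvPolynomial.monomial ν) ((forestPoly F).coeff ν)
            = ((forestPoly F).coeff ν) • (MvPolynomial.monomial ν) (1 : ℤ) := by
          rw [MvPolynomial.smul_monomial, smul_eq_mul, mul_one]
        rw [he]
        exact Submodule.smul_mem _ _ hmem
    have h1 : ∑ ν ∈ P.support, (MvPolynomial.monomial ν) (P.coeff ν) = P :=
      MvPolynomial.support_sum_monomial_coeff P
    rw [← h1]
    apply Submodule.sum_mem
    intro ν _
    have he : (MvPolynomial.monomial ν) (P.coeff ν)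
        = (P.coeff ν) • (MvPolynomial.monomial ν) (1 : ℤ) := by
      rw [MvPolynomial.smul_monomial, smul_eq_mul, mul_one]
    rw [he]
    exact Submodule.smul_mem _ _ (hmono (Φ ν) ν (le_refl _))
end

section
/- The family of formal power series {F_α(x_−)·x^c}, indexed by pairs consisting of a composition α and an ℕ-vector c, is linearly independent over ℚ: if u is a finitely supported ℚ-valued function on such pairs and Σ_{α,c} u_{α,c}·F_α(x_−)·x^c = 0, then u_{α,c} = 0 for all α and c. -/
/-- The fundamental quasisymmetric series `F_{r,S}(x_I)` in the variables `(x_i)_{i ∈ I}`,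
`I ⊆ ℤ`: the sum of `x_{i₁}⋯x_{i_r}` over sequences `i₁ ≤ ⋯ ≤ i_r` in `I` with
`i_j < i_{j+1}` whenever `j ∈ S`, as a formal power series given coefficientwise. -/
noncomputable def FqrS (r : ℕ) (S : Set ℕ) (I : Set ℤ) : MvPowerSeries ℤ ℚ :=
  fun m => (Nat.card {g : Fin r → ℤ // (∀ j, g j ∈ I) ∧ Monotone g ∧
    (∀ j k : Fin r, (k : ℕ) = (j : ℕ) + 1 → ((j : ℕ) + 1) ∈ S → g j < g k) ∧
    (∑ j, Finsupp.single (g j) 1) = m} : ℚ)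

/-- The subset `S(α) = {α₁, α₁+α₂, …, α₁+⋯+α_{ℓ−1}}` of `{1,…,|α|−1}` attached to a
composition `α`. -/
def compS (α : List ℕ+) : Set ℕ :=
  {s | ∃ k : ℕ, 0 < k ∧ k < α.length ∧ s = ((α.take k).map (fun a => (a : ℕ))).sum}

/-- The fundamental quasisymmetric series `F_α(x_I)` of a composition `α`. -/
noncomputable def Fcomp (α : List ℕ+) (I : Set ℤ) : MvPowerSeries ℤ ℚ :=
  FqrS ((α.map (fun a => (a : ℕ))).sum) (compS α) I

namespace FLinAux

open Finset

/-! ### degree of an ℕ-vector -/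

def deg (m : ℤ →₀ ℕ) : ℕ := m.sum fun _ n => n

lemma deg_add (m n : ℤ →₀ ℕ) : deg (m + n) = deg m + deg n :=
  Finsupp.sum_add_index' (fun _ => rfl) (fun _ _ _ => rfl)

lemma deg_single (x : ℤ) (n : ℕ) : deg (Finsupp.single x n) = n :=
  Finsupp.sum_single_index rfl

lemma deg_zero : deg 0 = 0 := rfl

lemma deg_sum {ι : Type*} (s : Finset ι) (f : ι → (ℤ →₀ ℕ)) :
    deg (∑ j ∈ s, f j) = ∑ j ∈ s, deg (f j) := by
  classical
  induction s using Finset.induction with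
  | empty => simp [deg_zero]
  | insert _ _ h ih => rw [Finset.sum_insert h, Finset.sum_insert h, deg_add, ih]

/-! ### fiber counts -/

lemma sum_single_apply {r : ℕ} (g : Fin r → ℤ) (v : ℤ) :
    (∑ j, Finsupp.single (g j) 1) v = (univ.filter fun j => g j = v).card := by
  classical
  rw [Finsupp.finset_sum_apply, Finset.card_filter]
  refine Finset.sum_congr rfl fun j _ => ?_
  rw [Finsupp.single_apply]

/-! ### a monotone function `Fin r → ℤ` is determined by its fibers -/

lemma downclosed_mem_iff {r : ℕ} (s : Finset (Fin r))
    (hs : ∀ a b : Fin r, a ≤ b → b ∈ s → a ∈ s) (j : Fin r) :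
    j ∈ s ↔ (j : ℕ) < s.card := by
  constructor
  · intro hj
    have h1 : Finset.Iic j ⊆ s := fun a ha => hs a j (Finset.mem_Iic.1 ha) hj
    have h2 := Finset.card_le_card h1
    rw [Fin.card_Iic] at h2
    omega
  · intro hj
    by_contra hj'
    have h1 : s ⊆ Finset.Iio j := by
      intro a ha
      rw [Finset.mem_Iio]
      by_contra h2
      exact hj' (hs j a (not_lt.1 h2) ha)
    have h2 := Finset.card_le_card h1
    rw [Fin.card_Iio] at h2
    omega

lemma monotone_eq_of_fibers {r : ℕ} (g g' : Fin r → ℤ) (hg : Monotone g) (hg' : Monotone g')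
    (h : ∀ v : ℤ, (univ.filter fun j => g j = v).card = (univ.filter fun j => g' j = v).card) :
    g = g' := by
  classical
  set T : Finset ℤ := (univ.image g) ∪ (univ.image g') with hT
  have key : ∀ f : Fin r → ℤ, (∀ j, f j ∈ T) →
      ∀ v : ℤ, (univ.filter fun j => f j ≤ v) =
        (T.filter (· ≤ v)).biUnion (fun i => univ.filter fun j => f j = i) := by
    intro f hfT v
    ext j
    simp only [Finset.mem_filter, Finset.mem_biUnion, Finset.mem_univ, true_and]
    constructor
    · intro hj; exact ⟨f j, ⟨hfT j, hj⟩, rfl⟩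
    · rintro ⟨i, ⟨_, hi⟩, rfl⟩; exact hi
  have hcard : ∀ f : Fin r → ℤ, (∀ j, f j ∈ T) → ∀ v : ℤ,
      (univ.filter fun j => f j ≤ v).card =
        ∑ i ∈ T.filter (· ≤ v), (univ.filter fun j => f j = i).card := by
    intro f hfT v
    rw [key f hfT v]
    apply Finset.card_biUnion
    intro x _ y _ hxy
    rw [Function.onFun, Finset.disjoint_left]
    intro a ha ha'
    exact hxy ((Finset.mem_filter.1 ha).2.symm.trans (Finset.mem_filter.1 ha').2)
  have hgT : ∀ j, g j ∈ T := fun j => Finset.mem_union_left _ (Finset.mem_image_of_mem g (mem_univ j))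
  have hg'T : ∀ j, g' j ∈ T := fun j => Finset.mem_union_right _ (Finset.mem_image_of_mem g' (mem_univ j))
  have hN : ∀ v : ℤ, (univ.filter fun j => g j ≤ v).card = (univ.filter fun j => g' j ≤ v).card := by
    intro v
    rw [hcard g hgT v, hcard g' hg'T v]
    exact Finset.sum_congr rfl fun i _ => h i
  have hiff : ∀ (j : Fin r) (v : ℤ), g j ≤ v ↔ g' j ≤ v := by
    intro j v
    have d1 : j ∈ (univ.filter fun j => g j ≤ v) ↔ (j : ℕ) < (univ.filter fun j => g j ≤ v).card :=
      downclosed_mem_iff _ (fun a b hab hb => by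
        simp only [Finset.mem_filter, Finset.mem_univ, true_and] at *
        exact le_trans (hg hab) hb) j
    have d2 : j ∈ (univ.filter fun j => g' j ≤ v) ↔ (j : ℕ) < (univ.filter fun j => g' j ≤ v).card :=
      downclosed_mem_iff _ (fun a b hab hb => by
        simp only [Finset.mem_filter, Finset.mem_univ, true_and] at *
        exact le_trans (hg' hab) hb) j
    simp only [Finset.mem_filter, Finset.mem_univ, true_and] at d1 d2
    rw [d1, hN v, ← d2]
  funext j
  exact le_antisymm ((hiff j (g' j)).2 le_rfl) ((hiff j (g j)).1 le_rfl)

lemma weird_eq (l : List ℕ+) : (l.map (fun a => (a : ℕ))) = l.map PNat.val := by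
  induction l with
  | nil => rfl
  | cons a t ih => simpa using ih

/-! ### partial sums of a composition -/

def psum (α : List ℕ+) (k : ℕ) : ℕ := ((α.map PNat.val).take k).sum

def rsum (α : List ℕ+) : ℕ := (α.map PNat.val).sum

lemma psum_zero (α : List ℕ+) : psum α 0 = 0 := rfl

lemma psum_succ (α : List ℕ+) (k : ℕ) (hk : k < α.length) :
    psum α (k + 1) = psum α k + (α.get ⟨k, hk⟩ : ℕ) := by
  rw [psum, psum, List.sum_take_succ _ _ (by simpa using hk)]
  simp

lemma psum_length (α : List ℕ+) : psum α α.length = rsum α := by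
  rw [psum, rsum, ← List.length_map (as := α) PNat.val, List.take_length]

lemma psum_mono (α : List ℕ+) : Monotone (psum α) := by
  apply monotone_nat_of_le_succ
  intro k
  by_cases hk : k < α.length
  · rw [psum_succ α k hk]; exact Nat.le_add_right _ _
  · rw [psum, psum, List.take_of_length_le (by simpa using by omega : (α.map PNat.val).length ≤ k),
      List.take_of_length_le (by simpa using by omega : (α.map PNat.val).length ≤ k + 1)]

lemma psum_strict (α : List ℕ+) {k k' : ℕ} (h : k < k') (h' : k' ≤ α.length) :
    psum α k < psum α k' := by
  have hk : k < α.length := lt_of_lt_of_le h h'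
  calc psum α k < psum α (k + 1) := by
        rw [psum_succ α k hk]
        have h2 : 0 < (α.get ⟨k, hk⟩ : ℕ) := (α.get ⟨k, hk⟩).2
        omega
    _ ≤ psum α k' := psum_mono α h

lemma psum_ge (α : List ℕ+) (k : ℕ) (hk : k ≤ α.length) : k ≤ psum α k := by
  induction k with
  | zero => simp
  | succ n ih =>
    rw [psum_succ α n (by omega)]
    have h2 : 0 < (α.get ⟨n, by omega⟩ : ℕ) := (α.get ⟨n, by omega⟩).2
    have := ih (by omega)
    omega

lemma mem_compS (α : List ℕ+) (s : ℕ) :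
    s ∈ compS α ↔ ∃ k : ℕ, 0 < k ∧ k < α.length ∧ s = psum α k := by
  unfold compS psum
  constructor
  · rintro ⟨k, h1, h2, rfl⟩
    exact ⟨k, h1, h2, by rw [← List.map_take, weird_eq]⟩
  · rintro ⟨k, h1, h2, rfl⟩
    exact ⟨k, h1, h2, by rw [← List.map_take, weird_eq]⟩

lemma compS_bounds (α : List ℕ+) (s : ℕ) (hs : s ∈ compS α) : 1 ≤ s ∧ s < rsum α := by
  obtain ⟨k, hk0, hkl, rfl⟩ := (mem_compS α s).1 hs
  constructor
  · exact le_trans hk0 (psum_ge α k (le_of_lt hkl))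
  · rw [← psum_length]
    exact psum_strict α hkl le_rfl

/-! ### the finset version of `compS` -/

def SfinS (α : List ℕ+) : Finset ℕ := (Finset.Ico 1 α.length).image (psum α)

lemma mem_SfinS (α : List ℕ+) (s : ℕ) : s ∈ SfinS α ↔ s ∈ compS α := by
  rw [mem_compS]
  simp only [SfinS, Finset.mem_image, Finset.mem_Ico]
  constructor
  · rintro ⟨k, ⟨h1, h2⟩, rfl⟩; exact ⟨k, h1, h2, rfl⟩
  · rintro ⟨k, h1, h2, rfl⟩; exact ⟨k, ⟨h1, h2⟩, rfl⟩

lemma card_SfinS (α : List ℕ+) : (SfinS α).card = α.length - 1 := by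
  rw [SfinS, Finset.card_image_of_injOn, Nat.card_Ico]
  intro k hk k' hk' hkk'
  simp only [Finset.coe_Ico, Set.mem_Ico] at hk hk'
  by_contra hne
  rcases Nat.lt_or_ge k k' with h | h
  · exact absurd hkk' (Nat.ne_of_lt (psum_strict α h (le_of_lt hk'.2)))
  · have h2 : k' < k := by omega
    exact absurd hkk'.symm (Nat.ne_of_lt (psum_strict α h2 (le_of_lt hk.2)))

lemma rsum_eq_zero (α : List ℕ+) (h : rsum α = 0) : α = [] := by
  cases α with
  | nil => rfl
  | cons a t =>
    exfalso
    have h2 : 0 < (a : ℕ) := a.2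
    simp only [rsum, List.map_cons, List.sum_cons] at h
    omega

/-- a composition is determined by its length, its size and its descent set -/
lemma comp_eq_of (α β : List ℕ+) (hsum : rsum β = rsum α) (hS : SfinS β = SfinS α)
    (hlen : β.length = α.length) : β = α := by
  set ℓ := α.length with hℓ
  have hcard : (SfinS α).card = ℓ - 1 := card_SfinS α
  have hpsum : ∀ k ≤ ℓ, psum β k = psum α k := by
    intro k hk
    rcases Nat.eq_zero_or_pos k with rfl | hk0
    · rw [psum_zero, psum_zero]
    rcases eq_or_lt_of_le hk with rfl | hkℓ
    · calc psum β ℓ = rsum β := by rw [← hlen, psum_length]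
        _ = rsum α := hsum
        _ = psum α ℓ := by rw [hℓ, psum_length]
    have hℓ1 : 1 ≤ ℓ := by omega
    set F : Fin (ℓ - 1) → ℕ := fun j => psum α (j + 1) with hF
    set G : Fin (ℓ - 1) → ℕ := fun j => psum β (j + 1) with hG
    have hFmono : StrictMono F := by
      intro a b hab
      exact psum_strict α (by omega) (by omega)
    have hGmono : StrictMono G := by
      intro a b hab
      exact psum_strict β (by omega) (by rw [hlen]; omega)
    have hFmem : ∀ j, F j ∈ SfinS α := by
      intro j
      exact Finset.mem_image.2 ⟨j + 1, Finset.mem_Ico.2 ⟨by omega, by omega⟩, rfl⟩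
    have hGmem : ∀ j, G j ∈ SfinS α := by
      intro j
      rw [← hS]
      exact Finset.mem_image.2 ⟨j + 1, Finset.mem_Ico.2 ⟨by omega, by rw [hlen]; omega⟩, rfl⟩
    have h1 := Finset.orderEmbOfFin_unique hcard hFmem hFmono
    have h2 := Finset.orderEmbOfFin_unique hcard hGmem hGmono
    have hj : k - 1 < ℓ - 1 := by omega
    have h3 := (congrFun h2 ⟨k - 1, hj⟩).trans (congrFun h1 ⟨k - 1, hj⟩).symm
    simp only [hF, hG] at h3
    have hk1 : k - 1 + 1 = k := by omega
    rwa [hk1] at h3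
  apply List.ext_get hlen
  intro n h1 h2
  have e1 : (β.get ⟨n, h1⟩ : ℕ) = psum β (n + 1) - psum β n := by
    rw [psum_succ β n h1]; omega
  have e2 : (α.get ⟨n, h2⟩ : ℕ) = psum α (n + 1) - psum α n := by
    rw [psum_succ α n h2]; omega
  have h3 : (β.get ⟨n, h1⟩ : ℕ) = (α.get ⟨n, h2⟩ : ℕ) := by
    rw [e1, e2, hpsum n (by omega), hpsum (n + 1) (by rw [hlen] at h1; omega)]
  exact PNat.coe_injective h3

lemma rsum_eq (l : List ℕ+) : (l.map (fun a => (a : ℕ))).sum = rsum l := by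
  rw [weird_eq]; rfl

lemma deg_eq_zero (m : ℤ →₀ ℕ) (h : deg m = 0) : m = 0 := by
  ext x
  by_cases hx : x ∈ m.support
  · have h2 : m x ≤ ∑ a ∈ m.support, m a :=
      Finset.single_le_sum (fun i _ => Nat.zero_le (m i)) hx
    have h3 : deg m = ∑ a ∈ m.support, m a := rfl
    simp only [Finsupp.coe_zero, Pi.zero_apply]
    omega
  · simp [Finsupp.notMem_support_iff.1 hx]

lemma FqrS_coeff (r : ℕ) (S : Set ℕ) (I : Set ℤ) (d : ℤ →₀ ℕ) :
    MvPowerSeries.coeff d (FqrS r S I) = (Nat.card {g : Fin r → ℤ // (∀ j, g j ∈ I) ∧ Monotone g ∧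
      (∀ j k : Fin r, (k : ℕ) = (j : ℕ) + 1 → ((j : ℕ) + 1) ∈ S → g j < g k) ∧
      (∑ j, Finsupp.single (g j) 1) = d} : ℚ) := rfl

lemma sum_get (α : List ℕ+) : ∑ k : Fin α.length, (α.get k : ℕ) = rsum α := by
  rw [rsum, ← Fin.sum_univ_fun_getElem α PNat.val]
  rfl

open scoped Classical in
lemma coeff_FqrS (α : List ℕ+) (i : Fin α.length → ℤ) (hi : StrictMono i)
    (hi0 : ∀ k, i k ≤ 0) (r : ℕ) (S : Set ℕ) :
    MvPowerSeries.coeff (∑ k, Finsupp.single (i k) (α.get k : ℕ)) (FqrS r S {x : ℤ | x ≤ 0}) =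
      if r = rsum α ∧ (∀ s ∈ S, 1 ≤ s → s < r → s ∈ compS α) then 1 else 0 := by
  classical
  set test : ℤ →₀ ℕ := ∑ k, Finsupp.single (i k) (α.get k : ℕ) with htest
  rw [FqrS_coeff]
  have hdeg : deg test = rsum α := by
    rw [htest, deg_sum, Finset.sum_congr rfl (fun k _ => deg_single _ _), sum_get]
  have hdegg : ∀ g : Fin r → ℤ, deg (∑ j, Finsupp.single (g j) 1) = r := by
    intro g
    rw [deg_sum, Finset.sum_congr rfl (fun j _ => deg_single _ _), Finset.sum_const,
      smul_eq_mul, mul_one, Finset.card_univ, Fintype.card_fin]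
  by_cases hr : r = rsum α
  swap
  · rw [if_neg (fun hcon => hr hcon.1)]
    have hemp : IsEmpty {g : Fin r → ℤ // (∀ j, g j ∈ {x : ℤ | x ≤ 0}) ∧ Monotone g ∧
        (∀ j k : Fin r, (k : ℕ) = (j : ℕ) + 1 → ((j : ℕ) + 1) ∈ S → g j < g k) ∧
        (∑ j, Finsupp.single (g j) 1) = test} := by
      refine ⟨fun ⟨g, _, _, _, hg4⟩ => hr ?_⟩
      rw [← hdegg g, hg4, hdeg]
    rw [Nat.card_of_isEmpty]
    norm_num
  have hsub : ∀ g g' : {g : Fin r → ℤ // (∀ j, g j ∈ {x : ℤ | x ≤ 0}) ∧ Monotone g ∧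
      (∀ j k : Fin r, (k : ℕ) = (j : ℕ) + 1 → ((j : ℕ) + 1) ∈ S → g j < g k) ∧
      (∑ j, Finsupp.single (g j) 1) = test}, g = g' := by
    rintro ⟨g, _, hg2, _, hg4⟩ ⟨g', _, hg2', _, hg4'⟩
    exact Subtype.ext (monotone_eq_of_fibers g g' hg2 hg2' (fun v => by
      rw [← sum_single_apply, ← sum_single_apply, hg4, hg4']))
  by_cases hr0 : r = 0
  · subst hr0
    have htest0 : test = 0 := deg_eq_zero test (by rw [hdeg, ← hr])
    have hne : Nonempty {g : Fin 0 → ℤ // (∀ j, g j ∈ {x : ℤ | x ≤ 0}) ∧ Monotone g ∧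
        (∀ j k : Fin 0, (k : ℕ) = (j : ℕ) + 1 → ((j : ℕ) + 1) ∈ S → g j < g k) ∧
        (∑ j, Finsupp.single (g j) 1) = test} := by
      refine ⟨⟨Fin.elim0, fun j => j.elim0, by intro a b _; exact a.elim0,
        fun j k => j.elim0, ?_⟩⟩
      rw [htest0]
      simp
    rw [Nat.card_eq_one_iff_unique.2 ⟨⟨hsub⟩, hne⟩]
    rw [if_pos ⟨hr, fun s _ _ hlt => absurd hlt (by omega)⟩]
    norm_num
  -- main case
  have hℓ0 : 0 < α.length := by
    by_contra hc
    have hnil : α = [] := List.length_eq_zero_iff.1 (by omega)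
    rw [hnil] at hr
    exact hr0 (by simpa [rsum] using hr)
  set b : ℕ → ℕ := fun t => Nat.findGreatest (fun k => psum α k ≤ t) (α.length - 1) with hbdef
  have hb_le : ∀ t, b t ≤ α.length - 1 := fun t => Nat.findGreatest_le _
  have hb_spec : ∀ t, psum α (b t) ≤ t := by
    intro t
    have h0 : (fun k => psum α k ≤ t) 0 := by show psum α 0 ≤ t; rw [psum_zero]; exact Nat.zero_le t
    exact Nat.findGreatest_spec (P := fun k => psum α k ≤ t) (Nat.zero_le _) h0
  have hb_ge : ∀ t k, k ≤ α.length - 1 → psum α k ≤ t → k ≤ b t := fun t k hk h =>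
    Nat.le_findGreatest (P := fun k => psum α k ≤ t) hk h
  have hb_lt : ∀ t, t < r → t < psum α (b t + 1) := by
    intro t ht
    rcases eq_or_lt_of_le (hb_le t) with he | hlt
    · rw [he, show α.length - 1 + 1 = α.length from by omega, psum_length]
      omega
    · by_contra hc
      push_neg at hc
      have := hb_ge t (b t + 1) (by omega) hc
      omega
  have hb_mono : ∀ t t', t ≤ t' → b t ≤ b t' := fun t t' h =>
    hb_ge t' (b t) (hb_le t) (le_trans (hb_spec t) h)
  have hbt : ∀ t : Fin r, b t.1 < α.length := fun t => by have := hb_le t.1; omega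
  set g₀ : Fin r → ℤ := fun t => i ⟨b t.1, hbt t⟩ with hg₀
  have hg₀mono : Monotone g₀ := by
    intro t t' htt'
    exact hi.monotone (Fin.mk_le_mk.2 (hb_mono _ _ htt'))
  have hfibcard : ∀ k : Fin α.length, (univ.filter fun t : Fin r => b t.1 = k.1).card = (α.get k : ℕ) := by
    intro k
    have hk1 : k.1 + 1 ≤ α.length := k.isLt
    have hle : psum α (k.1 + 1) ≤ r := by
      rw [hr, ← psum_length]; exact psum_mono α hk1
    have hset : (univ.filter fun t : Fin r => b t.1 = k.1) =
        (Finset.Ico (psum α k.1) (psum α (k.1 + 1))).attachFin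
          (fun m hm => lt_of_lt_of_le (Finset.mem_Ico.1 hm).2 hle) := by
      ext t
      simp only [Finset.mem_filter, Finset.mem_univ, true_and, Finset.mem_attachFin,
        Finset.mem_Ico]
      constructor
      · intro he
        exact ⟨by rw [← he]; exact hb_spec t.1, by rw [← he]; exact hb_lt t.1 t.isLt⟩
      · rintro ⟨h1, h2⟩
        have hk_le : k.1 ≤ α.length - 1 := by have := k.isLt; omega
        have h3 := hb_ge t.1 k.1 hk_le h1
        by_contra hne
        have h4 : k.1 + 1 ≤ b t.1 := by omega
        have h5 := psum_mono α h4
        have h6 := hb_spec t.1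
        omega
    rw [hset, Finset.card_attachFin, Nat.card_Ico]
    have h7 := psum_succ α k.1 k.isLt
    rw [Fin.eta] at h7
    omega
  have hg₀sum : (∑ t, Finsupp.single (g₀ t) 1) = test := by
    ext v
    rw [sum_single_apply, htest, Finsupp.finset_sum_apply]
    by_cases hv : ∃ k : Fin α.length, i k = v
    · obtain ⟨k₀, hk₀⟩ := hv
      have hterm : ∀ k : Fin α.length, (Finsupp.single (i k) (α.get k : ℕ)) v
          = if k = k₀ then (α.get k : ℕ) else 0 := by
        intro k
        rw [Finsupp.single_apply]
        by_cases he : k = k₀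
        · rw [if_pos (he ▸ hk₀), if_pos he]
        · rw [if_neg (fun hc => he (hi.injective (hc.trans hk₀.symm))), if_neg he]
      rw [Finset.sum_congr rfl (fun k _ => hterm k), Finset.sum_ite_eq' univ k₀,
        if_pos (mem_univ _), ← hfibcard k₀]
      congr 1
      ext t
      simp only [Finset.mem_filter, mem_univ, true_and]
      constructor
      · intro hgt
        exact congrArg Fin.val (hi.injective (hgt.trans hk₀.symm))
      · intro hbt'
        show i ⟨b t.1, hbt t⟩ = v
        rw [show (⟨b t.1, hbt t⟩ : Fin α.length) = k₀ from Fin.ext hbt']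
        exact hk₀
    · push_neg at hv
      rw [Finset.sum_eq_zero (fun k _ => by rw [Finsupp.single_apply, if_neg (hv k)]),
        show (univ.filter fun t : Fin r => g₀ t = v) = ∅ from
          Finset.filter_eq_empty_iff.2 (fun t _ => hv ⟨b t.1, hbt t⟩),
        Finset.card_empty]
  by_cases hC : ∀ s ∈ S, 1 ≤ s → s < r → s ∈ compS α
  · rw [if_pos ⟨hr, hC⟩]
    have hg₀strict : ∀ j k : Fin r, (k : ℕ) = (j : ℕ) + 1 → ((j : ℕ) + 1) ∈ S →
        g₀ j < g₀ k := by
      intro j k hjk hjS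
      obtain ⟨k', hk'0, hk'ℓ, hs⟩ := (mem_compS α _).1
        (hC _ hjS (by omega) (by rw [← hjk]; exact k.isLt))
      refine hi (Fin.mk_lt_mk.2 ?_)
      have h1 : k' ≤ b k.1 := hb_ge k.1 k' (by omega) (by omega)
      have h2 : b j.1 < k' := by
        by_contra hc
        have h3 := psum_mono α (not_lt.1 hc)
        have h4 := hb_spec j.1
        omega
      omega
    have hne : Nonempty {g : Fin r → ℤ // (∀ j, g j ∈ {x : ℤ | x ≤ 0}) ∧ Monotone g ∧
        (∀ j k : Fin r, (k : ℕ) = (j : ℕ) + 1 → ((j : ℕ) + 1) ∈ S → g j < g k) ∧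
        (∑ j, Finsupp.single (g j) 1) = test} :=
      ⟨⟨g₀, fun j => hi0 _, hg₀mono, hg₀strict, hg₀sum⟩⟩
    rw [Nat.card_eq_one_iff_unique.2 ⟨⟨hsub⟩, hne⟩]
    norm_num
  · rw [if_neg (fun hcon => hC hcon.2)]
    have hemp : IsEmpty {g : Fin r → ℤ // (∀ j, g j ∈ {x : ℤ | x ≤ 0}) ∧ Monotone g ∧
        (∀ j k : Fin r, (k : ℕ) = (j : ℕ) + 1 → ((j : ℕ) + 1) ∈ S → g j < g k) ∧
        (∑ j, Finsupp.single (g j) 1) = test} := by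
      refine ⟨fun ⟨g, hg1, hg2, hg3, hg4⟩ => ?_⟩
      have hgg₀ : g = g₀ := monotone_eq_of_fibers g g₀ hg2 hg₀mono (fun v => by
        rw [← sum_single_apply, ← sum_single_apply, hg4, hg₀sum])
      push_neg at hC
      obtain ⟨s, hsS, hs1, hsr, hsn⟩ := hC
      have hj : s - 1 < r := by omega
      have hlt := hg3 ⟨s - 1, hj⟩ ⟨s, hsr⟩ (by show s = s - 1 + 1; omega)
        (by show s - 1 + 1 ∈ S; rw [show s - 1 + 1 = s from by omega]; exact hsS)
      rw [hgg₀] at hlt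
      have hbb : b (s - 1) < b s := Fin.mk_lt_mk.1 (hi.lt_iff_lt.1 hlt)
      have h5 := hb_spec s
      have h6 : ¬ psum α (b s) ≤ s - 1 := by
        intro hc
        have := hb_ge (s - 1) (b s) (hb_le s) hc
        omega
      have h7 : psum α (b s) = s := by omega
      have h8 : 0 < b s := by
        by_contra hc
        have h9 : b s = 0 := by omega
        rw [h9, psum_zero] at h7
        omega
      exact hsn ((mem_compS α s).2 ⟨b s, h8, by have := hb_le s; omega, h7.symm⟩)
    rw [Nat.card_of_isEmpty]
    norm_num

end FLinAux

open FLinAux in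
/-- **Linear independence of the family `F_α(x_−)·x^c`**: if `u` is a finitely supported
`ℚ`-valued function on pairs `(α, c)` of a composition `α` and an `ℕ`-vector `c` with
`∑_{α,c} u_{α,c}·F_α(x_−)·x^c = 0`, then `u = 0`. -/
theorem F_mul_monomial_linearIndependent
    (u : (List ℕ+ × (ℤ →₀ ℕ)) →₀ ℚ)
    (h : ∑ p ∈ u.support,
        u p • (Fcomp p.1 {i : ℤ | i ≤ 0} * MvPowerSeries.monomial (R := ℚ) p.2 1) = 0) :
    u = 0 := by
  classical
  by_contra hu
  have hsupp : u.support.Nonempty := Finsupp.support_nonempty_iff.2 hu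
  obtain ⟨c, hcC, hcmin⟩ := (u.support.image Prod.snd).exists_minimal (hsupp.image _)
  have hAne : ((u.support.filter fun p => p.2 = c).image Prod.fst).Nonempty := by
    obtain ⟨p, hp, hpc⟩ := Finset.mem_image.1 hcC
    exact ⟨p.1, Finset.mem_image.2 ⟨p, Finset.mem_filter.2 ⟨hp, hpc⟩, rfl⟩⟩
  obtain ⟨α, hαA, hαmin⟩ := Finset.exists_min_image _ (fun β => β.length) hAne
  have hαc : (α, c) ∈ u.support := by
    obtain ⟨q, hq, hq1⟩ := Finset.mem_image.1 hαA
    have hq2 := Finset.mem_filter.1 hq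
    have heq : q = (α, c) := Prod.ext hq1 hq2.2
    rw [heq] at hq2
    exact hq2.1
  -- choose the base point N, far to the left of all supports
  set D : Finset ℤ := (u.support.image Prod.snd).biUnion Finsupp.support with hD
  set N : ℤ := (insert (0 : ℤ) D).min' (Finset.insert_nonempty _ _) - 1 with hN
  have hN0 : N ≤ 0 := by
    have := Finset.min'_le (insert (0 : ℤ) D) 0 (Finset.mem_insert_self _ _)
    omega
  have hND : ∀ x ∈ D, N < x := by
    intro x hx
    have := Finset.min'_le (insert (0 : ℤ) D) x (Finset.mem_insert_of_mem hx)
    omega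
  -- the strictly increasing variables
  set i : Fin α.length → ℤ := fun k => N - (α.length : ℤ) + 1 + (k : ℤ) with hidef
  have hiN : ∀ k, i k ≤ N := by
    intro k
    have : (k : ℤ) ≤ (α.length : ℤ) - 1 := by
      have := k.isLt
      omega
    simp only [hidef]
    omega
  have hi : StrictMono i := by
    intro a b hab
    simp only [hidef]
    have : (a : ℤ) < (b : ℤ) := by exact_mod_cast hab
    omega
  have hi0 : ∀ k, i k ≤ 0 := fun k => le_trans (hiN k) hN0
  set test : ℤ →₀ ℕ := ∑ k, Finsupp.single (i k) (α.get k : ℕ) with htest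
  have htestN : ∀ x : ℤ, N < x → test x = 0 := by
    intro x hx
    rw [htest, Finsupp.finset_sum_apply]
    refine Finset.sum_eq_zero fun k _ => ?_
    rw [Finsupp.single_apply, if_neg]
    intro he
    have := hiN k
    omega
  set m : ℤ →₀ ℕ := test + c with hm
  have hcoeff := congrArg (MvPowerSeries.coeff m) h
  rw [map_sum, map_zero] at hcoeff
  have hterm : ∀ p ∈ u.support,
      MvPowerSeries.coeff m (u p • (Fcomp p.1 {i : ℤ | i ≤ 0} *
        MvPowerSeries.monomial (R := ℚ) p.2 1)) = if p = (α, c) then u (α, c) else 0 := by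
    intro p hp
    rw [map_smul, smul_eq_mul, MvPowerSeries.coeff_mul_monomial]
    by_cases hpc : p.2 = c
    · have hcm : p.2 ≤ m := by rw [hpc, hm]; exact le_add_self
      have hsub : m - p.2 = test := by
        rw [hpc, hm]
        ext x
        rw [Finsupp.tsub_apply, Finsupp.add_apply]
        omega
      rw [if_pos hcm, hsub, mul_one]
      have hF : Fcomp p.1 {i : ℤ | i ≤ 0} = FqrS (rsum p.1) (compS p.1) {x : ℤ | x ≤ 0} := by
        unfold Fcomp
        rw [rsum_eq]
      rw [hF, htest, coeff_FqrS α i hi hi0 (rsum p.1) (compS p.1)]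
      by_cases hcond : rsum p.1 = rsum α ∧ compS p.1 ⊆ compS α
      · have hcond' : rsum p.1 = rsum α ∧
            ∀ s ∈ compS p.1, 1 ≤ s → s < rsum p.1 → s ∈ compS α :=
          ⟨hcond.1, fun s hs _ _ => hcond.2 hs⟩
        rw [if_pos hcond']
        have hp1α : p.1 = α := by
          have hlen1 : α.length ≤ p.1.length := hαmin p.1
            (Finset.mem_image.2 ⟨p, Finset.mem_filter.2 ⟨hp, hpc⟩, rfl⟩)
          by_cases hα0 : α.length = 0
          · have hαnil : α = [] := List.length_eq_zero_iff.1 hα0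
            have : rsum p.1 = 0 := by rw [hcond.1, hαnil]; rfl
            rw [rsum_eq_zero p.1 this, hαnil]
          · have hSsub : SfinS p.1 ⊆ SfinS α := fun s hs =>
              (mem_SfinS α s).2 (hcond.2 ((mem_SfinS p.1 s).1 hs))
            have hcards := Finset.card_le_card hSsub
            rw [card_SfinS, card_SfinS] at hcards
            have hlen : p.1.length = α.length := by omega
            have hSeq : SfinS p.1 = SfinS α := Finset.eq_of_subset_of_card_le hSsub
              (by rw [card_SfinS, card_SfinS, hlen])
            exact comp_eq_of α p.1 hcond.1 hSeq hlen
        have hpeq : p = (α, c) := Prod.ext hp1α hpc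
        rw [if_pos hpeq, hpeq, mul_one]
      · have hcond' : ¬(rsum p.1 = rsum α ∧
            ∀ s ∈ compS p.1, 1 ≤ s → s < rsum p.1 → s ∈ compS α) := by
          intro hcon
          exact hcond ⟨hcon.1, fun s hs =>
            hcon.2 s hs (compS_bounds p.1 s hs).1 (compS_bounds p.1 s hs).2⟩
        rw [if_neg hcond', mul_zero, if_neg]
        intro hpeq
        apply hcond
        rw [hpeq]
        exact ⟨rfl, fun s hs => hs⟩
    · have hne : p ≠ (α, c) := fun he => hpc (by rw [he])
      rw [if_neg hne]
      by_cases hle : p.2 ≤ m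
      · exfalso
        have hlec : p.2 ≤ c := by
          rw [Finsupp.le_def]
          intro x
          by_cases hx : x ∈ p.2.support
          · have hxD : x ∈ D := Finset.mem_biUnion.2 ⟨p.2, Finset.mem_image.2 ⟨p, hp, rfl⟩, hx⟩
            have h1 : p.2 x ≤ m x := Finsupp.le_def.1 hle x
            rw [hm, Finsupp.add_apply, htestN x (hND x hxD)] at h1
            simpa using h1
          · rw [Finsupp.notMem_support_iff.1 hx]
            exact Nat.zero_le _
        exact hpc (le_antisymm hlec (hcmin (Finset.mem_image.2 ⟨p, hp, rfl⟩ : p.2 ∈ u.support.image Prod.snd) hlec))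
      · rw [if_neg hle, mul_zero]
  rw [Finset.sum_congr rfl hterm,
    Finset.sum_ite_eq' u.support (α, c) (fun _ => u (α, c)), if_pos hαc] at hcoeff
  exact (Finsupp.mem_support_iff.1 hαc) hcoeff
end

section
/- Let b ∈ ℤ. Every formal power series that is a finite ℚ-linear combination of products F_α(x_{≤b})·m, where α is a composition, F_α(x_{≤b}) is the fundamental quasisymmetric series in the variables (x_i)_{i≤b}, and m is a monomial in the variables (x_i)_{i>b}, is also a finite ℚ-linear combination of the series F_β(x_−)·x^c with β a composition and c an ℕ-vector. -/
open scoped Classical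


/-- strictness condition -/
def StrictAt (t : ℕ) (S : Set ℕ) (g : Fin t → ℤ) : Prop :=
  ∀ j k : Fin t, (k : ℕ) = (j : ℕ) + 1 → ((j : ℕ) + 1) ∈ S → g j < g k

lemma FqrS_coeff (r : ℕ) (S : Set ℕ) (I : Set ℤ) (m : ℤ →₀ ℕ) :
    MvPowerSeries.coeff m (FqrS r S I) = (Nat.card {g : Fin r → ℤ // (∀ j, g j ∈ I) ∧
      Monotone g ∧ StrictAt r S g ∧ (∑ j, Finsupp.single (g j) 1) = m} : ℚ) := rfl

/-- the witness type for a coefficient of `FqrS t S {≤ b} * x_{b+1}^{r-t}`, with the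
emptiness condition folded in -/
def WitC (r t : ℕ) (S : Set ℕ) (b : ℤ) (m : ℤ →₀ ℕ) : Type :=
  {g : Fin t → ℤ // (S ∩ Set.Ioo t r = ∅) ∧ (∀ j, g j ∈ {i : ℤ | i ≤ b}) ∧ Monotone g ∧
    StrictAt t S g ∧ (∑ j, Finsupp.single (g j) 1) + Finsupp.single (b + 1) (r - t) = m}

lemma mem_support_of_sum (t : ℕ) (c m : ℤ →₀ ℕ) (g : Fin t → ℤ)
    (h : (∑ j, Finsupp.single (g j) 1) + c = m) : ∀ j, g j ∈ m.support := by
  intro j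
  rw [Finsupp.mem_support_iff, ← h, Finsupp.add_apply, Finsupp.finset_sum_apply]
  have h1 : (Finsupp.single (g j) 1 : ℤ →₀ ℕ) (g j) = 1 := by simp
  have h2 := Finset.single_le_sum (f := fun j' => (Finsupp.single (g j') 1 : ℤ →₀ ℕ) (g j))
    (fun i _ => Nat.zero_le _) (Finset.mem_univ j)
  simp only [h1] at h2
  omega

lemma finite_witness' (t : ℕ) (m : ℤ →₀ ℕ) (Q : (Fin t → ℤ) → Prop)
    (hQ : ∀ g, Q g → ∀ j, g j ∈ m.support) : Finite {g : Fin t → ℤ // Q g} := by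
  have : Finite (Fin t → m.support) := by infer_instance
  apply Finite.of_injective (f := fun (g : {g : Fin t → ℤ // Q g}) =>
    (fun j => (⟨g.1 j, hQ g.1 g.2 j⟩ : m.support) : Fin t → m.support))
  intro g g' h
  ext j
  exact congrArg Subtype.val (congrFun h j)

instance witC_finite (r t : ℕ) (S : Set ℕ) (b : ℤ) (m : ℤ →₀ ℕ) : Finite (WitC r t S b m) :=
  finite_witness' t m _ (fun g hg => mem_support_of_sum t _ m g hg.2.2.2.2)

lemma natcard_sigma {n : ℕ} (β : Fin n → Type*) [∀ i, Finite (β i)] :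
    Nat.card (Σ i, β i) = ∑ i, Nat.card (β i) := by
  letI : ∀ i, Fintype (β i) := fun i => Fintype.ofFinite _
  simp [Nat.card_eq_fintype_card, Fintype.card_sigma]

/-- the cutoff: the first index where `g` exceeds `b`, or `r` if there is none -/
noncomputable def cut (b : ℤ) {r : ℕ} (g : Fin r → ℤ) : ℕ :=
  Nat.find (p := fun n => n = r ∨ ∃ h : n < r, b < g ⟨n, h⟩) ⟨r, Or.inl rfl⟩

lemma cut_le (b : ℤ) {r : ℕ} (g : Fin r → ℤ) : cut b g ≤ r :=
  Nat.find_min' _ (Or.inl rfl)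

lemma lt_cut_iff (b : ℤ) {r : ℕ} {g : Fin r → ℤ} (hmono : Monotone g) (j : Fin r) :
    (j : ℕ) < cut b g ↔ g j ≤ b := by
  constructor
  · intro h
    have h2 : ¬((j : ℕ) = r ∨ ∃ h : (j : ℕ) < r, b < g ⟨(j : ℕ), h⟩) :=
      Nat.find_min (p := fun n => n = r ∨ ∃ h : n < r, b < g ⟨n, h⟩) ⟨r, Or.inl rfl⟩ h
    rw [not_or, not_exists] at h2
    have h3 := h2.2 j.2
    rw [not_lt] at h3
    simpa using h3
  · intro h
    by_contra hc
    push_neg at hc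
    have hspec : cut b g = r ∨ ∃ h1 : cut b g < r, b < g ⟨cut b g, h1⟩ :=
      Nat.find_spec (p := fun n => n = r ∨ ∃ h : n < r, b < g ⟨n, h⟩) ⟨r, Or.inl rfl⟩
    rcases hspec with h1 | ⟨h1, h2⟩
    · have := j.2; omega
    · have : g ⟨cut b g, h1⟩ ≤ g j := hmono (by simpa [Fin.le_def] using hc)
      omega

lemma nat_eq_of_lt_iff {a c r : ℕ} (ha : a ≤ r) (hc : c ≤ r)
    (h : ∀ j : Fin r, (j : ℕ) < a ↔ (j : ℕ) < c) : a = c := by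
  rcases lt_trichotomy a c with h1 | h1 | h1
  · have := h ⟨a, by omega⟩; simp at this; omega
  · exact h1
  · have := h ⟨c, by omega⟩; simp at this; omega

/-- splitting a sum of singles along a cutoff -/
lemma sum_split {r : ℕ} (t : ℕ) (ht : t ≤ r) (g : Fin r → ℤ) (v : ℤ)
    (hv : ∀ j : Fin r, t ≤ (j : ℕ) → g j = v) :
    (∑ j, Finsupp.single (g j) 1) =
      (∑ j : Fin t, Finsupp.single (g (Fin.castLE ht j)) 1) + Finsupp.single v (r - t) := by
  set e : Fin (t + (r - t)) ≃ Fin r := finCongr (by omega) with he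
  rw [← Equiv.sum_comp e (fun j => Finsupp.single (g j) 1)]
  rw [← Equiv.sum_comp finSumFinEquiv (fun i => Finsupp.single (g (e i)) 1)]
  rw [Fintype.sum_sum_type]
  have h1 : ∀ j : Fin t, g (e (finSumFinEquiv (Sum.inl j))) = g (Fin.castLE ht j) := by
    intro j
    have hj : (e (finSumFinEquiv (Sum.inl j))) = Fin.castLE ht j := by
      ext; simp [he]
    rw [hj]
  have h2 : ∀ j : Fin (r - t), g (e (finSumFinEquiv (Sum.inr j))) = v := by
    intro j
    apply hv
    simp [he]
  simp only [h1, h2]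
  congr 1
  rw [Finset.sum_const, Finset.card_univ, Fintype.card_fin, Finsupp.smul_single]
  simp

lemma card_split (b : ℤ) (r : ℕ) (S : Set ℕ) (m : ℤ →₀ ℕ) :
    Nat.card {g : Fin r → ℤ // (∀ j, g j ∈ {i : ℤ | i ≤ b + 1}) ∧ Monotone g ∧
      StrictAt r S g ∧ (∑ j, Finsupp.single (g j) 1) = m} =
    ∑ t ∈ Finset.range (r + 1), Nat.card (WitC r t S b m) := by
  have equivFiber : ∀ t : Fin (r + 1),
      {x : {g : Fin r → ℤ // (∀ j, g j ∈ {i : ℤ | i ≤ b + 1}) ∧ Monotone g ∧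
        StrictAt r S g ∧ (∑ j, Finsupp.single (g j) 1) = m} // cut b x.1 = (t : ℕ)} ≃
      WitC r (t : ℕ) S b m := by
    intro t
    have ht : (t : ℕ) ≤ r := Nat.lt_succ_iff.mp t.2
    refine ⟨fun x => ⟨fun j => x.1.1 (Fin.castLE ht j), ?_⟩,
            fun y => ⟨⟨fun j => if h : (j : ℕ) < (t : ℕ) then y.1 ⟨j, h⟩ else b + 1, ?_⟩, ?_⟩,
            ?_, ?_⟩
    · -- forward properties
      obtain ⟨⟨g, hI, hmono, hstr, hsum⟩, hcut⟩ := x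
      simp only at hcut ⊢
      have hle : ∀ j : Fin r, (j : ℕ) < (t : ℕ) → g j ≤ b := by
        intro j hj
        exact (lt_cut_iff b hmono j).mp (by omega)
      have hgt : ∀ j : Fin r, (t : ℕ) ≤ (j : ℕ) → g j = b + 1 := by
        intro j hj
        have h1 : ¬ g j ≤ b := by
          rw [← lt_cut_iff b hmono j]; omega
        have h2 : g j ≤ b + 1 := hI j
        omega
      refine ⟨?_, ?_, ?_, ?_, ?_⟩
      · rw [Set.eq_empty_iff_forall_notMem]
        rintro s ⟨hsS, hs1, hs2⟩
        have hj1 : s - 1 < r := by omega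
        have := hstr ⟨s - 1, hj1⟩ ⟨s, hs2⟩ (by simp; omega)
          (by show (s - 1) + 1 ∈ S; rwa [Nat.sub_add_cancel (by omega)])
        have e1 : g ⟨s - 1, hj1⟩ = b + 1 := hgt _ (by simp; omega)
        have e2 : g ⟨s, hs2⟩ = b + 1 := hgt _ (by simp; omega)
        omega
      · intro j
        exact hle _ (by simp [j.2])
      · intro j k hjk
        exact hmono (show _ ≤ _ by simp only [Fin.le_def, Fin.coe_castLE]; exact hjk)
      · intro j k hk hs
        exact hstr _ _ (by simpa using hk) hs
      · exact (sum_split (t : ℕ) ht g (b + 1) hgt).symm.trans hsum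
    · -- backward properties
      obtain ⟨g', hcond, hI', hmono', hstr', hsum'⟩ := y
      simp only
      have hgval : ∀ j : Fin r, (h : (j : ℕ) < (t : ℕ)) →
          (if h : (j : ℕ) < (t : ℕ) then g' ⟨j, h⟩ else b + 1) = g' ⟨j, h⟩ :=
        fun j h => dif_pos h
      refine ⟨?_, ?_, ?_, ?_⟩
      · intro j
        show (if h : (j : ℕ) < (t : ℕ) then g' ⟨j, h⟩ else b + 1) ∈ {i : ℤ | i ≤ b + 1}
        split
        · next h => have := hI' ⟨j, h⟩; simp only [Set.mem_setOf_eq] at this ⊢; omega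
        · simp
      · intro j k hjk
        show (if h : (j : ℕ) < (t : ℕ) then g' ⟨j, h⟩ else b + 1) ≤
          (if h : (k : ℕ) < (t : ℕ) then g' ⟨k, h⟩ else b + 1)
        have hjk' : (j : ℕ) ≤ (k : ℕ) := hjk
        by_cases hj : (j : ℕ) < (t : ℕ) <;> by_cases hk : (k : ℕ) < (t : ℕ)
        · rw [dif_pos hj, dif_pos hk]
          exact hmono' (by simp [Fin.le_def, hjk'])
        · rw [dif_pos hj, dif_neg hk]
          have := hI' ⟨j, hj⟩
          simp only [Set.mem_setOf_eq] at this; omega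
        · omega
        · rw [dif_neg hj, dif_neg hk]
      · intro j k hk hs
        show (if h : (j : ℕ) < (t : ℕ) then g' ⟨j, h⟩ else b + 1) <
          (if h : (k : ℕ) < (t : ℕ) then g' ⟨k, h⟩ else b + 1)
        by_cases hj : (j : ℕ) < (t : ℕ) <;> by_cases hkt : (k : ℕ) < (t : ℕ)
        · rw [dif_pos hj, dif_pos hkt]
          exact hstr' ⟨j, hj⟩ ⟨k, hkt⟩ (by simpa using hk) hs
        · rw [dif_pos hj, dif_neg hkt]
          have := hI' ⟨j, hj⟩
          simp only [Set.mem_setOf_eq] at this; omega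
        · omega
        · exfalso
          have hmem : ((j : ℕ) + 1) ∈ S ∩ Set.Ioo (t : ℕ) r := by
            refine ⟨hs, ?_, ?_⟩ <;> [omega; (have := k.2; omega)]
          rw [hcond] at hmem
          exact hmem
      · -- sum
        set g : Fin r → ℤ := fun j => if h : (j : ℕ) < (t : ℕ) then g' ⟨j, h⟩ else b + 1 with hg
        have hv : ∀ j : Fin r, (t : ℕ) ≤ (j : ℕ) → g j = b + 1 := by
          intro j hj
          rw [hg]
          exact dif_neg (by omega)
        have hpre : ∀ j : Fin (t : ℕ), g (Fin.castLE ht j) = g' j := by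
          intro j
          rw [hg]
          simp only
          rw [dif_pos (by simpa using j.2)]
          exact congrArg g' (Fin.ext rfl)
        rw [sum_split (t : ℕ) ht g (b + 1) hv]
        simp only [hpre]
        exact hsum'
    · -- cut = t
      obtain ⟨g', hcond, hI', hmono', hstr', hsum'⟩ := y
      simp only
      set g : Fin r → ℤ := fun j => if h : (j : ℕ) < (t : ℕ) then g' ⟨j, h⟩ else b + 1 with hg
      have hmono : Monotone g := by
        intro j k hjk
        have hjk' : (j : ℕ) ≤ (k : ℕ) := hjk
        rw [hg]
        simp only
        by_cases hj : (j : ℕ) < (t : ℕ) <;> by_cases hk : (k : ℕ) < (t : ℕ)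
        · rw [dif_pos hj, dif_pos hk]
          exact hmono' (by simp [Fin.le_def, hjk'])
        · rw [dif_pos hj, dif_neg hk]
          have := hI' ⟨j, hj⟩
          simp only [Set.mem_setOf_eq] at this; omega
        · omega
        · rw [dif_neg hj, dif_neg hk]
      apply nat_eq_of_lt_iff (cut_le b g) ht
      intro j
      rw [lt_cut_iff b hmono j]
      constructor
      · intro h
        by_contra hc
        rw [hg] at h
        simp only [dif_neg hc] at h
        omega
      · intro h
        rw [hg]
        simp only [dif_pos h]
        have := hI' ⟨j, h⟩
        simpa using this
    · -- left inverse
      rintro ⟨⟨g, hI, hmono, hstr, hsum⟩, hcut⟩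
      simp only at hcut
      apply Subtype.ext
      apply Subtype.ext
      funext j
      show (if h : (j : ℕ) < (t : ℕ) then g (Fin.castLE ht ⟨(j : ℕ), h⟩) else b + 1) = g j
      split
      · next h => congr 1
      · next h =>
        have h1 : ¬ g j ≤ b := by
          rw [← lt_cut_iff b hmono j]; omega
        have h2 : g j ≤ b + 1 := hI j
        omega
    · -- right inverse
      rintro ⟨g', hprops⟩
      apply Subtype.ext
      funext j
      show (if h : ((Fin.castLE ht j : Fin r) : ℕ) < (t : ℕ) then g' ⟨_, h⟩ else b + 1) = g' j
      rw [dif_pos (by simpa using j.2)]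
      exact congrArg g' (Fin.ext rfl)
  calc Nat.card {g : Fin r → ℤ // (∀ j, g j ∈ {i : ℤ | i ≤ b + 1}) ∧ Monotone g ∧
      StrictAt r S g ∧ (∑ j, Finsupp.single (g j) 1) = m}
      = Nat.card (Σ t : Fin (r + 1), WitC r (t : ℕ) S b m) := by
        apply Nat.card_congr
        refine (Equiv.sigmaFiberEquiv (fun x => (⟨cut b x.1,
          Nat.lt_succ_of_le (cut_le b x.1)⟩ : Fin (r + 1)))).symm.trans ?_
        apply Equiv.sigmaCongrRight
        intro t
        exact (Equiv.subtypeEquivRight (fun x => Fin.ext_iff)).trans (equivFiber t)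
    _ = ∑ t : Fin (r + 1), Nat.card (WitC r (t : ℕ) S b m) := natcard_sigma _
    _ = ∑ t ∈ Finset.range (r + 1), Nat.card (WitC r t S b m) :=
        Fin.sum_univ_eq_sum_range (fun t => Nat.card (WitC r t S b m)) (r + 1)

lemma FqrS_rec (b : ℤ) (r : ℕ) (S : Set ℕ) :
    FqrS r S {i : ℤ | i ≤ b + 1} = ∑ t ∈ Finset.range (r + 1),
      if S ∩ Set.Ioo t r = ∅ then
        FqrS t S {i : ℤ | i ≤ b} * MvPowerSeries.monomial (Finsupp.single (b + 1) (r - t)) 1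
      else 0 := by
  apply MvPowerSeries.ext
  intro m
  rw [map_sum, FqrS_coeff, card_split b r S m]
  have hterm : ∀ t ∈ Finset.range (r + 1), MvPowerSeries.coeff m
      (if S ∩ Set.Ioo t r = ∅ then
        FqrS t S {i : ℤ | i ≤ b} * MvPowerSeries.monomial (Finsupp.single (b + 1) (r - t)) 1
      else 0) = (Nat.card (WitC r t S b m) : ℚ) := by
    intro t _
    by_cases hcond : S ∩ Set.Ioo t r = ∅
    · rw [if_pos hcond, MvPowerSeries.coeff_mul_monomial]
      by_cases hle : Finsupp.single (b + 1) (r - t) ≤ m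
      · rw [if_pos hle, mul_one, FqrS_coeff]
        norm_cast
        apply Nat.card_congr
        apply Equiv.subtypeEquivRight
        intro g
        constructor
        · rintro ⟨h1, h2, h3, h4⟩
          exact ⟨hcond, h1, h2, h3, by rw [h4]; exact tsub_add_cancel_of_le hle⟩
        · rintro ⟨-, h1, h2, h3, h4⟩
          exact ⟨h1, h2, h3, by rw [← h4]; exact (add_tsub_cancel_right _ _).symm⟩
      · rw [if_neg hle]
        have : IsEmpty (WitC r t S b m) :=
          ⟨fun x => hle (x.2.2.2.2.2 ▸ le_add_self)⟩
        rw [Nat.card_of_isEmpty]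
        simp
    · rw [if_neg hcond, map_zero]
      have : IsEmpty (WitC r t S b m) := ⟨fun x => hcond x.2.1⟩
      rw [Nat.card_of_isEmpty]
      simp
  rw [Nat.cast_sum]
  exact (Finset.sum_congr rfl hterm).symm

lemma FqrS_congr (r : ℕ) (S S' : Set ℕ) (I : Set ℤ)
    (h : ∀ s, 0 < s → s < r → (s ∈ S ↔ s ∈ S')) : FqrS r S I = FqrS r S' I := by
  funext m
  unfold FqrS
  congr 1
  apply Nat.card_congr
  apply Equiv.subtypeEquivRight
  intro g
  have key : (∀ j k : Fin r, (k : ℕ) = (j : ℕ) + 1 → ((j : ℕ) + 1) ∈ S → g j < g k) ↔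
      (∀ j k : Fin r, (k : ℕ) = (j : ℕ) + 1 → ((j : ℕ) + 1) ∈ S' → g j < g k) := by
    constructor <;> intro H j k hk hs <;> refine H j k hk ?_
    · exact (h _ (Nat.succ_pos _) (by omega)).mpr hs
    · exact (h _ (Nat.succ_pos _) (by omega)).mp hs
  tauto
lemma compS_append (β : List ℕ+) (hβ : β ≠ []) (p : ℕ+) :
    compS (β ++ [p]) = compS β ∪ {((β.map (fun a => (a : ℕ))).sum)} := by
  have hlen : 0 < β.length := List.length_pos_iff.mpr hβ
  ext s
  simp only [compS, Set.mem_setOf_eq, Set.mem_union, Set.mem_singleton_iff,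
    List.length_append, List.length_singleton]
  constructor
  · rintro ⟨k, hk0, hk, rfl⟩
    have hk' : k ≤ β.length := by omega
    rw [List.take_append_of_le_length hk']
    rcases lt_or_eq_of_le hk' with h | h
    · exact Or.inl ⟨k, hk0, h, rfl⟩
    · subst h
      rw [List.take_length]
      exact Or.inr rfl
  · rintro (⟨k, hk0, hk, rfl⟩ | rfl)
    · exact ⟨k, hk0, by omega, by rw [List.take_append_of_le_length (by omega)]⟩
    · exact ⟨β.length, hlen, by omega, by rw [List.take_append_of_le_length le_rfl, List.take_length]⟩

lemma pnat_sum_append (β : List ℕ+) (p : ℕ+) :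
    ((β ++ [p]).map (fun a => (a : ℕ))).sum = (β.map (fun a => (a : ℕ))).sum + (p : ℕ) := by
  simp

lemma exists_comp_finset (S : Finset ℕ) : ∀ r : ℕ, (∀ s ∈ S, 0 < s ∧ s < r) →
    ∃ α : List ℕ+, ((α.map (fun a => (a : ℕ))).sum = r) ∧ compS α = ↑S := by
  induction S using Finset.strongInduction with
  | _ S ih =>
    intro r hr
    rcases S.eq_empty_or_nonempty with rfl | hne
    · rcases Nat.eq_zero_or_pos r with rfl | hr0
      · exact ⟨[], rfl, by ext s; simp [compS]⟩
      · refine ⟨[Nat.toPNat r hr0], by rfl, ?_⟩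
        ext s; simp [compS]
    · obtain ⟨m, hmS, hmmax⟩ : ∃ m ∈ S, ∀ s ∈ S, s ≤ m :=
        ⟨S.max' hne, S.max'_mem hne, fun s hs => S.le_max' s hs⟩
      obtain ⟨hm0, hmr⟩ := hr m hmS
      obtain ⟨β, hsum, hcomp⟩ := ih (S.erase m) (S.erase_ssubset hmS) m
        (fun s hs => by
          have h1 := hr s (Finset.mem_of_mem_erase hs)
          have h2 : s ≤ m := hmmax s (Finset.mem_of_mem_erase hs)
          have h3 := Finset.ne_of_mem_erase hs
          exact ⟨h1.1, lt_of_le_of_ne h2 h3⟩)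
      have hβ : β ≠ [] := by
        rintro rfl
        simp at hsum; omega
      refine ⟨β ++ [Nat.toPNat (r - m) (by omega)], ?_, ?_⟩
      · rw [pnat_sum_append]
        show (β.map (fun a => (a : ℕ))).sum + (r - m) = r
        omega
      · rw [compS_append β hβ, hsum, hcomp]
        ext s
        simp only [Set.mem_union, Finset.coe_erase, Set.mem_diff, Set.mem_singleton_iff,
          Finset.mem_coe, Set.mem_setOf_eq]
        constructor
        · rintro (⟨h, -⟩ | rfl) <;> [exact h; exact hmS]
        · intro hs
          by_cases h : s = m
          · exact Or.inr h
          · exact Or.inl ⟨hs, h⟩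

lemma exists_comp (r : ℕ) (S : Set ℕ) :
    ∃ α : List ℕ+, ∀ I, FqrS r S I = Fcomp α I := by
  obtain ⟨α, hsum, hcomp⟩ := exists_comp_finset ((Finset.Ioo 0 r).filter (· ∈ S)) r
    (fun s hs => by
      simp only [Finset.mem_filter, Finset.mem_Ioo] at hs
      exact ⟨hs.1.1, hs.1.2⟩)
  refine ⟨α, fun I => ?_⟩
  rw [Fcomp, hsum]
  apply FqrS_congr
  intro s hs0 hsr
  simp [hcomp, Finset.mem_filter, Finset.mem_Ioo, hs0, hsr]

/-- Every finite `ℚ`-linear combination of products `F_α(x_{≤b})·m`, with `α` a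
composition and `m` a monomial in the variables `(x_i)_{i>b}`, is a finite `ℚ`-linear
combination of the series `F_β(x_−)·x^c` with `β` a composition and `c` an `ℕ`-vector. -/
theorem span_F_le_b_le_span_F_neg (b : ℤ) :
    Submodule.span ℚ {s : MvPowerSeries ℤ ℚ | ∃ (α : List ℕ+) (c : ℤ →₀ ℕ),
        (∀ i ∈ c.support, b < i) ∧
        s = Fcomp α {i : ℤ | i ≤ b} * MvPowerSeries.monomial c (1 : ℚ)} ≤
    Submodule.span ℚ {s : MvPowerSeries ℤ ℚ | ∃ (β : List ℕ+) (c : ℤ →₀ ℕ),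
        s = Fcomp β {i : ℤ | i ≤ 0} * MvPowerSeries.monomial c (1 : ℚ)} := by
  set P := Submodule.span ℚ {s : MvPowerSeries ℤ ℚ | ∃ (β : List ℕ+) (c : ℤ →₀ ℕ),
        s = Fcomp β {i : ℤ | i ≤ 0} * MvPowerSeries.monomial c (1 : ℚ)} with hP
  have hmul : ∀ (c : ℤ →₀ ℕ) (f : MvPowerSeries ℤ ℚ), f ∈ P →
      f * MvPowerSeries.monomial c (1 : ℚ) ∈ P := by
    intro c f hf
    refine Submodule.span_induction ?_ ?_ ?_ ?_ hf
    · rintro x ⟨β, c', rfl⟩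
      apply Submodule.subset_span
      refine ⟨β, c' + c, ?_⟩
      rw [mul_assoc, MvPowerSeries.monomial_mul_monomial, one_mul]
    · rw [zero_mul]; exact zero_mem P
    · intro x y _ _ hx hy
      rw [add_mul]; exact add_mem hx hy
    · intro a x _ hx
      rw [smul_mul_assoc]; exact Submodule.smul_mem P a hx
  have hmain : ∀ (b' : ℤ) (r : ℕ) (S : Set ℕ), FqrS r S {i : ℤ | i ≤ b'} ∈ P := by
    intro b'
    induction b' using Int.induction_on with
    | zero =>
      intro r S
      obtain ⟨α, hα⟩ := exists_comp r S
      rw [hα]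
      apply Submodule.subset_span
      refine ⟨α, 0, ?_⟩
      rw [MvPowerSeries.monomial_zero_one, mul_one]
    | succ n ih =>
      intro r S
      rw [FqrS_rec (n : ℤ) r S]
      apply sum_mem
      intro t _
      split
      · exact hmul _ _ (ih t S)
      · exact zero_mem P
    | pred n ih =>
      intro r S
      induction r using Nat.strong_induction_on generalizing S with
      | _ r ihr =>
        have key := FqrS_rec (-(n : ℤ) - 1) r S
        have hset : {i : ℤ | i ≤ -(n : ℤ) - 1 + 1} = {i : ℤ | i ≤ -(n : ℤ)} := by
          ext i; simp only [Set.mem_setOf_eq]; omega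
        rw [hset, Finset.sum_range_succ] at key
        have hlast : (if S ∩ Set.Ioo r r = ∅ then
            FqrS r S {i : ℤ | i ≤ -(n : ℤ) - 1} *
              MvPowerSeries.monomial (Finsupp.single (-(n : ℤ) - 1 + 1) (r - r)) 1
          else 0) = FqrS r S {i : ℤ | i ≤ -(n : ℤ) - 1} := by
          rw [if_pos (by simp), Nat.sub_self, Finsupp.single_zero,
            MvPowerSeries.monomial_zero_one, mul_one]
        rw [hlast] at key
        have heq : FqrS r S {i : ℤ | i ≤ -(n : ℤ) - 1} =
            FqrS r S {i : ℤ | i ≤ -(n : ℤ)} - ∑ t ∈ Finset.range r,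
              if S ∩ Set.Ioo t r = ∅ then
                FqrS t S {i : ℤ | i ≤ -(n : ℤ) - 1} *
                  MvPowerSeries.monomial (Finsupp.single (-(n : ℤ) - 1 + 1) (r - t)) 1
              else 0 := by
          rw [key]; ring
        rw [heq]
        apply sub_mem (ih r S)
        apply sum_mem
        intro t htmem
        split
        · exact hmul _ _ (ihr t (Finset.mem_range.mp htmem) S)
        · exact zero_mem P
  rw [Submodule.span_le]
  rintro s ⟨α, c, -, rfl⟩
  exact hmul c _ (hmain b _ _)
end
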